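/- arXiv:2202.11848 — 7 statements merged into one kernel-verified Lean document; each statement's English description precedes it below -/
import Mathlib

section
/- For all real a > 0 and all complex λ with Re(λ) > 0 (or more generally λ ∈ ℂ ∖ (-∞, -a]), the identity λ/√(λ + a) = ∫_{(a,∞)} (λ/(λ + u)) · (1/(π√(u - a))) du holds, where √ denotes the principal branch of the square root. -/
open MeasureTheory

open Complex Filter Set Real Topology

lemma key_integrable {s : ℂ} (hs : 0 < s.re) :
    IntegrableOn (fun t : ℝ => (s ^ 2 + (t : ℂ) ^ 2)⁻¹) (Set.Ioi (0 : ℝ)) := by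
  have hne : ∀ t : ℝ, s ^ 2 + (t : ℂ) ^ 2 ≠ 0 := by
    intro t h
    have h1 : s ^ 2 + (t : ℂ) ^ 2 = (s + t * I) * (s - t * I) := by
      linear_combination ((t:ℂ))^2 * Complex.I_sq
    rw [h1, mul_eq_zero] at h
    rcases h with h | h
    · have : (s + t * I).re = 0 := by rw [h]; simp
      simp [Complex.add_re, Complex.mul_re] at this
      linarith
    · have : (s - t * I).re = 0 := by rw [h]; simp
      simp [Complex.sub_re, Complex.mul_re] at this
      linarith
  have hcont : Continuous fun t : ℝ => (s ^ 2 + (t : ℂ) ^ 2)⁻¹ :=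
    (continuous_const.add ((Complex.continuous_ofReal).pow 2)).inv₀ hne
  set T : ℝ := 2 * ‖s‖ + 1 with hT
  have hT0 : (0 : ℝ) < T := by positivity
  have h1 : IntegrableOn (fun t : ℝ => (s ^ 2 + (t : ℂ) ^ 2)⁻¹) (Set.Ioc 0 T) :=
    hcont.integrableOn_Ioc
  have h2 : IntegrableOn (fun t : ℝ => (s ^ 2 + (t : ℂ) ^ 2)⁻¹) (Set.Ioi T) := by
    have hg : IntegrableOn (fun t : ℝ => 2 * t ^ (-2 : ℝ)) (Set.Ioi T) :=
      (integrableOn_Ioi_rpow_of_lt (by norm_num) hT0).const_mul 2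
    refine hg.integrable.mono' (hcont.aestronglyMeasurable.restrict) ?_
    filter_upwards [ae_restrict_mem measurableSet_Ioi] with t ht
    have htT : T < t := ht
    have ht0 : (0 : ℝ) < t := lt_trans hT0 htT
    have hts : ‖((t : ℂ)) ^ 2‖ = t ^ 2 := by
      rw [norm_pow, Complex.norm_real, Real.norm_eq_abs]; exact sq_abs t
    have hb : t ^ 2 - ‖s‖ ^ 2 ≤ ‖s ^ 2 + (t : ℂ) ^ 2‖ := by
      have h4 := norm_sub_le (s ^ 2 + (t : ℂ) ^ 2) (s ^ 2)
      rw [add_sub_cancel_left, hts, norm_pow] at h4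
      linarith
    have hhalf : t ^ 2 / 2 ≤ ‖s ^ 2 + (t : ℂ) ^ 2‖ := by
      have h2s : ‖s‖ ^ 2 ≤ t ^ 2 / 2 := by nlinarith [norm_nonneg s]
      linarith
    have hpos : (0 : ℝ) < t ^ 2 / 2 := by positivity
    have hrp : t ^ (-2 : ℝ) = (t ^ 2)⁻¹ := by
      rw [show ((-2 : ℝ)) = -(2:ℕ) by norm_num, Real.rpow_neg ht0.le, Real.rpow_natCast]
    rw [norm_inv, hrp]
    have h5 : ‖s ^ 2 + (t : ℂ) ^ 2‖⁻¹ ≤ (t ^ 2 / 2)⁻¹ :=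
      inv_anti₀ hpos hhalf
    have h6 : (t ^ 2 / 2)⁻¹ = 2 * (t ^ 2)⁻¹ := by
      field_simp
    linarith
  have : Set.Ioi (0:ℝ) ⊆ Set.Ioc 0 T ∪ Set.Ioi T := by
    intro x hx
    rcases le_or_gt x T with h | h
    · exact Or.inl ⟨hx, h⟩
    · exact Or.inr h
  exact (h1.union h2).mono_set this

lemma key {s : ℂ} (hs : 0 < s.re) :
    ∫ t in Set.Ioi (0 : ℝ), (s ^ 2 + (t : ℂ) ^ 2)⁻¹ = ↑Real.pi / (2 * s) := by
  have hs0 : s ≠ 0 := fun h => by simp [h] at hs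
  have hne1 : ∀ t : ℝ, s + t * I ≠ 0 := by
    intro t h
    have : (s + t * I).re = 0 := by rw [h]; simp
    simp [Complex.add_re, Complex.mul_re] at this
    linarith
  have hne2 : ∀ t : ℝ, s - t * I ≠ 0 := by
    intro t h
    have : (s - t * I).re = 0 := by rw [h]; simp
    simp [Complex.sub_re, Complex.mul_re] at this
    linarith
  have hmem1 : ∀ t : ℝ, s + t * I ∈ Complex.slitPlane := by
    intro t
    rw [Complex.mem_slitPlane_iff]
    left
    simp [Complex.add_re, Complex.mul_re]
    linarith
  have hmem2 : ∀ t : ℝ, s - t * I ∈ Complex.slitPlane := by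
    intro t
    rw [Complex.mem_slitPlane_iff]
    left
    simp [Complex.sub_re, Complex.mul_re]
    linarith
  set F : ℝ → ℂ := fun t => -I / (2 * s) *
    (Complex.log (s + t * I) - Complex.log (s - t * I)) with hF
  have hder : ∀ t : ℝ, HasDerivAt F ((s ^ 2 + (t : ℂ) ^ 2)⁻¹) t := by
    intro t
    have hi1 : HasDerivAt (fun u : ℝ => s + (u : ℂ) * I) I t := by
      simpa using ((Complex.ofRealCLM.hasDerivAt (x := t)).mul_const I).const_add s
    have hi2 : HasDerivAt (fun u : ℝ => s - (u : ℂ) * I) (-I) t := by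
      simpa using ((Complex.ofRealCLM.hasDerivAt (x := t)).mul_const I).const_sub s
    have h1 : HasDerivAt (fun u : ℝ => Complex.log (s + u * I)) (I / (s + t * I)) t :=
      hi1.clog_real (hmem1 t)
    have h2 : HasDerivAt (fun u : ℝ => Complex.log (s - u * I)) (-I / (s - t * I)) t :=
      hi2.clog_real (hmem2 t)
    have h3 := ((h1.sub h2).const_mul (-I / (2 * s)))
    refine h3.congr_deriv ?_
    symm
    have e1 := hne1 t
    have e2 := hne2 t
    have hfac : s ^ 2 + (t : ℂ) ^ 2 = (s + t * I) * (s - t * I) := by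
      linear_combination ((t:ℂ))^2 * Complex.I_sq
    have e3 : s ^ 2 + (t : ℂ) ^ 2 ≠ 0 := by rw [hfac]; exact mul_ne_zero e1 e2
    have h2s : (2 : ℂ) * s ≠ 0 := mul_ne_zero two_ne_zero hs0
    rw [div_sub_div _ _ e1 e2]
    rw [show I * (s - ↑t * I) - (s + ↑t * I) * -I = 2 * s * I from by ring,
      ← hfac, div_mul_div_comm,
      show -I * (2 * s * I) = 2 * s from by linear_combination (-2*s) * Complex.I_sq,
      eq_comm, div_eq_iff (mul_ne_zero h2s e3)]
    field_simp
  have hlim : Tendsto F atTop (𝓝 (↑Real.pi / (2 * s))) := by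
    have hIslit : I ∈ Complex.slitPlane := by
      rw [Complex.mem_slitPlane_iff]; right; simp
    have hnIslit : -I ∈ Complex.slitPlane := by
      rw [Complex.mem_slitPlane_iff]; right; simp
    have htend0 : Tendsto (fun t : ℝ => s / (t : ℂ)) atTop (𝓝 0) := by
      have : Tendsto (fun t : ℝ => ((t : ℂ))⁻¹) atTop (𝓝 0) := by
        have h := tendsto_inv_atTop_zero (𝕜 := ℝ)
        have := (Complex.continuous_ofReal.tendsto 0).comp h
        simpa [Function.comp_def, Complex.ofReal_inv] using this
      simpa [div_eq_mul_inv] using (this.const_mul s)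
    have ht1 : Tendsto (fun t : ℝ => Complex.log (s / t + I)) atTop (𝓝 (Complex.log I)) := by
      refine (continuousAt_clog hIslit).tendsto.comp ?_
      simpa using htend0.add_const I
    have ht2 : Tendsto (fun t : ℝ => Complex.log (s / t - I)) atTop (𝓝 (Complex.log (-I))) := by
      refine (continuousAt_clog hnIslit).tendsto.comp ?_
      simpa using htend0.sub_const I
    have hG : Tendsto (fun t : ℝ => -I / (2 * s) * (Complex.log (s / t + I) - Complex.log (s / t - I)))
        atTop (𝓝 (-I / (2 * s) * (Complex.log I - Complex.log (-I)))) :=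
      (ht1.sub ht2).const_mul _
    have hval : -I / (2 * s) * (Complex.log I - Complex.log (-I)) = ↑Real.pi / (2 * s) := by
      rw [Complex.log_I, Complex.log_neg_I,
        show (↑Real.pi / 2 * I - -(↑Real.pi / 2) * I : ℂ) = ↑Real.pi * I from by ring,
        div_mul_eq_mul_div,
        show -I * (↑Real.pi * I) = (↑Real.pi : ℂ) from by
          linear_combination (-(Real.pi:ℂ)) * Complex.I_sq]
    rw [hval] at hG
    refine hG.congr' ?_
    filter_upwards [eventually_gt_atTop (0 : ℝ)] with t ht
    have ht0 : (t : ℂ) ≠ 0 := by exact_mod_cast ht.ne'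
    have e1 : s + t * I = (t : ℂ) * (s / t + I) := by field_simp; try ring
    have e2 : s - t * I = (t : ℂ) * (s / t - I) := by field_simp; try ring
    have ne1' : s / (t : ℂ) + I ≠ 0 := by
      intro h
      apply hne1 t
      rw [e1, h, mul_zero]
    have ne2' : s / (t : ℂ) - I ≠ 0 := by
      intro h
      apply hne2 t
      rw [e2, h, mul_zero]
    rw [hF]
    simp only
    rw [e1, e2, Complex.log_ofReal_mul ht ne1', Complex.log_ofReal_mul ht ne2']
    ring
  have := integral_Ioi_of_hasDerivAt_of_tendsto' (f := F)
    (f' := fun t : ℝ => (s ^ 2 + (t : ℂ) ^ 2)⁻¹) (a := 0)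
    (fun x _ => hder x) (key_integrable hs) hlim
  rw [this, hF]
  simp

/-- Stieltjes representation of the complete Bernstein function `λ ↦ λ/√(λ+a)`. -/
theorem stmt6 (a : ℝ) (ha : 0 < a) (lam : ℂ)
    (hlam : ∀ x : ℝ, x ≤ -a → lam ≠ (x : ℂ)) :
    lam / (lam + (a : ℂ)) ^ ((1 : ℂ) / 2)
      = ∫ u in Set.Ioi a,
          (lam / (lam + (u : ℂ))) * ((1 / (Real.pi * Real.sqrt (u - a)) : ℝ) : ℂ) := by
  set s : ℂ := (lam + (a : ℂ)) ^ ((1 : ℂ) / 2) with hsdef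
  have hμ0 : lam + (a : ℂ) ≠ 0 := by
    intro h
    refine hlam (-a) le_rfl ?_
    push_cast
    linear_combination h
  have harg : (lam + (a : ℂ)).arg ≠ Real.pi := by
    intro h
    rw [Complex.arg_eq_pi_iff] at h
    obtain ⟨hre, him⟩ := h
    refine hlam ((lam + (a : ℂ)).re - a) (by linarith) ?_
    have : lam + (a : ℂ) = ((lam + (a : ℂ)).re : ℂ) := by
      apply Complex.ext <;> simp [him]
    push_cast
    linear_combination this
  have hσ : 0 < s.re := by
    rw [hsdef, Complex.cpow_def_of_ne_zero hμ0, Complex.exp_re]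
    have him : (Complex.log (lam + (a : ℂ)) * ((1:ℂ) / 2)).im
        = (lam + (a : ℂ)).arg / 2 := by
      simp [Complex.mul_im, Complex.log_im]
      ring
    rw [him]
    have h1 : -Real.pi < (lam + (a : ℂ)).arg := Complex.neg_pi_lt_arg _
    have h2 : (lam + (a : ℂ)).arg < Real.pi :=
      lt_of_le_of_ne (Complex.arg_le_pi _) harg
    have hcos : 0 < Real.cos ((lam + (a : ℂ)).arg / 2) :=
      Real.cos_pos_of_mem_Ioo ⟨by linarith, by linarith⟩
    positivity
  have hs0 : s ≠ 0 := by
    intro h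
    rw [h] at hσ
    simp at hσ
  have hs2 : s ^ 2 = lam + (a : ℂ) := by
    rw [hsdef, sq, ← Complex.cpow_add _ _ hμ0]
    norm_num
  -- change of variables
  have himg : (fun t : ℝ => a + t ^ 2) '' Set.Ioi 0 = Set.Ioi a := by
    ext u
    constructor
    · rintro ⟨t, ht, rfl⟩
      have : (0:ℝ) < t ^ 2 := pow_pos ht 2
      simpa using this
    · intro hu
      refine ⟨Real.sqrt (u - a), ?_, ?_⟩
      · exact Real.sqrt_pos.mpr (by simpa using sub_pos.mpr (Set.mem_Ioi.mp hu))
      · show a + Real.sqrt (u - a) ^ 2 = u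
        rw [Real.sq_sqrt (by linarith [hu.out] : (0:ℝ) ≤ u - a)]
        ring
  have hderiv : ∀ t ∈ Set.Ioi (0:ℝ),
      HasDerivWithinAt (fun t : ℝ => a + t ^ 2) (2 * t) (Set.Ioi 0) t := by
    intro t _
    have := (hasDerivAt_pow 2 t).const_add a
    simpa using this.hasDerivWithinAt
  have hinj : Set.InjOn (fun t : ℝ => a + t ^ 2) (Set.Ioi 0) := by
    intro x hx y hy h
    simp only at h
    have hx0 : (0:ℝ) < x := hx
    have hy0 : (0:ℝ) < y := hy
    have h2 : (x - y) * (x + y) = 0 := by nlinarith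
    rcases mul_eq_zero.mp h2 with h3 | h3
    · linarith
    · linarith
  rw [← himg, integral_image_eq_integral_abs_deriv_smul measurableSet_Ioi hderiv hinj]
  have hcongr : ∀ t ∈ Set.Ioi (0:ℝ),
      |2 * t| • ((lam / (lam + ((a + t ^ 2 : ℝ) : ℂ)))
          * ((1 / (Real.pi * Real.sqrt ((a + t ^ 2) - a)) : ℝ) : ℂ))
        = (2 * lam / Real.pi) * (s ^ 2 + (t : ℂ) ^ 2)⁻¹ := by
    intro t ht
    have ht0 : (0:ℝ) < t := ht
    have hsqrt : Real.sqrt ((a + t ^ 2) - a) = t := by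
      rw [show (a + t ^ 2) - a = t ^ 2 by ring, Real.sqrt_sq ht0.le]
    have hden : lam + ((a + t ^ 2 : ℝ) : ℂ) ≠ 0 := by
      intro h
      refine hlam (-(a + t ^ 2)) (by nlinarith) ?_
      push_cast at h ⊢
      linear_combination h
    have hden3 : lam + (a : ℂ) + (t : ℂ) ^ 2 ≠ 0 := by
      intro h
      apply hden
      push_cast
      linear_combination h
    have hden2 : s ^ 2 + (t : ℂ) ^ 2 ≠ 0 := by
      rw [hs2]
      exact hden3
    rw [abs_of_pos (by linarith : (0:ℝ) < 2 * t), hsqrt, Complex.real_smul]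
    rw [hs2]
    have hπ : ((Real.pi : ℝ) : ℂ) ≠ 0 := by
      exact_mod_cast Real.pi_ne_zero
    have htc : (t : ℂ) ≠ 0 := by exact_mod_cast ht0.ne'
    push_cast
    field_simp [hden3]
    rw [div_eq_iff (by rw [← add_assoc]; exact hden3)]
    ring
  rw [setIntegral_congr_fun measurableSet_Ioi hcongr, integral_const_mul, key hσ]
  have hπ : ((Real.pi : ℝ) : ℂ) ≠ 0 := by exact_mod_cast Real.pi_ne_zero
  field_simp
end

section
/- For every t > 0, c > 0, and z ∈ ℂ with Im(z) < 0 (or more generally z ∉ [1/(4c), ∞)), one has ∫_0^{4c} (1/(1 - xz) - 1) · (t √(x(4c - x)))/(2π x²) dx = t(1 - √(1 - 4cz))/2, where √ is the principal branch. -/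
open MeasureTheory Set Complex Filter Topology

lemma sqrt_quadrant {w : ℂ} (hw : 0 < w.im) :
    0 < (w ^ ((1:ℂ)/2)).re ∧ 0 < (w ^ ((1:ℂ)/2)).im := by
  have hw0 : w ≠ 0 := by
    intro h; rw [h] at hw; simp at hw
  have harg0 : 0 < Complex.arg w := by
    rcases lt_or_eq_of_le (Complex.arg_nonneg_iff.mpr hw.le) with h | h
    · exact h
    · exfalso
      have := (Complex.arg_eq_zero_iff.mp h.symm).2
      linarith
  have hargpi : Complex.arg w < Real.pi := by
    rcases lt_or_eq_of_le (Complex.arg_le_pi w) with h | h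
    · exact h
    · exfalso
      have := (Complex.arg_eq_pi_iff.mp h).2
      linarith
  rw [Complex.cpow_def_of_ne_zero hw0]
  rw [Complex.exp_re, Complex.exp_im]
  have him : (Complex.log w * (1/2)).im = Complex.arg w / 2 := by
    simp [Complex.mul_im, Complex.log_im, Complex.log_re]
    ring
  rw [him]
  have hpi := Real.pi_pos
  constructor
  · exact mul_pos (Real.exp_pos _) (Real.cos_pos_of_mem_Ioo ⟨by linarith, by linarith⟩)
  · exact mul_pos (Real.exp_pos _) (Real.sin_pos_of_pos_of_lt_pi (by linarith) (by linarith))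


lemma sq_of_half (w : ℂ) : (w ^ ((1:ℂ)/2)) ^ 2 = w := by
  rw [one_div]; exact_mod_cast Complex.cpow_ofNat_inv_pow w 2

lemma lemA {w : ℂ} (hw : 0 < w.im) :
    ∫ u in Set.Ioi (0:ℝ), ((1+(u:ℂ)^2) * (1 + w*(u:ℂ)^2))⁻¹
      = (Real.pi : ℂ)/(2*(1 + w ^ ((1:ℂ)/2))) := by
  set s : ℂ := w ^ ((1:ℂ)/2) with hs_def
  obtain ⟨hsre, hsim⟩ := sqrt_quadrant hw
  have hs2 : s ^ 2 = w := sq_of_half w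
  rw [← hs_def] at hsre hsim
  have hs0 : s ≠ 0 := by intro h; rw [h] at hsre; simp at hsre
  have h1s : (1:ℂ) + s ≠ 0 := by
    intro h
    have : (1 + s).re = 0 := by rw [h]; simp
    simp [Complex.add_re] at this; linarith
  have h1ms : (1:ℂ) - s ≠ 0 := by
    intro h
    have hs1 : s = 1 := by linear_combination -h
    have : w = 1 := by rw [← hs2, hs1]; ring
    rw [this] at hw; simp at hw
  have ha : (1:ℂ) - w ≠ 0 := by
    rw [← hs2]
    intro h
    have : (1 - s) * (1 + s) = 0 := by linear_combination h
    rcases mul_eq_zero.mp this with h | h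
    · exact h1ms h
    · exact h1s h
  -- nonvanishing of the linear factors for u ≥ 0
  have hfac1 : ∀ u : ℝ, 0 ≤ u → (1 : ℂ) - I*s*u ≠ 0 := by
    intro u hu h
    have him : (1 - I*s*(u:ℂ)).im = -(s.re * u) := by simp [Complex.sub_im, Complex.mul_im]
    rw [h] at him
    simp at him
    have hu0 : u = 0 := by
      rcases him with h' | h'
      · linarith
      · exact h'
    rw [hu0] at h; simp at h
  have hfac2 : ∀ u : ℝ, 0 ≤ u → (1 : ℂ) + I*s*u ≠ 0 := by
    intro u hu h
    have him : (1 + I*s*(u:ℂ)).im = s.re * u := by simp [Complex.add_im, Complex.mul_im]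
    rw [h] at him
    simp at him
    have hu0 : u = 0 := by
      rcases him with h' | h'
      · linarith
      · exact h'
    rw [hu0] at h; simp at h
  have hquad : ∀ u : ℝ, 0 ≤ u → (1 : ℂ) + w*(u:ℂ)^2 ≠ 0 := by
    intro u hu
    have : (1 : ℂ) + w*(u:ℂ)^2 = (1 - I*s*u) * (1 + I*s*u) := by
      rw [← hs2]; ring_nf; rw [Complex.I_sq]; ring
    rw [this]
    exact mul_ne_zero (hfac1 u hu) (hfac2 u hu)
  have hone : ∀ u : ℝ, (1:ℂ) + (u:ℂ)^2 ≠ 0 := by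
    intro u h
    have : ((1:ℂ) + (u:ℂ)^2).re = 1 + u^2 := by
      simp [Complex.add_re]
      norm_cast
    rw [h] at this
    simp at this
    nlinarith [sq_nonneg u]
  -- the antiderivative
  set F : ℝ → ℂ := fun u =>
    (1-w)⁻¹ * (Real.arctan u : ℂ)
      + (w/((1-w) * (2*I*s))) * (Complex.log (1 - I*s*u) - Complex.log (1 + I*s*u)) with hF
  have hIs : (2:ℂ)*I*s ≠ 0 := by
    refine mul_ne_zero (mul_ne_zero two_ne_zero Complex.I_ne_zero) hs0
  -- derivative
  have hderiv : ∀ u : ℝ, u ∈ Set.Ici (0:ℝ) →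
      HasDerivAt F (((1+(u:ℂ)^2) * (1 + w*(u:ℂ)^2))⁻¹) u := by
    intro u hu
    have hu' : (0:ℝ) ≤ u := hu
    have hinner : HasDerivAt (fun v : ℝ => I*s*(v:ℂ)) (I*s) u := by
      simpa using ((hasDerivAt_id u).ofReal_comp).const_mul (I*s)
    have hin1 : HasDerivAt (fun v : ℝ => (1:ℂ) - I*s*v) (-(I*s)) u := by
      simpa using hinner.const_sub 1
    have hin2 : HasDerivAt (fun v : ℝ => (1:ℂ) + I*s*v) (I*s) u := by
      simpa using hinner.const_add 1
    have hmem1 : (1 : ℂ) - I*s*u ∈ Complex.slitPlane := by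
      left
      have : ((1:ℂ) - I*s*u).re = 1 + s.im * u := by
        simp [Complex.sub_re, Complex.mul_re]
      rw [this]
      nlinarith
    have hmem2 : (1 : ℂ) + I*s*u ∈ Complex.slitPlane := by
      rcases eq_or_lt_of_le hu' with h | h
      · left
        have : ((1:ℂ) + I*s*u).re = 1 - s.im * u := by
          simp [Complex.add_re, Complex.mul_re]; ring
        rw [this, ← h]; norm_num
      · right
        have : ((1:ℂ) + I*s*u).im = s.re * u := by
          simp [Complex.add_im, Complex.mul_im]
        rw [this]
        positivity
    have hlog1 : HasDerivAt (fun v : ℝ => Complex.log (1 - I*s*v))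
        (((1:ℂ) - I*s*u)⁻¹ * (-(I*s))) u :=
      by have := (Complex.hasDerivAt_log hmem1).comp u hin1; exact this
    have hlog2 : HasDerivAt (fun v : ℝ => Complex.log (1 + I*s*v))
        (((1:ℂ) + I*s*u)⁻¹ * (I*s)) u :=
      by have := (Complex.hasDerivAt_log hmem2).comp u hin2; exact this
    have harct : HasDerivAt (fun v : ℝ => ((Real.arctan v : ℝ) : ℂ))
        ((((1:ℝ) + u^2)⁻¹ : ℝ) : ℂ) u := (Real.hasDerivAt_arctan' u).ofReal_comp
    have := ((harct.const_mul ((1-w)⁻¹)).add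
      (((hlog1.sub hlog2)).const_mul (w/((1-w) * (2*I*s)))))
    refine this.congr_deriv ?_
    have e1 : (1:ℂ) - I*s*u ≠ 0 := hfac1 u hu'
    have e2 : (1:ℂ) + I*s*u ≠ 0 := hfac2 u hu'
    have e3 : (1:ℂ) + w*(u:ℂ)^2 ≠ 0 := hquad u hu'
    have e4 : (1:ℂ) + (u:ℂ)^2 ≠ 0 := hone u
    have hfact : ((1:ℂ) - I*s*u) * ((1:ℂ) + I*s*u) = 1 + w*(u:ℂ)^2 := by
      rw [← hs2]; ring_nf; rw [Complex.I_sq]; ring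
    have key : ((1:ℂ) - I*s*u)⁻¹ * (-(I*s)) - ((1:ℂ) + I*s*u)⁻¹ * (I*s)
        = -(2*I*s)/(1 + w*(u:ℂ)^2) := by
      rw [← hfact]
      field_simp
      ring
    rw [key]
    push_cast
    field_simp
    ring
  -- nonvanishing of quadratic for all real u
  have hcast : ∀ u : ℝ, ((u:ℂ))^2 = ((u^2 : ℝ) : ℂ) := fun u => by push_cast; ring
  have hre' : ∀ u : ℝ, ((1:ℂ) + w*(u:ℂ)^2).re = 1 + w.re * u^2 := by
    intro u; simp [pow_two, Complex.add_re, Complex.mul_re, Complex.mul_im]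
  have him' : ∀ u : ℝ, ((1:ℂ) + w*(u:ℂ)^2).im = w.im * u^2 := by
    intro u; simp [pow_two, Complex.add_im, Complex.mul_re, Complex.mul_im]
  have hquad' : ∀ u : ℝ, (1 : ℂ) + w*(u:ℂ)^2 ≠ 0 := by
    intro u h
    have him := him' u
    rw [h] at him
    simp at him
    have hu0 : u = 0 := by
      rcases him with h' | h'
      · linarith
      · exact h'
    rw [hu0] at h
    simp at h
  -- integrability
  have habsw : 0 < ‖w‖ := by
    apply norm_pos_iff.mpr
    intro h; rw [h] at hw; simp at hw
  have hlow : ∀ u : ℝ, w.im / ‖w‖ ≤ ‖1 + w*(u:ℂ)^2‖ := by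
    intro u
    rw [div_le_iff₀ habsw]
    have h2 : (‖1 + w*(u:ℂ)^2‖)^2 * (‖w‖)^2 ≥ w.im^2 := by
      rw [Complex.sq_norm, Complex.sq_norm]
      rw [Complex.normSq_apply, Complex.normSq_apply, hre' u, him' u]
      nlinarith [sq_nonneg (w.re + u^2*(w.re^2 + w.im^2)), sq_nonneg u, sq_nonneg w.im]
    nlinarith [h2, mul_nonneg (norm_nonneg (1 + w*(u:ℂ)^2)) (norm_nonneg w), hw]
  have hcont : Continuous fun u : ℝ => ((1+(u:ℂ)^2) * (1 + w*(u:ℂ)^2))⁻¹ := by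
    apply Continuous.inv₀
    · fun_prop
    · intro u
      exact mul_ne_zero (hone u) (hquad' u)
  have hint : IntegrableOn (fun u : ℝ => ((1+(u:ℂ)^2) * (1 + w*(u:ℂ)^2))⁻¹) (Set.Ioi 0) := by
    apply Integrable.mono' ((integrable_inv_one_add_sq.const_mul (‖w‖ / w.im)).integrableOn)
    · exact hcont.aestronglyMeasurable.restrict
    · apply ae_of_all
      intro u
      rw [norm_inv, norm_mul]
      have h1 : ‖(1+(u:ℂ)^2)‖ = 1 + u^2 := by
        have : (1+(u:ℂ)^2) = ((1+u^2 : ℝ) : ℂ) := by push_cast; ring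
        rw [this, Complex.norm_real, Real.norm_of_nonneg (by positivity)]
      rw [h1, mul_inv]
      have h2 : w.im / ‖w‖ ≤ ‖1 + w*(u:ℂ)^2‖ := hlow u
      have h3 : 0 < w.im / ‖w‖ := div_pos hw habsw
      calc ((1:ℝ)+u^2)⁻¹ * ‖1 + w*(u:ℂ)^2‖⁻¹
          ≤ ((1:ℝ)+u^2)⁻¹ * (w.im / ‖w‖)⁻¹ := by
            gcongr
          _ = ‖w‖ / w.im * ((1:ℝ)+u^2)⁻¹ := by rw [inv_div]; ring
  -- limits at infinity
  have hmemIs : I*s ∈ Complex.slitPlane := by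
    right
    have : (I*s).im = s.re := by simp [Complex.mul_im]
    rw [this]; exact hsre.ne'
  have hmemmIs : -(I*s) ∈ Complex.slitPlane := by
    left
    have : (-(I*s)).re = s.im := by simp [Complex.mul_re]
    rw [this]; exact hsim
  have hinv0 : Tendsto (fun u : ℝ => ((u : ℂ))⁻¹) atTop (𝓝 0) := by
    have h2 := (Complex.continuous_ofReal.tendsto 0).comp (tendsto_inv_atTop_zero (𝕜 := ℝ))
    simpa [Function.comp_def] using h2
  have t1 : Tendsto (fun u : ℝ => ((u : ℂ))⁻¹ - I*s) atTop (𝓝 (-(I*s))) := by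
    simpa using hinv0.sub_const (I*s)
  have t2 : Tendsto (fun u : ℝ => ((u : ℂ))⁻¹ + I*s) atTop (𝓝 (I*s)) := by
    simpa using hinv0.add_const (I*s)
  have hlog1lim : Tendsto (fun u : ℝ => Complex.log (((u : ℂ))⁻¹ - I*s)) atTop
      (𝓝 (Complex.log (-(I*s)))) :=
    (continuousAt_clog hmemmIs).tendsto.comp t1
  have hlog2lim : Tendsto (fun u : ℝ => Complex.log (((u : ℂ))⁻¹ + I*s)) atTop
      (𝓝 (Complex.log (I*s))) :=
    (continuousAt_clog hmemIs).tendsto.comp t2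
  have hlogdiff : Tendsto (fun u : ℝ => Complex.log (1 - I*s*u) - Complex.log (1 + I*s*u))
      atTop (𝓝 (Complex.log (-(I*s)) - Complex.log (I*s))) := by
    apply Tendsto.congr' _ (hlog1lim.sub hlog2lim)
    filter_upwards [eventually_gt_atTop (0:ℝ)] with u hu
    have hu0 : u ≠ 0 := hu.ne'
    have hx1 : ((u : ℂ))⁻¹ - I*s ≠ 0 := by
      intro h
      have hre : (((u : ℂ))⁻¹ - I*s).re = u⁻¹ + s.im := by
        simp [Complex.sub_re, Complex.mul_re, ← Complex.ofReal_inv]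
      rw [h] at hre
      simp at hre
      have hpos : (0:ℝ) < u⁻¹ + s.im := by positivity
      linarith
    have hx2 : ((u : ℂ))⁻¹ + I*s ≠ 0 := by
      intro h
      have him2 : (((u : ℂ))⁻¹ + I*s).im = s.re := by
        simp [Complex.add_im, Complex.mul_im, ← Complex.ofReal_inv]
      rw [h] at him2
      simp at him2
      linarith
    have huC : (u : ℂ) ≠ 0 := by exact_mod_cast hu0
    have e1 : (1:ℂ) - I*s*u = (u : ℂ) * (((u : ℂ))⁻¹ - I*s) := by
      field_simp
    have e2 : (1:ℂ) + I*s*u = (u : ℂ) * (((u : ℂ))⁻¹ + I*s) := by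
      field_simp
    have hl1 : Complex.log ((u : ℂ) * (((u : ℂ))⁻¹ - I*s))
        = Real.log u + Complex.log (((u : ℂ))⁻¹ - I*s) := Complex.log_ofReal_mul hu hx1
    have hl2 : Complex.log ((u : ℂ) * (((u : ℂ))⁻¹ + I*s))
        = Real.log u + Complex.log (((u : ℂ))⁻¹ + I*s) := Complex.log_ofReal_mul hu hx2
    rw [e1, e2, hl1, hl2]
    ring
  have harctanlim : Tendsto (fun u : ℝ => ((Real.arctan u : ℝ) : ℂ)) atTop
      (𝓝 (((Real.pi/2 : ℝ) : ℂ))) :=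
    (Complex.continuous_ofReal.tendsto _).comp
      (tendsto_nhds_of_tendsto_nhdsWithin Real.tendsto_arctan_atTop)
  have hFlim : Tendsto F atTop (𝓝 ((1-w)⁻¹ * ((Real.pi/2 : ℝ) : ℂ)
      + (w/((1-w) * (2*I*s))) * (Complex.log (-(I*s)) - Complex.log (I*s)))) := by
    exact ((harctanlim.const_mul ((1-w)⁻¹)).add (hlogdiff.const_mul (w/((1-w) * (2*I*s)))))
  have hFTC := integral_Ioi_of_hasDerivAt_of_tendsto' hderiv hint hFlim
  rw [hFTC]
  have hF0 : F 0 = 0 := by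
    rw [hF]
    norm_num
  rw [hF0, sub_zero]
  -- value of the log difference
  have hlogval : Complex.log (-(I*s)) - Complex.log (I*s) = -(Real.pi : ℂ) * I := by
    have himIs : (I*s).im = s.re := by simp [Complex.mul_im]
    have hargneg : Complex.arg (-(I*s)) = Complex.arg (I*s) - Real.pi :=
      Complex.arg_neg_eq_arg_sub_pi_of_im_pos (by rw [himIs]; exact hsre)
    apply Complex.ext
    · simp [Complex.log_re]
    · simp [Complex.log_im, hargneg]
  rw [hlogval]
  rw [← hs2]
  have ha' : (1:ℂ) - s^2 ≠ 0 := by rw [hs2]; exact ha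
  push_cast
  field_simp [ha', hs0, Complex.I_ne_zero, h1s]
  ring

/-- The free cumulant transform of the free gamma distribution `γ(t,c)` computed
from its free Lévy measure. -/
theorem stmt8 (t c : ℝ) (ht : 0 < t) (hc : 0 < c) (z : ℂ) (hz : z.im < 0) :
    ∫ x in Set.Ioo (0 : ℝ) (4 * c),
        (1 / (1 - (x : ℂ) * z) - 1) *
          ((t * Real.sqrt (x * (4 * c - x)) / (2 * Real.pi * x ^ 2) : ℝ) : ℂ)
      = (t : ℂ) * (1 - (1 - 4 * (c : ℂ) * z) ^ ((1 : ℂ) / 2)) / 2 := by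
  have hpi := Real.pi_pos
  have hwim : 0 < (1 - 4*(c:ℂ)*z).im := by
    have : ((1:ℂ) - 4*(c:ℂ)*z).im = -(4*c*z.im) := by
      simp [Complex.sub_im, Complex.mul_im]
    rw [this]; nlinarith
  set w : ℂ := 1 - 4*(c:ℂ)*z with hw_def
  -- the substitution x = 4c u^2/(1+u^2)
  have himg : (fun u : ℝ => 4*c*u^2/(1+u^2)) '' Set.Ioi 0 = Set.Ioo 0 (4*c) := by
    ext x
    constructor
    · rintro ⟨u, hu, rfl⟩
      have hu0 : (0:ℝ) < u := hu
      have h1 : (0:ℝ) < 1 + u^2 := by positivity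
      constructor
      · positivity
      · rw [div_lt_iff₀ h1]
        nlinarith
    · rintro ⟨hx0, hx4⟩
      have hd : (0:ℝ) < 4*c - x := by linarith
      refine ⟨Real.sqrt (x/(4*c-x)), ?_, ?_⟩
      · exact Real.sqrt_pos.mpr (by positivity)
      · have hsq : Real.sqrt (x/(4*c-x)) ^ 2 = x/(4*c-x) :=
          Real.sq_sqrt (by positivity)
        show 4*c*(Real.sqrt (x/(4*c-x)))^2/(1+(Real.sqrt (x/(4*c-x)))^2) = x
        rw [hsq]
        field_simp
        ring
  have hder : ∀ u ∈ Set.Ioi (0:ℝ),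
      HasDerivWithinAt (fun u : ℝ => 4*c*u^2/(1+u^2)) (8*c*u/(1+u^2)^2) (Set.Ioi 0) u := by
    intro u hu
    have h1 : (1:ℝ) + u^2 ≠ 0 := by positivity
    have hn : HasDerivAt (fun u : ℝ => 4*c*u^2) (4*c*(2*u)) u := by
      simpa using (hasDerivAt_pow 2 u).const_mul (4*c)
    have hd : HasDerivAt (fun u : ℝ => 1+u^2) (2*u) u := by
      simpa using (hasDerivAt_pow 2 u).const_add 1
    have := hn.div hd h1
    refine (this.congr_deriv ?_).hasDerivWithinAt
    field_simp
    ring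
  have hinj : Set.InjOn (fun u : ℝ => 4*c*u^2/(1+u^2)) (Set.Ioi 0) := by
    intro u hu v hv h
    simp only [] at h
    have hu0 : (0:ℝ) < u := hu
    have hv0 : (0:ℝ) < v := hv
    have h1 : (0:ℝ) < 1 + u^2 := by positivity
    have h2 : (0:ℝ) < 1 + v^2 := by positivity
    rw [div_eq_div_iff h1.ne' h2.ne'] at h
    have hsq : u^2 = v^2 := by nlinarith
    have h3 : (u-v)*(u+v) = 0 := by linear_combination hsq
    rcases mul_eq_zero.mp h3 with h4 | h4
    · linarith
    · linarith
  rw [← himg, MeasureTheory.integral_image_eq_integral_abs_deriv_smul measurableSet_Ioi hder hinj]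
  have hpt : Set.EqOn
      (fun u : ℝ => |8*c*u/(1+u^2)^2| •
        ((1 / (1 - ((4*c*u^2/(1+u^2) : ℝ) : ℂ) * z) - 1) *
          ((t * Real.sqrt ((4*c*u^2/(1+u^2)) * (4 * c - 4*c*u^2/(1+u^2))) /
            (2 * Real.pi * (4*c*u^2/(1+u^2)) ^ 2) : ℝ) : ℂ)))
      (fun u : ℝ => (4*(c:ℂ)*t*z/(Real.pi:ℂ)) * ((1+(u:ℂ)^2) * (1 + w*(u:ℂ)^2))⁻¹)
      (Set.Ioi 0) := by
    intro u hu
    have hu0 : (0:ℝ) < u := hu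
    have h1 : (0:ℝ) < 1 + u^2 := by positivity
    have hsqrt : Real.sqrt ((4*c*u^2/(1+u^2)) * (4 * c - 4*c*u^2/(1+u^2)))
        = 4*c*u/(1+u^2) := by
      rw [show (4*c*u^2/(1+u^2)) * (4 * c - 4*c*u^2/(1+u^2)) = (4*c*u/(1+u^2))^2 from by
        field_simp; ring]
      exact Real.sqrt_sq (by positivity)
    have h1C : (1:ℂ) + (u:ℂ)^2 ≠ 0 := by
      intro h
      have : ((1:ℂ) + (u:ℂ)^2).re = 1 + u^2 := by
        simp [Complex.add_re, pow_two, Complex.mul_re]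
      rw [h] at this; simp at this; nlinarith
    have hBim : ((1:ℂ) + w*(u:ℂ)^2).im = w.im * u^2 := by
      simp [pow_two, Complex.add_im, Complex.mul_im, Complex.mul_re]
    have hB : (1:ℂ) + w*(u:ℂ)^2 ≠ 0 := by
      intro h
      have h0 : ((1:ℂ) + w*(u:ℂ)^2).im = 0 := by rw [h]; simp
      rw [hBim] at h0
      nlinarith [mul_pos hwim (pow_pos hu0 2)]
    have hA : (1:ℂ) - ((4*c*u^2/(1+u^2) : ℝ) : ℂ) * z ≠ 0 := by
      have hxpos : (0:ℝ) < 4*c*u^2/(1+u^2) := by positivity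
      intro h
      have him : ((1:ℂ) - ((4*c*u^2/(1+u^2) : ℝ) : ℂ) * z).im
          = -((4*c*u^2/(1+u^2)) * z.im) := by
        generalize (4*c*u^2/(1+u^2) : ℝ) = x
        simp [Complex.sub_im, Complex.mul_im]
      rw [h] at him
      simp only [Complex.zero_im] at him
      nlinarith [mul_pos hxpos (neg_pos.mpr hz)]
    have huC : (u:ℂ) ≠ 0 := by exact_mod_cast hu0.ne'
    have hcC : (c:ℂ) ≠ 0 := by exact_mod_cast hc.ne'
    have hpiC : (Real.pi : ℂ) ≠ 0 := by exact_mod_cast hpi.ne'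
    rw [hw_def] at hB
    have hfrac : 1 / (1 - ((4*c*u^2/(1+u^2) : ℝ) : ℂ) * z) - 1
        = 4*(c:ℂ)*z*(u:ℂ)^2 / (1 + (1-4*(c:ℂ)*z)*(u:ℂ)^2) := by
      rw [div_sub_one hA, div_eq_div_iff hA hB]
      push_cast
      field_simp
      ring
    have hcoef : t * (4*c*u/(1+u^2)) / (2*Real.pi*(4*c*u^2/(1+u^2))^2)
        = t*(1+u^2)/(8*Real.pi*c*u^3) := by
      field_simp
      ring
    have hreal : (8*c*u/(1+u^2)^2) * (t*(1+u^2)/(8*Real.pi*c*u^3))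
        = t/(Real.pi*u^2*(1+u^2)) := by
      field_simp
    have hmul : ((8*c*u/(1+u^2)^2 : ℝ) : ℂ) * ((4*(c:ℂ)*z*(u:ℂ)^2 / (1 + (1-4*(c:ℂ)*z)*(u:ℂ)^2))
          * ((t*(1+u^2)/(8*Real.pi*c*u^3) : ℝ) : ℂ))
        = (((8*c*u/(1+u^2)^2) * (t*(1+u^2)/(8*Real.pi*c*u^3)) : ℝ) : ℂ)
          * (4*(c:ℂ)*z*(u:ℂ)^2 / (1 + (1-4*(c:ℂ)*z)*(u:ℂ)^2)) := by
      push_cast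
      ring
    simp only []
    rw [hsqrt, hcoef, abs_of_pos (by positivity : (0:ℝ) < 8*c*u/(1+u^2)^2), Complex.real_smul,
      hfrac, hmul, hreal, hw_def]
    push_cast
    field_simp [huC, hcC, hpiC, h1C, hB]
  rw [MeasureTheory.setIntegral_congr_fun measurableSet_Ioi hpt,
    MeasureTheory.integral_const_mul, lemA hwim]
  have hs2 : (w ^ ((1:ℂ)/2))^2 = w := sq_of_half w
  have h1s : (1:ℂ) + w ^ ((1:ℂ)/2) ≠ 0 := by
    obtain ⟨h, -⟩ := sqrt_quadrant hwim
    intro hh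
    have : ((1:ℂ) + w ^ ((1:ℂ)/2)).re = 0 := by rw [hh]; simp
    simp [Complex.add_re] at this
    linarith
  have hpiC : (Real.pi : ℂ) ≠ 0 := by exact_mod_cast hpi.ne'
  have hs2' : ((1 - 4*(c:ℂ)*z) ^ ((1:ℂ)/2))^2 = 1 - 4*(c:ℂ)*z := sq_of_half _
  field_simp
  linear_combination (t:ℂ) * (hs2.trans hw_def)
end

section
/- For z in the lower half-plane ℂ⁻ (avoiding the branch cut), the identity z/√(1 - 4z) = (1/2) ∫_0^4 (1/(1 - xz) - 1) · 2/(π x √(x(4 - x))) dx holds, where √ denotes the principal branch. Consequently the measure (1/(π x √(x(4-x)))) 1_{(0,4)}(x) dx represents the function z ↦ z(1-4z)^{-1/2} as a free-Lévy-type integral. -/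
open MeasureTheory

noncomputable section StmtAux

open Complex Set

/-- Branch of arctangent suitable for our purposes. -/
def AA (ζ : ℂ) : ℂ := (Complex.log (1 + Complex.I * ζ) - Complex.log (1 - Complex.I * ζ)) / (2 * Complex.I)

lemma AA_zero : AA 0 = 0 := by simp [AA]

lemma AA_hasDerivAt_comp_real {f : ℝ → ℂ} {f' : ℂ} {x : ℝ}
    (hf : HasDerivAt f f' x)
    (h1 : 1 + Complex.I * f x ∈ Complex.slitPlane)
    (h2 : 1 - Complex.I * f x ∈ Complex.slitPlane) :
    HasDerivAt (fun t => AA (f t)) (f' * (1 + f x ^ 2)⁻¹) x := by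
  have n1 : 1 + Complex.I * f x ≠ 0 := Complex.slitPlane_ne_zero h1
  have n2 : 1 - Complex.I * f x ≠ 0 := Complex.slitPlane_ne_zero h2
  have d1 : HasDerivAt (fun t => Complex.log (1 + Complex.I * f t))
      ((Complex.I * f') / (1 + Complex.I * f x)) x :=
    ((hf.const_mul Complex.I).const_add 1).clog_real h1
  have d2 : HasDerivAt (fun t => Complex.log (1 - Complex.I * f t))
      ((-(Complex.I * f')) / (1 - Complex.I * f x)) x :=
    ((hf.const_mul Complex.I).const_sub 1).clog_real h2
  have hsq : (1 + Complex.I * f x) * (1 - Complex.I * f x) = 1 + f x ^ 2 := by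
    linear_combination (-(f x ^ 2)) * Complex.I_sq
  have n3 : (1 : ℂ) + f x ^ 2 ≠ 0 := hsq ▸ mul_ne_zero n1 n2
  have := (d1.sub d2).div_const (2 * Complex.I)
  refine this.congr_deriv (Eq.symm ?_)
  have hI : Complex.I ≠ 0 := Complex.I_ne_zero
  rw [← hsq]
  field_simp
  ring_nf

lemma AA_hasDerivAt {ζ : ℂ}
    (h1 : 1 + Complex.I * ζ ∈ Complex.slitPlane)
    (h2 : 1 - Complex.I * ζ ∈ Complex.slitPlane) :
    HasDerivAt AA ((1 + ζ ^ 2)⁻¹) ζ := by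
  have n1 : 1 + Complex.I * ζ ≠ 0 := Complex.slitPlane_ne_zero h1
  have n2 : 1 - Complex.I * ζ ≠ 0 := Complex.slitPlane_ne_zero h2
  have d1 : HasDerivAt (fun t : ℂ => Complex.log (1 + Complex.I * t))
      (Complex.I / (1 + Complex.I * ζ)) ζ := by
    have h : HasDerivAt (fun t : ℂ => 1 + Complex.I * t) Complex.I ζ := by
      simpa using ((hasDerivAt_id ζ).const_mul Complex.I).const_add 1
    exact h.clog h1
  have d2 : HasDerivAt (fun t : ℂ => Complex.log (1 - Complex.I * t))
      ((-Complex.I) / (1 - Complex.I * ζ)) ζ := by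
    have h : HasDerivAt (fun t : ℂ => 1 - Complex.I * t) (-Complex.I) ζ := by
      simpa using ((hasDerivAt_id ζ).const_mul Complex.I).const_sub 1
    exact h.clog h2
  have hsq : (1 + Complex.I * ζ) * (1 - Complex.I * ζ) = 1 + ζ ^ 2 := by
    linear_combination (-(ζ ^ 2)) * Complex.I_sq
  have n3 : (1 : ℂ) + ζ ^ 2 ≠ 0 := hsq ▸ mul_ne_zero n1 n2
  have h := (d1.sub d2).div_const (2 * Complex.I)
  have hI : Complex.I ≠ 0 := Complex.I_ne_zero
  refine h.congr_deriv (Eq.symm ?_)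
  rw [← hsq]
  field_simp
  ring_nf

lemma one_add_sq_ne {v : ℂ} (hv : 0 < v.re) : (1 : ℂ) + v ^ 2 ≠ 0 := by
  intro h
  have hre : 1 + (v.re * v.re - v.im * v.im) = 0 := by
    have := congrArg Complex.re h
    simpa [pow_two, Complex.mul_re] using this
  have him' : v.re * v.im + v.im * v.re = 0 := by
    have := congrArg Complex.im h
    simpa [pow_two, Complex.mul_im] using this
  have him : v.im = 0 := by nlinarith [sq_nonneg (v.re + v.im), sq_nonneg (v.re - v.im)]
  nlinarith [sq_nonneg v.re]

lemma slit_plus {v : ℂ} (hv : 0 < v.re) : 1 + Complex.I * v ∈ Complex.slitPlane := by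
  refine Complex.mem_slitPlane_iff.mpr (Or.inr ?_)
  simp [Complex.add_im, Complex.mul_im]
  positivity

lemma slit_minus {v : ℂ} (hv : 0 < v.re) : 1 - Complex.I * v ∈ Complex.slitPlane := by
  refine Complex.mem_slitPlane_iff.mpr (Or.inr ?_)
  simp [Complex.sub_im, Complex.mul_im]
  exact ne_of_gt hv

lemma AA_add_AA_inv {w : ℂ} (hw : 0 < w.re) : AA w + AA w⁻¹ = Real.pi / 2 := by
  set U : Set ℂ := {v : ℂ | 0 < v.re} with hUdef
  set S : ℂ → ℂ := fun v => AA v + AA v⁻¹ with hSdef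
  have hU : IsOpen U := isOpen_lt continuous_const Complex.continuous_re
  have hconv : Convex ℝ U := convex_halfSpace_re_gt 0
  have hSder : ∀ v ∈ U, HasDerivAt S 0 v := by
    intro v hv
    have hvre : 0 < v.re := hv
    have hv0 : v ≠ 0 := fun h => by simp [h] at hvre
    have hinv_re : 0 < (v⁻¹).re := by
      rw [Complex.inv_re]
      exact div_pos hvre (Complex.normSq_pos.mpr hv0)
    have d1 : HasDerivAt AA ((1 + v ^ 2)⁻¹) v :=
      AA_hasDerivAt (slit_plus hvre) (slit_minus hvre)
    have d2 : HasDerivAt (fun t : ℂ => AA t⁻¹)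
        ((1 + (v⁻¹) ^ 2)⁻¹ * (-(v ^ 2)⁻¹)) v :=
      (AA_hasDerivAt (slit_plus hinv_re) (slit_minus hinv_re)).comp v (hasDerivAt_inv hv0)
    have hsum := d1.add d2
    have hq1 : (1 : ℂ) + v ^ 2 ≠ 0 := one_add_sq_ne hvre
    have hval : (1 + v ^ 2)⁻¹ + (1 + (v⁻¹) ^ 2)⁻¹ * (-(v ^ 2)⁻¹) = 0 := by
      have hq2 : (1 : ℂ) + (v⁻¹) ^ 2 = (v ^ 2 + 1) / v ^ 2 := by
        field_simp
      have hq1' : (v ^ 2 + 1 : ℂ) ≠ 0 := by rwa [add_comm] at hq1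
      have hv2 : (v : ℂ) ^ 2 ≠ 0 := pow_ne_zero _ hv0
      rw [hq2, inv_div]
      field_simp
      ring
    rw [hval] at hsum
    exact hsum
  have hdiff : DifferentiableOn ℂ S U := fun v hv =>
    ((hSder v hv).differentiableAt).differentiableWithinAt
  have hzero : ∀ v ∈ U, fderivWithin ℂ S U v = 0 := by
    intro v hv
    rw [fderivWithin_of_isOpen hU hv]
    have h := (hSder v hv).hasFDerivAt.fderiv
    rw [h]
    ext y
    simp
  have h1U : (1 : ℂ) ∈ U := by simp [hUdef]
  have hwU : w ∈ U := hw
  have hconst := hconv.is_const_of_fderivWithin_eq_zero hdiff hzero hwU h1U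
  have hS1 : S 1 = Real.pi / 2 := by
    have harg : Complex.arg (1 + Complex.I) = Real.pi / 4 := by
      have h2 : Real.sqrt 2 * (Real.sqrt 2 / 2) = 1 := by
        rw [mul_div_assoc', Real.mul_self_sqrt (by norm_num : (0:ℝ) ≤ 2)]
        norm_num
      have h14 : (1 + Complex.I : ℂ)
          = (Real.sqrt 2 : ℝ) * (Complex.cos (Real.pi/4 : ℝ) + Complex.sin (Real.pi/4 : ℝ) * Complex.I) := by
        rw [← Complex.ofReal_cos, ← Complex.ofReal_sin, Real.cos_pi_div_four,
          Real.sin_pi_div_four]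
        have : ((Real.sqrt 2 : ℝ) : ℂ) * ((Real.sqrt 2 / 2 : ℝ) + (Real.sqrt 2 / 2 : ℝ) * Complex.I)
            = ((Real.sqrt 2 * (Real.sqrt 2 / 2) : ℝ) : ℂ)
              + ((Real.sqrt 2 * (Real.sqrt 2 / 2) : ℝ) : ℂ) * Complex.I := by
          push_cast
          ring
        rw [this, h2]
        norm_num
      rw [h14]
      exact Complex.arg_mul_cos_add_sin_mul_I (Real.sqrt_pos.mpr (by norm_num))
        (Set.mem_Ioc.mpr ⟨by linarith [Real.pi_pos], by linarith [Real.pi_pos]⟩)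
    have hconj : (1 : ℂ) - Complex.I = (starRingEnd ℂ) (1 + Complex.I) := by
      rw [map_add, map_one, Complex.conj_I]
      ring
    have hargne : Complex.arg (1 + Complex.I) ≠ Real.pi := by
      rw [harg]; intro h; nlinarith [Real.pi_pos]
    have hAA1 : AA 1 = Real.pi / 4 := by
      rw [AA]
      rw [mul_one, hconj, Complex.log_conj _ hargne]
      rw [Complex.sub_conj]
      rw [Complex.log_im, harg]
      have hI : Complex.I ≠ 0 := Complex.I_ne_zero
      field_simp
      push_cast
      ring
    have h1 : S 1 = AA 1 + AA 1 := by simp [hSdef]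
    rw [h1, hAA1]
    push_cast
    ring
  calc AA w + AA w⁻¹ = S w := rfl
    _ = S 1 := hconst
    _ = Real.pi / 2 := hS1

end StmtAux

section StmtMain

open Complex Set intervalIntegral

/-- The integrand. -/
noncomputable def ff (z : ℂ) (x : ℝ) : ℂ :=
  ((1 - (x : ℂ) * z) * (Real.sqrt (x * (4 - x)) : ℂ))⁻¹

lemma one_sub_ne {z : ℂ} (hz : z.im < 0) {x : ℝ} (hx : 0 ≤ x) : 1 - (x : ℂ) * z ≠ 0 := by
  intro h
  rcases eq_or_lt_of_le hx with h0 | h0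
  · rw [← h0] at h; simp at h
  · have him : (1 - (x : ℂ) * z).im = -(x * z.im) := by
      simp [Complex.sub_im, Complex.im_ofReal_mul]
    rw [h] at him
    simp only [Complex.zero_im] at him
    nlinarith

lemma abs_lower {z : ℂ} (hz : z.im < 0) :
    ∃ m > 0, ∀ x ∈ Icc (0:ℝ) 4, m ≤ ‖1 - (x : ℂ) * z‖ := by
  have hcont : ContinuousOn (fun x : ℝ => ‖1 - (x : ℂ) * z‖) (Icc 0 4) :=
    (continuous_norm.comp
      (continuous_const.sub (Complex.continuous_ofReal.mul continuous_const))).continuousOn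
  obtain ⟨x₀, hx₀, hmin⟩ := isCompact_Icc.exists_isMinOn
    (by norm_num : (Icc (0:ℝ) 4).Nonempty) hcont
  exact ⟨_, norm_pos_iff.mpr (one_sub_ne hz hx₀.1), fun x hx => hmin hx⟩

lemma meas_ff {z : ℂ} : Measurable (ff z) := by
  apply Measurable.inv
  apply Measurable.mul
  · exact (continuous_const.sub (Complex.continuous_ofReal.mul continuous_const)).measurable
  · exact (Complex.continuous_ofReal.comp
      (Real.continuous_sqrt.comp (continuous_id.mul (continuous_const.sub continuous_id)))).measurable

lemma norm_ff (z : ℂ) (x : ℝ) :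
    ‖ff z x‖ = (‖1 - (x : ℂ) * z‖ * Real.sqrt (x * (4 - x)))⁻¹ := by
  rw [ff, norm_inv, norm_mul, Complex.norm_real,
    Real.norm_of_nonneg (Real.sqrt_nonneg _)]

lemma intcomp1 {z : ℂ} (hz : z.im < 0) : IntervalIntegrable (ff z) volume 0 2 := by
  obtain ⟨m, hm, hbd⟩ := abs_lower hz
  have hg : IntervalIntegrable (fun x : ℝ => (m * Real.sqrt 2)⁻¹ * x ^ (-(1/2) : ℝ))
      volume 0 2 := (intervalIntegrable_rpow' (by norm_num)).const_mul _
  apply hg.mono_fun (meas_ff.aestronglyMeasurable.restrict)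
  have huIoc : Set.uIoc (0:ℝ) 2 = Ioc 0 2 := Set.uIoc_of_le (by norm_num)
  rw [huIoc]
  filter_upwards [ae_restrict_mem measurableSet_Ioc] with x hx
  obtain ⟨hx0, hx2⟩ := hx
  have hs2 : Real.sqrt 2 * Real.sqrt x ≤ Real.sqrt (x * (4 - x)) := by
    rw [← Real.sqrt_mul (by norm_num : (0:ℝ) ≤ 2)]
    apply Real.sqrt_le_sqrt
    nlinarith
  have hxr : x ^ (-(1/2) : ℝ) = (Real.sqrt x)⁻¹ := by
    rw [Real.rpow_neg hx0.le, Real.sqrt_eq_rpow]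
  rw [norm_ff, Real.norm_of_nonneg (by positivity), hxr, ← mul_inv]
  apply inv_anti₀
  · positivity
  · refine le_trans ?_ (mul_le_mul_of_nonneg_left hs2 (norm_nonneg _))
    rw [mul_assoc]
    exact mul_le_mul_of_nonneg_right (hbd x ⟨hx0.le, by linarith⟩) (by positivity)

lemma intcomp2 {z : ℂ} (hz : z.im < 0) : IntervalIntegrable (ff z) volume 2 4 := by
  obtain ⟨m, hm, hbd⟩ := abs_lower hz
  have hg0 : IntervalIntegrable (fun x : ℝ => x ^ (-(1/2) : ℝ)) volume 0 2 :=
    intervalIntegrable_rpow' (by norm_num)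
  have hg1 : IntervalIntegrable (fun x : ℝ => (4 - x) ^ (-(1/2) : ℝ)) volume 2 4 := by
    have := hg0.comp_sub_left 4
    norm_num at this
    exact this.symm
  have hg : IntervalIntegrable (fun x : ℝ => (m * Real.sqrt 2)⁻¹ * (4 - x) ^ (-(1/2) : ℝ))
      volume 2 4 := hg1.const_mul _
  apply hg.mono_fun (meas_ff.aestronglyMeasurable.restrict)
  have huIoc : Set.uIoc (2:ℝ) 4 = Ioc 2 4 := Set.uIoc_of_le (by norm_num)
  rw [huIoc]
  filter_upwards [ae_restrict_mem measurableSet_Ioc] with x hx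
  obtain ⟨hx2, hx4⟩ := hx
  have h4x : 0 ≤ 4 - x := by linarith
  have hs2 : Real.sqrt 2 * Real.sqrt (4 - x) ≤ Real.sqrt (x * (4 - x)) := by
    rw [← Real.sqrt_mul (by norm_num : (0:ℝ) ≤ 2)]
    apply Real.sqrt_le_sqrt
    nlinarith
  have hxr : (4 - x) ^ (-(1/2) : ℝ) = (Real.sqrt (4 - x))⁻¹ := by
    rw [Real.rpow_neg h4x, Real.sqrt_eq_rpow]
  rw [norm_ff, Real.norm_of_nonneg (by positivity), hxr, ← mul_inv]
  rcases eq_or_lt_of_le hx4 with heq | hlt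
  · subst heq
    norm_num
  · apply inv_anti₀
    · exact mul_pos (mul_pos hm (Real.sqrt_pos.mpr (by norm_num))) (Real.sqrt_pos.mpr (by linarith))
    · refine le_trans ?_ (mul_le_mul_of_nonneg_left hs2 (norm_nonneg _))
      rw [mul_assoc]
      exact mul_le_mul_of_nonneg_right (hbd x ⟨by linarith, by linarith⟩) (by positivity)

/-- First antiderivative. -/
noncomputable def F1 (z w : ℂ) (x : ℝ) : ℂ :=
  (2/w) * AA (w * (Real.sqrt (x/(4-x)) : ℂ))

/-- Second antiderivative. -/
noncomputable def F2 (z w : ℂ) (x : ℝ) : ℂ :=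
  -(2/w) * AA ((Real.sqrt ((4-x)/x) : ℂ) / w)

lemma F1_deriv {z w : ℂ} (hz : z.im < 0) (hw2 : w * w = 1 - 4*z) (hwre : 0 < w.re)
    {x : ℝ} (hx : x ∈ Ioo (0:ℝ) 4) : HasDerivAt (F1 z w) (ff z x) x := by
  obtain ⟨hx0, hx4⟩ := hx
  have h4x : 0 < 4 - x := by linarith
  have hw0 : w ≠ 0 := fun h => by simp [h] at hwre
  have hone : (1 : ℂ) - (x:ℂ)*z ≠ 0 := one_sub_ne hz hx0.le
  set s := Real.sqrt x with hsdef
  set t := Real.sqrt (4-x) with htdef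
  have hs : 0 < s := Real.sqrt_pos.mpr hx0
  have ht : 0 < t := Real.sqrt_pos.mpr h4x
  have hs2 : s^2 = x := Real.sq_sqrt hx0.le
  have ht2 : t^2 = 4-x := Real.sq_sqrt h4x.le
  have hus : Real.sqrt (x/(4-x)) = s / t := Real.sqrt_div hx0.le _
  have hst : Real.sqrt (x*(4-x)) = s * t := Real.sqrt_mul hx0.le _
  have hupos : 0 < Real.sqrt (x/(4-x)) := Real.sqrt_pos.mpr (by positivity)
  -- real inner derivative
  have hg : HasDerivAt (fun y : ℝ => y/(4-y)) (4/(4-x)^2) x := by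
    have h2 : HasDerivAt (fun y : ℝ => 4 - y) (-1) x := by
      simpa using (hasDerivAt_id x).const_sub 4
    have := (hasDerivAt_id x).div h2 (ne_of_gt h4x)
    refine this.congr_deriv (Eq.symm ?_)
    field_simp
    simp only [id]
    ring
  have hu : HasDerivAt (fun y : ℝ => Real.sqrt (y/(4-y)))
      (1/(2*Real.sqrt (x/(4-x))) * (4/(4-x)^2)) x := by
    exact (Real.hasDerivAt_sqrt (by positivity)).comp x hg
  have hv : HasDerivAt (fun y : ℝ => w * (Real.sqrt (y/(4-y)) : ℂ))
      (w * ((1/(2*Real.sqrt (x/(4-x))) * (4/(4-x)^2) : ℝ) : ℂ)) x :=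
    (hu.ofReal_comp).const_mul w
  have hvre : 0 < (w * (Real.sqrt (x/(4-x)) : ℂ)).re := by
    rw [mul_comm, Complex.re_ofReal_mul]
    positivity
  have hAA := AA_hasDerivAt_comp_real hv (slit_plus hvre) (slit_minus hvre)
  have hF := hAA.const_mul (2/w)
  have : F1 z w = fun y : ℝ => (2/w) * AA (w * (Real.sqrt (y/(4-y)) : ℂ)) := rfl
  rw [this]
  refine hF.congr_deriv (Eq.symm ?_)
  -- algebra
  have hdr : (1/(2*Real.sqrt (x/(4-x))) * (4/(4-x)^2) : ℝ) = 2/(s*t^3) := by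
    rw [hus, ← ht2]
    field_simp
    ring
  rw [hdr, hus]
  have hsC : ((s:ℝ):ℂ)^2 = (x:ℂ) := by
    rw [← Complex.ofReal_pow, hs2]
  have htC : ((t:ℝ):ℂ)^2 = 4 - (x:ℂ) := by
    rw [← Complex.ofReal_pow, ht2]
    push_cast
    ring
  have hsC0 : ((s:ℝ):ℂ) ≠ 0 := Complex.ofReal_ne_zero.mpr (ne_of_gt hs)
  have htC0 : ((t:ℝ):ℂ) ≠ 0 := Complex.ofReal_ne_zero.mpr (ne_of_gt ht)
  have hq : 1 + (w * ((s/t : ℝ) : ℂ))^2 = 4*(1 - (x:ℂ)*z)/((t:ℂ)^2) := by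
    push_cast
    field_simp
    linear_combination ((s:ℂ)^2) * hw2 + (1-4*z) * hsC + htC
  rw [hq, ff, hst]
  push_cast
  rw [inv_div]
  have hX : ((1 - (x:ℂ)*z) * ((s:ℂ)*(t:ℂ))) ≠ 0 := mul_ne_zero hone (mul_ne_zero hsC0 htC0)
  rw [inv_eq_one_div, div_eq_iff hX]
  field_simp
  have hD : (-(w * (t:ℂ)^3 * (x:ℂ) * z * (s:ℂ) * 4) + w * (t:ℂ)^3 * (s:ℂ) * 4 : ℂ) ≠ 0 := by
    have he : (-(w * (t:ℂ)^3 * (x:ℂ) * z * (s:ℂ) * 4) + w * (t:ℂ)^3 * (s:ℂ) * 4 : ℂ)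
        = 4 * w * (s:ℂ) * (t:ℂ)^3 * (1 - (x:ℂ)*z) := by ring
    rw [he]
    exact mul_ne_zero (mul_ne_zero (mul_ne_zero (mul_ne_zero (by norm_num) hw0) hsC0)
      (pow_ne_zero _ htC0)) hone
  have hfin := mul_inv_cancel₀ hD
  ring
lemma F2_deriv {z w : ℂ} (hz : z.im < 0) (hw2 : w * w = 1 - 4*z) (hwre : 0 < w.re)
    {x : ℝ} (hx : x ∈ Ioo (0:ℝ) 4) : HasDerivAt (F2 z w) (ff z x) x := by
  obtain ⟨hx0, hx4⟩ := hx
  have h4x : 0 < 4 - x := by linarith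
  have hw0 : w ≠ 0 := fun h => by simp [h] at hwre
  have hone : (1 : ℂ) - (x:ℂ)*z ≠ 0 := one_sub_ne hz hx0.le
  set s := Real.sqrt x with hsdef
  set t := Real.sqrt (4-x) with htdef
  have hs : 0 < s := Real.sqrt_pos.mpr hx0
  have ht : 0 < t := Real.sqrt_pos.mpr h4x
  have hs2 : s^2 = x := Real.sq_sqrt hx0.le
  have ht2 : t^2 = 4-x := Real.sq_sqrt h4x.le
  have hus : Real.sqrt ((4-x)/x) = t / s := Real.sqrt_div h4x.le _
  have hst : Real.sqrt (x*(4-x)) = s * t := Real.sqrt_mul hx0.le _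
  have hupos : 0 < Real.sqrt ((4-x)/x) := Real.sqrt_pos.mpr (by positivity)
  have hg : HasDerivAt (fun y : ℝ => (4-y)/y) (-4/x^2) x := by
    have h2 : HasDerivAt (fun y : ℝ => 4 - y) (-1) x := by
      simpa using (hasDerivAt_id x).const_sub 4
    have := h2.div (hasDerivAt_id x) (ne_of_gt hx0)
    refine this.congr_deriv (Eq.symm ?_)
    simp only [id]
    field_simp
    ring
  have hu : HasDerivAt (fun y : ℝ => Real.sqrt ((4-y)/y))
      (1/(2*Real.sqrt ((4-x)/x)) * (-4/x^2)) x :=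
    (Real.hasDerivAt_sqrt (by positivity)).comp x hg
  have hv : HasDerivAt (fun y : ℝ => (Real.sqrt ((4-y)/y) : ℂ) / w)
      (((1/(2*Real.sqrt ((4-x)/x)) * (-4/x^2) : ℝ) : ℂ) / w) x :=
    (hu.ofReal_comp).div_const w
  have hvre : 0 < ((Real.sqrt ((4-x)/x) : ℂ) / w).re := by
    rw [div_eq_mul_inv, Complex.re_ofReal_mul]
    have : 0 < (w⁻¹).re := by
      rw [Complex.inv_re]
      exact div_pos hwre (Complex.normSq_pos.mpr hw0)
    positivity
  have hAA := AA_hasDerivAt_comp_real hv (slit_plus hvre) (slit_minus hvre)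
  have hF := hAA.const_mul (-(2/w))
  have hrw : F2 z w = fun y : ℝ => -(2/w) * AA ((Real.sqrt ((4-y)/y) : ℂ) / w) := rfl
  rw [hrw]
  refine hF.congr_deriv (Eq.symm ?_)
  have hdr : (1/(2*Real.sqrt ((4-x)/x)) * (-4/x^2) : ℝ) = -2/(t*s^3) := by
    rw [hus, ← hs2]
    field_simp
    ring
  rw [hdr, hus]
  have hsC : ((s:ℝ):ℂ)^2 = (x:ℂ) := by
    rw [← Complex.ofReal_pow, hs2]
  have htC : ((t:ℝ):ℂ)^2 = 4 - (x:ℂ) := by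
    rw [← Complex.ofReal_pow, ht2]
    push_cast
    ring
  have hsC0 : ((s:ℝ):ℂ) ≠ 0 := Complex.ofReal_ne_zero.mpr (ne_of_gt hs)
  have htC0 : ((t:ℝ):ℂ) ≠ 0 := Complex.ofReal_ne_zero.mpr (ne_of_gt ht)
  have hq : 1 + (((t/s : ℝ) : ℂ) / w)^2 = 4*(1 - (x:ℂ)*z)/((s:ℂ)^2 * (w*w)) := by
    push_cast
    field_simp
    linear_combination ((s:ℂ)^2) * hw2 + (1-4*z) * hsC + htC
  rw [hq, ff, hst]
  push_cast
  rw [inv_div]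
  have hX : ((1 - (x:ℂ)*z) * ((s:ℂ)*(t:ℂ))) ≠ 0 := mul_ne_zero hone (mul_ne_zero hsC0 htC0)
  rw [inv_eq_one_div, div_eq_iff hX]
  field_simp
  have hD : (-((s:ℂ)^3 * w^2 * (x:ℂ) * z * (t:ℂ) * 4) + (s:ℂ)^3 * w^2 * (t:ℂ) * 4 : ℂ) ≠ 0 := by
    have he : (-((s:ℂ)^3 * w^2 * (x:ℂ) * z * (t:ℂ) * 4) + (s:ℂ)^3 * w^2 * (t:ℂ) * 4 : ℂ)
        = 4 * (s:ℂ)^3 * w^2 * (t:ℂ) * (1 - (x:ℂ)*z) := by ring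
    rw [he]
    exact mul_ne_zero (mul_ne_zero (mul_ne_zero (mul_ne_zero (by norm_num)
      (pow_ne_zero _ hsC0)) (pow_ne_zero _ hw0)) htC0) hone
  have hfin := mul_inv_cancel₀ hD
  ring

lemma AA_contAt_zero : ContinuousAt AA 0 := by
  have c1 : ContinuousAt (fun ζ : ℂ => 1 + Complex.I * ζ) 0 :=
    (continuous_const.add (continuous_const.mul continuous_id)).continuousAt
  have c2 : ContinuousAt (fun ζ : ℂ => 1 - Complex.I * ζ) 0 :=
    (continuous_const.sub (continuous_const.mul continuous_id)).continuousAt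
  have l1 : ContinuousAt (fun ζ : ℂ => Complex.log (1 + Complex.I * ζ)) 0 :=
    c1.clog (by simp)
  have l2 : ContinuousAt (fun ζ : ℂ => Complex.log (1 - Complex.I * ζ)) 0 :=
    c2.clog (by simp)
  exact (l1.sub l2).div_const _

lemma tendsto_F1_zero {z w : ℂ} :
    Filter.Tendsto (F1 z w) (nhdsWithin 0 (Ioi (0:ℝ))) (nhds 0) := by
  have hinner : ContinuousAt (fun x : ℝ => w * (Real.sqrt (x/(4-x)) : ℂ)) 0 := by
    have hdiv : ContinuousAt (fun x : ℝ => x/(4-x)) 0 :=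
      ContinuousAt.div continuousAt_id
        ((continuous_const.sub continuous_id).continuousAt) (by norm_num)
    exact continuousAt_const.mul
      (Complex.continuous_ofReal.continuousAt.comp
        (Real.continuous_sqrt.continuousAt.comp hdiv))
  have h0 : (fun x : ℝ => w * (Real.sqrt (x/(4-x)) : ℂ)) 0 = 0 := by
    simp
  have hAA0 : ContinuousAt (fun x : ℝ => AA (w * (Real.sqrt (x/(4-x)) : ℂ))) 0 := by
    have h := AA_contAt_zero
    rw [← h0] at h
    exact ContinuousAt.comp (f := fun x : ℝ => w * (Real.sqrt (x/(4-x)) : ℂ)) (x := 0) h hinner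
  have hc : ContinuousAt (F1 z w) 0 := continuousAt_const.mul hAA0
  have hval : F1 z w 0 = 0 := by
    rw [F1]
    norm_num [AA_zero]
  have h := hc.continuousWithinAt (s := Ioi (0:ℝ))
  rw [ContinuousWithinAt, hval] at h
  exact h

lemma tendsto_F2_four {z w : ℂ} :
    Filter.Tendsto (F2 z w) (nhdsWithin 4 (Iio (4:ℝ))) (nhds 0) := by
  have hinner : ContinuousAt (fun x : ℝ => (Real.sqrt ((4-x)/x) : ℂ) / w) 4 := by
    have hdiv : ContinuousAt (fun x : ℝ => (4-x)/x) 4 :=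
      ContinuousAt.div ((continuous_const.sub continuous_id).continuousAt)
        continuousAt_id (by norm_num)
    exact ContinuousAt.div_const
      (Complex.continuous_ofReal.continuousAt.comp
        (Real.continuous_sqrt.continuousAt.comp hdiv)) w
  have h0 : (fun x : ℝ => (Real.sqrt ((4-x)/x) : ℂ) / w) 4 = 0 := by
    simp
  have hAA0 : ContinuousAt (fun x : ℝ => AA ((Real.sqrt ((4-x)/x) : ℂ) / w)) 4 := by
    have h := AA_contAt_zero
    rw [← h0] at h
    exact ContinuousAt.comp (f := fun x : ℝ => (Real.sqrt ((4-x)/x) : ℂ) / w) (x := 4) h hinner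
  have hc : ContinuousAt (F2 z w) 4 := continuousAt_const.mul hAA0
  have hval : F2 z w 4 = 0 := by
    rw [F2]
    norm_num [AA_zero]
  have h := hc.continuousWithinAt (s := Iio (4:ℝ))
  rw [ContinuousWithinAt, hval] at h
  exact h

lemma main_integral {z w : ℂ} (hz : z.im < 0) (hw2 : w * w = 1 - 4*z) (hwre : 0 < w.re) :
    ∫ x in Ioo (0:ℝ) 4, ff z x = (Real.pi : ℂ) / w := by
  have hw0 : w ≠ 0 := fun h => by simp [h] at hwre
  have h02 := intcomp1 hz
  have h24 := intcomp2 hz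
  have hF1lim2 : Filter.Tendsto (F1 z w) (nhdsWithin 2 (Iio (2:ℝ)))
      (nhds ((2/w) * AA w)) := by
    have hd := F1_deriv hz hw2 hwre (x := 2) (by norm_num)
    have hc := hd.continuousAt.continuousWithinAt (s := Iio (2:ℝ))
    have hval : F1 z w 2 = (2/w) * AA w := by
      rw [F1]
      norm_num
    rw [ContinuousWithinAt, hval] at hc
    exact hc
  have hF2lim2 : Filter.Tendsto (F2 z w) (nhdsWithin 2 (Ioi (2:ℝ)))
      (nhds (-(2/w) * AA w⁻¹)) := by
    have hd := F2_deriv hz hw2 hwre (x := 2) (by norm_num)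
    have hc := hd.continuousAt.continuousWithinAt (s := Ioi (2:ℝ))
    have hval : F2 z w 2 = -(2/w) * AA w⁻¹ := by
      rw [F2]
      norm_num [one_div]
    rw [ContinuousWithinAt, hval] at hc
    exact hc
  have hI1 : ∫ x in (0:ℝ)..2, ff z x = (2/w) * AA w - 0 :=
    intervalIntegral.integral_eq_sub_of_hasDerivAt_of_tendsto (by norm_num)
      (fun x hx => F1_deriv hz hw2 hwre ⟨hx.1, by linarith [hx.2]⟩) h02
      tendsto_F1_zero hF1lim2
  have hI2 : ∫ x in (2:ℝ)..4, ff z x = 0 - -(2/w) * AA w⁻¹ :=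
    intervalIntegral.integral_eq_sub_of_hasDerivAt_of_tendsto (by norm_num)
      (fun x hx => F2_deriv hz hw2 hwre ⟨by linarith [hx.1], hx.2⟩) h24
      hF2lim2 tendsto_F2_four
  have hsplit := intervalIntegral.integral_add_adjacent_intervals h02 h24
  have hkey := AA_add_AA_inv hwre
  calc ∫ x in Ioo (0:ℝ) 4, ff z x
      = ∫ x in Ioc (0:ℝ) 4, ff z x := (integral_Ioc_eq_integral_Ioo).symm
    _ = ∫ x in (0:ℝ)..4, ff z x := (intervalIntegral.integral_of_le (by norm_num)).symm
    _ = (∫ x in (0:ℝ)..2, ff z x) + ∫ x in (2:ℝ)..4, ff z x := hsplit.symm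
    _ = (Real.pi : ℂ) / w := by
        rw [hI1, hI2]
        linear_combination (2/w) * hkey

end StmtMain



/-- The free Lévy measure representation of `z ↦ z(1-4z)^{-1/2}`, the free
cumulant transform of the BDLP of the standard free gamma distribution. -/
theorem stmt9 (z : ℂ) (hz : z.im < 0) :
    z / (1 - 4 * z) ^ ((1 : ℂ) / 2)
      = (1 / 2 : ℂ) * ∫ x in Set.Ioo (0 : ℝ) 4,
          (1 / (1 - (x : ℂ) * z) - 1) *
            ((2 / (Real.pi * x * Real.sqrt (x * (4 - x))) : ℝ) : ℂ) := by
  have him : ((1:ℂ) - 4*z).im = -(4*z.im) := by simp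
  have hne0 : (1 : ℂ) - 4*z ≠ 0 := by
    intro h
    rw [h] at him
    simp at him
    linarith
  set w := (1 - 4*z) ^ ((1:ℂ)/2) with hwdef
  have hcpow : w = Complex.exp (Complex.log (1-4*z) * (1/2)) := by
    rw [hwdef, Complex.cpow_def_of_ne_zero hne0]
  have hw2 : w * w = 1 - 4*z := by
    rw [hcpow, ← Complex.exp_add]
    have h' : Complex.log (1-4*z) * (1/2) + Complex.log (1-4*z) * (1/2)
        = Complex.log (1-4*z) := by ring
    rw [h', Complex.exp_log hne0]
  have hwre : 0 < w.re := by
    rw [hcpow, Complex.exp_re]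
    apply mul_pos (Real.exp_pos _)
    have himl : (Complex.log (1-4*z) * (1/2)).im = Complex.arg (1-4*z) / 2 := by
      rw [show ((1:ℂ)/2) = ((1/2:ℝ):ℂ) by norm_num, mul_comm, Complex.im_ofReal_mul,
        Complex.log_im]
      ring
    rw [himl]
    apply Real.cos_pos_of_mem_Ioo
    constructor
    · have := Complex.neg_pi_lt_arg (1-4*z)
      linarith [Real.pi_pos]
    · have hle := Complex.arg_le_pi (1-4*z)
      have hne : Complex.arg (1-4*z) ≠ Real.pi := by
        intro h
        have h2 := (Complex.arg_eq_pi_iff.mp h).2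
        rw [him] at h2
        linarith
      have hlt := lt_of_le_of_ne hle hne
      linarith
  have hw0 : w ≠ 0 := fun h => by simp [h] at hwre
  have hπ : (Real.pi : ℂ) ≠ 0 := Complex.ofReal_ne_zero.mpr Real.pi_ne_zero
  have hcongr : Set.EqOn
      (fun x : ℝ => (1 / (1 - (x : ℂ) * z) - 1) *
        ((2 / (Real.pi * x * Real.sqrt (x * (4 - x))) : ℝ) : ℂ))
      (fun x : ℝ => (2*z/(Real.pi:ℂ)) * ff z x) (Set.Ioo 0 4) := by
    intro x hx
    obtain ⟨hx0, hx4⟩ := hx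
    have hs : 0 < Real.sqrt (x*(4-x)) := Real.sqrt_pos.mpr (by nlinarith)
    have hone := one_sub_ne hz hx0.le
    have hsC0 : ((Real.sqrt (x*(4-x)):ℝ):ℂ) ≠ 0 := Complex.ofReal_ne_zero.mpr (ne_of_gt hs)
    have hxC0 : ((x:ℝ):ℂ) ≠ 0 := Complex.ofReal_ne_zero.mpr (ne_of_gt hx0)
    have h1 : (1 / (1 - (x:ℂ)*z) - 1) = (x:ℂ)*z / (1 - (x:ℂ)*z) := by
      field_simp
      ring
    have h2 : ((2 / (Real.pi * x * Real.sqrt (x*(4-x))) : ℝ) : ℂ)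
        = 2 / ((Real.pi:ℂ) * (x:ℂ) * ((Real.sqrt (x*(4-x)) : ℝ) : ℂ)) := by
      push_cast
      ring
    simp only []
    rw [h1, h2, ff, ← div_eq_mul_inv, div_mul_div_comm, div_div]
    rw [div_eq_div_iff (mul_ne_zero hone (mul_ne_zero (mul_ne_zero hπ hxC0) hsC0))
      (mul_ne_zero hπ (mul_ne_zero hone hsC0))]
    ring
  rw [MeasureTheory.setIntegral_congr_fun measurableSet_Ioo hcongr,
    MeasureTheory.integral_const_mul, main_integral hz hw2 hwre]
  field_simp
end

section
/- For every p ∈ (0,1) and every z ∈ ℂ with Im(z) ≠ 0 (or z real < 0), one has 1 - (1 - z)^p = ∫_0^1 (1/(1 - xz) - 1) · (sin(pπ)/(π x)) · ((1 - x)/x)^p dx, with principal branch powers. -/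
open MeasureTheory

noncomputable section LKsection
open Set Metric Complex

def lkW (p x : ℝ) : ℝ := x ^ (-p) * (1 - x) ^ p
def lkS (p : ℝ) : ℝ := Real.sin (p * Real.pi) / Real.pi
def lkF (p : ℝ) (z : ℂ) (x : ℝ) : ℂ := z / (1 - x * z) * ((lkS p * lkW p x : ℝ) : ℂ)
def lkD (p : ℝ) (z : ℂ) (x : ℝ) : ℂ := ((lkS p * lkW p x : ℝ) : ℂ) / (1 - x * z) ^ 2
def lkG (p : ℝ) (z : ℂ) : ℂ := ∫ x in Ioo (0:ℝ) 1, lkF p z x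
def lkΩ : Set ℂ := ball 0 1 ∪ {z | z.im ≠ 0}

theorem lkΩ_open : IsOpen lkΩ :=
  isOpen_ball.union (isOpen_ne.preimage Complex.continuous_im)

theorem lk_ne (z : ℂ) (hz : z ∈ lkΩ) {x : ℝ} (hx : x ∈ Icc (0:ℝ) 1) :
    1 - (x : ℂ) * z ≠ 0 := by
  intro h
  have hx0 : (x : ℂ) ≠ 0 := by
    intro h0
    rw [h0, zero_mul, sub_zero] at h
    exact one_ne_zero h
  have hx0' : x ≠ 0 := by exact_mod_cast hx0
  have hzv : z = ((x⁻¹ : ℝ) : ℂ) := by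
    push_cast
    field_simp at h ⊢
    linear_combination -h
  rcases hz with hb | him
  · rw [mem_ball, dist_zero_right, hzv] at hb
    have hxpos : 0 < x := lt_of_le_of_ne hx.1 (Ne.symm hx0')
    rw [Complex.norm_real, Real.norm_eq_abs, abs_of_pos (by positivity)] at hb
    nlinarith [mul_inv_cancel₀ hx0', hx.2, hxpos, hb]
  · rw [hzv] at him
    simp at him

theorem lk_bound (z₀ : ℂ) (hz₀ : z₀ ∈ lkΩ) :
    ∃ ε > 0, ∃ c > 0, ∀ z ∈ closedBall z₀ ε, ∀ x ∈ Icc (0:ℝ) 1, c ≤ ‖1 - (x:ℂ) * z‖ := by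
  obtain ⟨ε, hε, hball⟩ := (Metric.isOpen_iff.mp lkΩ_open) z₀ hz₀
  refine ⟨ε/2, by positivity, ?_⟩
  have hsub : closedBall z₀ (ε/2) ⊆ lkΩ := fun w hw => hball (by rw [mem_closedBall] at hw; rw [mem_ball]; linarith)
  have hK : IsCompact (closedBall z₀ (ε/2) ×ˢ Icc (0:ℝ) 1) :=
    (isCompact_closedBall _ _).prod isCompact_Icc
  have hne : (closedBall z₀ (ε/2) ×ˢ Icc (0:ℝ) 1).Nonempty :=
    ⟨⟨z₀, 0⟩, mem_closedBall_self (by positivity), by norm_num⟩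
  have hcont : ContinuousOn (fun q : ℂ × ℝ => ‖1 - (q.2:ℂ) * q.1‖)
      (closedBall z₀ (ε/2) ×ˢ Icc (0:ℝ) 1) :=
    ((continuous_const.sub ((Complex.continuous_ofReal.comp continuous_snd).mul
      continuous_fst)).norm).continuousOn
  obtain ⟨⟨z₁, x₁⟩, hmem, hmin⟩ := hK.exists_isMinOn hne hcont
  refine ⟨‖1 - (x₁:ℂ) * z₁‖, ?_, fun z hzb x hx => ?_⟩
  · exact norm_pos_iff.mpr (lk_ne z₁ (hsub hmem.1) hmem.2)
  · have := hmin (Set.mk_mem_prod hzb hx)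
    simpa using this

theorem lkW_integrable {p : ℝ} (hp : p ∈ Ioo (0:ℝ) 1) :
    IntegrableOn (lkW p) (Ioo (0:ℝ) 1) := by
  have hrw : lkW p = fun x : ℝ => x ^ (-p) * (1 - x) ^ p := rfl
  rw [hrw]
  have h1 : IntegrableOn (fun x : ℝ => x ^ (-p)) (Ioo (0:ℝ) 1) := by
    have := intervalIntegral.intervalIntegrable_rpow' (a := 0) (b := 1) (r := -p)
      (by linarith [hp.2])
    rw [intervalIntegrable_iff, uIoc_of_le zero_le_one] at this
    exact this.mono_set Ioo_subset_Ioc_self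
  refine Integrable.mono h1 ?_ ?_
  · refine (ContinuousOn.aestronglyMeasurable ?_ measurableSet_Ioo)
    intro x hx
    exact ((Real.continuousAt_rpow_const x (-p) (Or.inl (ne_of_gt hx.1))).mul
      (((Real.continuousAt_rpow_const (1-x) p (Or.inl (by nlinarith [hx.2]))).comp
        (by fun_prop)))).continuousWithinAt
  · rw [ae_restrict_iff' measurableSet_Ioo]
    filter_upwards with x hx
    rw [Real.norm_eq_abs, Real.norm_eq_abs,
      _root_.abs_of_nonneg (mul_nonneg (Real.rpow_nonneg (le_of_lt hx.1) _)
        (Real.rpow_nonneg (by linarith [hx.2]) _)),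
      _root_.abs_of_nonneg (Real.rpow_nonneg (le_of_lt hx.1) _)]
    nth_rewrite 2 [← mul_one (x ^ (-p))]
    refine mul_le_mul_of_nonneg_left ?_ (Real.rpow_nonneg (le_of_lt hx.1) _)
    exact Real.rpow_le_one (by linarith [hx.1, hx.2]) (by linarith [hx.1, hx.2]) (le_of_lt hp.1)


theorem lkW_nonneg {p x : ℝ} (hx : x ∈ Icc (0:ℝ) 1) : 0 ≤ lkW p x := by
  exact mul_nonneg (Real.rpow_nonneg hx.1 _) (Real.rpow_nonneg (by linarith [hx.2]) _)

theorem lkS_pos {p : ℝ} (hp : p ∈ Ioo (0:ℝ) 1) : 0 < lkS p := by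
  obtain ⟨hp0, hp1⟩ := hp
  have h1 : 0 < p * Real.pi := by positivity
  have h2 : p * Real.pi < Real.pi := by
    nlinarith [Real.pi_pos]
  exact div_pos (Real.sin_pos_of_pos_of_lt_pi h1 h2) Real.pi_pos

theorem lkW_meas {p : ℝ} : ContinuousOn (lkW p) (Ioo (0:ℝ) 1) := by
  intro x hx
  refine ContinuousWithinAt.mul ?_ ?_
  · exact (Real.continuousAt_rpow_const x (-p) (Or.inl (ne_of_gt hx.1))).continuousWithinAt
  · exact ContinuousWithinAt.comp
      ((Real.continuousAt_rpow_const (1-x) p (Or.inl (by nlinarith [hx.2]))).continuousWithinAt)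
      ((continuous_const.sub continuous_id).continuousWithinAt) (mapsTo_univ _ _)

theorem lk_beta {p : ℝ} (hp : p ∈ Ioo (0:ℝ) 1) :
    ∫ x in Ioo (0:ℝ) 1, ((lkW p x : ℝ) : ℂ)
      = (p : ℂ) * Real.pi / Real.sin (p * Real.pi) := by
  simp only [lkW]
  have h1 : ∫ x in Ioo (0:ℝ) 1, ((x ^ (-p) * (1 - x) ^ p : ℝ) : ℂ)
      = Complex.betaIntegral (1 - p) (1 + p) := by
    rw [setIntegral_congr_set Ioo_ae_eq_Ioc, ← intervalIntegral.integral_of_le zero_le_one,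
      Complex.betaIntegral]
    refine intervalIntegral.integral_congr fun x hx => ?_
    rw [uIcc_of_le zero_le_one] at hx
    have hx0 : (0:ℝ) ≤ x := hx.1
    have hx1 : (0:ℝ) ≤ 1 - x := by linarith [hx.2]
    rw [Complex.ofReal_mul, Complex.ofReal_cpow hx0, Complex.ofReal_cpow hx1]
    push_cast
    norm_num
  rw [h1]
  have hu : 0 < Complex.re (1 - p) := by simp [hp.2]
  have hv : 0 < Complex.re (1 + p) := by
    simp only [Complex.add_re, Complex.one_re, Complex.ofReal_re]
    linarith [hp.1]
  have h2 := Complex.Gamma_mul_Gamma_eq_betaIntegral hu hv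
  have h3 : (1:ℂ) - p + (1 + p) = 2 := by ring
  rw [h3] at h2
  have h4 : Complex.Gamma 2 = 1 := by
    have := Complex.Gamma_nat_eq_factorial 1
    norm_num at this
    convert this using 2
    norm_num
  rw [h4, one_mul] at h2
  rw [← h2]
  have h5 : (1:ℂ) + p = p + 1 := by ring
  rw [h5, Complex.Gamma_add_one (p:ℂ) (by exact_mod_cast ne_of_gt hp.1)]
  have h6 := Complex.Gamma_mul_Gamma_one_sub (p : ℂ)
  have h7 : Complex.sin (Real.pi * p) ≠ 0 := by
    have : ((Real.sin (p * Real.pi) : ℝ) : ℂ) = Complex.sin ((Real.pi : ℂ) * p) := by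
      rw [Complex.ofReal_sin]; push_cast; ring_nf
    rw [← this]
    have hs : 0 < Real.sin (p * Real.pi) := by
      obtain ⟨ha, hb⟩ := hp
      refine Real.sin_pos_of_pos_of_lt_pi (by positivity) ?_
      nlinarith [Real.pi_pos]
    exact_mod_cast ne_of_gt hs
  have h8 : ((Real.sin (p * Real.pi) : ℝ) : ℂ) = Complex.sin ((Real.pi : ℂ) * p) := by
    rw [Complex.ofReal_sin]; push_cast; ring_nf
  rw [eq_div_iff h7] at h6
  rw [h8, eq_div_iff h7]
  linear_combination (p:ℂ) * h6


theorem lk_ftc {p : ℝ} (hp : p ∈ Ioo (0:ℝ) 1) (z : ℂ)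
    (hz : ∀ x ∈ Icc (0:ℝ) 1, 1 - (x:ℂ) * z ≠ 0)
    (c : ℝ) (hc : 0 < c) (hcb : ∀ x ∈ Icc (0:ℝ) 1, c ≤ ‖1 - (x:ℂ) * z‖) :
    ∫ x in Ioo (0:ℝ) 1,
      ((1 - z)/(1 - x*z)^2 + p * z/(1 - x*z) - 1) * ((lkW p x : ℝ) : ℂ) = 0 := by
  simp only [lkW]
  obtain ⟨hp0, hp1⟩ := hp
  set φ : ℝ → ℂ := fun x => -z * ((x ^ (1-p) * (1-x) ^ (1+p) : ℝ) : ℂ) / (1 - x*z) with hφdef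
  set f' : ℝ → ℂ := fun x =>
    ((1 - z)/(1 - x*z)^2 + p * z/(1 - x*z) - 1) * ((x ^ (-p) * (1 - x) ^ p : ℝ) : ℂ) with hf'def
  have hcont : ContinuousOn φ (Icc (0:ℝ) 1) := by
    apply ContinuousOn.div
    · refine continuousOn_const.mul (Complex.continuous_ofReal.comp_continuousOn ?_)
      refine ContinuousOn.mul ?_ ?_
      · exact fun x _ => (Real.continuousAt_rpow_const x (1-p)
          (Or.inr (by linarith))).continuousWithinAt
      · refine fun x _ => ContinuousWithinAt.comp
          ((Real.continuousAt_rpow_const (1-x) (1+p) (Or.inr (by linarith))).continuousWithinAt)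
          ((continuous_const.sub continuous_id).continuousWithinAt) (mapsTo_univ _ _)
    · exact (continuous_const.sub (Complex.continuous_ofReal.mul continuous_const)).continuousOn
    · exact hz
  have hderiv : ∀ x ∈ Ioo (0:ℝ) 1, HasDerivWithinAt φ (f' x) (Ioi x) x := by
    intro x hx
    obtain ⟨hx0, hx1⟩ := hx
    have h1x : (0:ℝ) < 1 - x := by linarith
    have ha : HasDerivAt (fun y:ℝ => y ^ (1-p)) ((1-p) * x ^ (1-p-1)) x :=
      Real.hasDerivAt_rpow_const (Or.inl hx0.ne')
    have hb0 : HasDerivAt (fun y:ℝ => (1:ℝ) - y) (-1) x := (hasDerivAt_id x).const_sub 1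
    have hb : HasDerivAt (fun y:ℝ => (1-y) ^ (1+p)) ((1+p) * (1-x)^(1+p-1) * (-1)) x :=
      (Real.hasDerivAt_rpow_const (Or.inl h1x.ne')).comp x hb0
    have hN := (ha.mul hb).ofReal_comp
    have hD : HasDerivAt (fun y:ℝ => 1 - (y:ℂ)*z) (-((1:ℝ) * z)) x := by
      have := ((hasDerivAt_id x).ofReal_comp (z := x)).mul_const z
      exact this.const_sub 1
    have hdz : (1:ℂ) - x*z ≠ 0 := hz x ⟨hx0.le, hx1.le⟩
    have hφ := (hN.const_mul (-z)).div hD hdz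
    have e1 : (x:ℝ) ^ (1-p) = x * x ^ (-p) := by
      rw [show (1:ℝ)-p = 1 + (-p) by ring, Real.rpow_add hx0, Real.rpow_one]
    have e2 : (x:ℝ) ^ (1-p-1) = x ^ (-p) := by norm_num
    have e3 : ((1:ℝ)-x) ^ (1+p) = (1-x) * (1-x) ^ p := by
      rw [show (1:ℝ)+p = 1 + p from rfl, Real.rpow_add h1x, Real.rpow_one]
    have e4 : ((1:ℝ)-x) ^ (1+p-1) = (1-x) ^ p := by norm_num
    rw [e1, e2, e3, e4] at hφ
    refine (HasDerivAt.hasDerivWithinAt ?_)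
    refine hφ.congr_deriv ?_
    symm
    rw [hf'def]
    simp only [Pi.mul_apply, e1, e3]
    push_cast
    field_simp
    linear_combination (((x ^ (-p) : ℝ) : ℂ) * (((1 - x) ^ p : ℝ) : ℂ)) *
      (inv_mul_cancel₀ (pow_ne_zero 2 hdz))
  have hWIoc : IntegrableOn (fun x : ℝ => x ^ (-p) * (1 - x) ^ p) (Ioc (0:ℝ) 1) := by
    rw [IntegrableOn, ← Measure.restrict_congr_set Ioo_ae_eq_Ioc]
    exact lkW_integrable ⟨hp0, hp1⟩
  have hInt : IntervalIntegrable f' volume 0 1 := by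
    rw [intervalIntegrable_iff, uIoc_of_le zero_le_one]
    set M : ℝ := ‖1-z‖/c^2 + p*‖z‖/c + 1 with hM
    refine Integrable.mono (hWIoc.const_mul M) ?_ ?_
    · refine (ContinuousOn.aestronglyMeasurable ?_ measurableSet_Ioc)
      refine ContinuousOn.mul ?_ ?_
      · refine ContinuousOn.sub (ContinuousOn.add ?_ ?_) continuousOn_const
        · exact ContinuousOn.div continuousOn_const
            (((continuous_const.sub (Complex.continuous_ofReal.mul continuous_const)).pow 2).continuousOn)
            (fun x hx => pow_ne_zero 2 (hz x ⟨hx.1.le, hx.2⟩))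
        · exact ContinuousOn.div continuousOn_const
            ((continuous_const.sub (Complex.continuous_ofReal.mul continuous_const)).continuousOn)
            (fun x hx => hz x ⟨hx.1.le, hx.2⟩)
      · refine Complex.continuous_ofReal.comp_continuousOn (ContinuousOn.mul ?_ ?_)
        · exact fun x hx => (Real.continuousAt_rpow_const x (-p)
            (Or.inl (ne_of_gt hx.1))).continuousWithinAt
        · refine fun x hx => ContinuousWithinAt.comp
            ((Real.continuousAt_rpow_const (1-x) p (Or.inr hp0.le)).continuousWithinAt)
            ((continuous_const.sub continuous_id).continuousWithinAt) (mapsTo_univ _ _)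
    · rw [ae_restrict_iff' measurableSet_Ioc]
      filter_upwards with x hx
      have hxI : x ∈ Icc (0:ℝ) 1 := ⟨hx.1.le, hx.2⟩
      have hcx := hcb x hxI
      have hW0 : (0:ℝ) ≤ x ^ (-p) * (1 - x) ^ p :=
        mul_nonneg (Real.rpow_nonneg hx.1.le _) (Real.rpow_nonneg (by linarith [hx.2]) _)
      rw [hf'def, norm_mul, Complex.norm_real, Real.norm_eq_abs, _root_.abs_of_nonneg hW0,
        Real.norm_eq_abs, _root_.abs_of_nonneg (mul_nonneg ?_ hW0)]
      swap
      · rw [hM]; positivity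
      refine mul_le_mul_of_nonneg_right ?_ hW0
      calc ‖(1 - z)/(1 - x*z)^2 + p * z/(1 - x*z) - 1‖
          ≤ ‖(1 - z)/(1 - x*z)^2 + p * z/(1 - x*z)‖ + ‖(1:ℂ)‖ := norm_sub_le _ _
        _ ≤ ‖(1 - z)/(1 - x*z)^2‖ + ‖(p:ℂ) * z/(1 - x*z)‖ + ‖(1:ℂ)‖ := by
            gcongr; exact norm_add_le _ _
        _ ≤ ‖1-z‖/c^2 + p*‖z‖/c + 1 := by
            have h1 : c ≤ ‖1 - (x:ℂ)*z‖ := hcx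
            have h2 : ‖(1 - z)/(1 - x*z)^2‖ ≤ ‖1-z‖/c^2 := by
              rw [norm_div, norm_pow]
              gcongr
            have h3 : ‖(p:ℂ) * z/(1 - x*z)‖ ≤ p*‖z‖/c := by
              rw [norm_div, norm_mul, Complex.norm_real, Real.norm_eq_abs,
                _root_.abs_of_pos hp0]
              gcongr
            rw [norm_one]
            linarith
  have key := intervalIntegral.integral_eq_sub_of_hasDeriv_right_of_le zero_le_one hcont hderiv hInt
  have hφ1 : φ 1 = 0 := by
    have h0 : (0:ℝ) ^ (1+p) = 0 := Real.zero_rpow (by linarith)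
    simp [hφdef, h0]
  have hφ0 : φ 0 = 0 := by
    have h0 : (0:ℝ) ^ (1-p) = 0 := Real.zero_rpow (by linarith)
    simp [hφdef, h0]
  rw [hφ1, hφ0, sub_zero] at key
  calc ∫ x in Ioo (0:ℝ) 1, f' x = ∫ x in Ioc (0:ℝ) 1, f' x :=
        setIntegral_congr_set Ioo_ae_eq_Ioc
    _ = ∫ x in (0:ℝ)..1, f' x := (intervalIntegral.integral_of_le zero_le_one).symm
    _ = 0 := key

theorem lkF_meas {p : ℝ} (z : ℂ) (hz : ∀ x ∈ Icc (0:ℝ) 1, 1 - (x:ℂ) * z ≠ 0) :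
    AEStronglyMeasurable (lkF p z) (volume.restrict (Ioo (0:ℝ) 1)) := by
  refine (ContinuousOn.aestronglyMeasurable ?_ measurableSet_Ioo)
  refine ContinuousOn.mul ?_ (Complex.continuous_ofReal.comp_continuousOn
    (continuousOn_const.mul lkW_meas))
  exact ContinuousOn.div continuousOn_const
    ((continuous_const.sub (Complex.continuous_ofReal.mul continuous_const)).continuousOn)
    (fun x hx => hz x ⟨hx.1.le, hx.2.le⟩)

theorem lkD_meas {p : ℝ} (z : ℂ) (hz : ∀ x ∈ Icc (0:ℝ) 1, 1 - (x:ℂ) * z ≠ 0) :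
    AEStronglyMeasurable (lkD p z) (volume.restrict (Ioo (0:ℝ) 1)) := by
  refine (ContinuousOn.aestronglyMeasurable ?_ measurableSet_Ioo)
  refine ContinuousOn.div (Complex.continuous_ofReal.comp_continuousOn
    (continuousOn_const.mul lkW_meas)) ?_ ?_
  · exact ((continuous_const.sub (Complex.continuous_ofReal.mul continuous_const)).pow 2).continuousOn
  · exact fun x hx => pow_ne_zero 2 (hz x ⟨hx.1.le, hx.2.le⟩)

theorem lkF_integrable {p : ℝ} (hp : p ∈ Ioo (0:ℝ) 1) (z : ℂ)
    (c : ℝ) (hc : 0 < c) (hcb : ∀ x ∈ Icc (0:ℝ) 1, c ≤ ‖1 - (x:ℂ) * z‖) :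
    IntegrableOn (lkF p z) (Ioo (0:ℝ) 1) := by
  have hz : ∀ x ∈ Icc (0:ℝ) 1, 1 - (x:ℂ) * z ≠ 0 := fun x hx h => by
    have := hcb x hx; rw [h, norm_zero] at this; linarith
  refine Integrable.mono ((lkW_integrable hp).const_mul (‖z‖/c * lkS p)) (lkF_meas z hz) ?_
  rw [ae_restrict_iff' measurableSet_Ioo]
  filter_upwards with x hx
  have hxI : x ∈ Icc (0:ℝ) 1 := ⟨hx.1.le, hx.2.le⟩
  have hW0 := lkW_nonneg (p := p) hxI
  have hS := (lkS_pos hp).le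
  rw [lkF, norm_mul, Complex.norm_real, Real.norm_eq_abs,
    _root_.abs_of_nonneg (mul_nonneg hS hW0), Real.norm_eq_abs,
    _root_.abs_of_nonneg (by positivity), norm_div]
  calc ‖z‖/‖1 - x*z‖ * (lkS p * lkW p x) ≤ ‖z‖/c * (lkS p * lkW p x) := by
        gcongr
        exact hcb x hxI
    _ = ‖z‖/c * lkS p * lkW p x := by ring

theorem lkD_integrable {p : ℝ} (hp : p ∈ Ioo (0:ℝ) 1) (z : ℂ)
    (c : ℝ) (hc : 0 < c) (hcb : ∀ x ∈ Icc (0:ℝ) 1, c ≤ ‖1 - (x:ℂ) * z‖) :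
    IntegrableOn (lkD p z) (Ioo (0:ℝ) 1) := by
  have hz : ∀ x ∈ Icc (0:ℝ) 1, 1 - (x:ℂ) * z ≠ 0 := fun x hx h => by
    have := hcb x hx; rw [h, norm_zero] at this; linarith
  refine Integrable.mono ((lkW_integrable hp).const_mul (lkS p / c^2)) (lkD_meas z hz) ?_
  rw [ae_restrict_iff' measurableSet_Ioo]
  filter_upwards with x hx
  have hxI : x ∈ Icc (0:ℝ) 1 := ⟨hx.1.le, hx.2.le⟩
  have hW0 := lkW_nonneg (p := p) hxI
  have hS := (lkS_pos hp).le
  rw [lkD, norm_div, norm_pow, Complex.norm_real, Real.norm_eq_abs,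
    _root_.abs_of_nonneg (mul_nonneg hS hW0), Real.norm_eq_abs,
    _root_.abs_of_nonneg (by positivity)]
  calc lkS p * lkW p x / ‖1 - x*z‖^2 ≤ lkS p * lkW p x / c^2 := by
        gcongr
        exact hcb x hxI
    _ = lkS p / c^2 * lkW p x := by ring

theorem lk_hasDerivAt {p : ℝ} (hp : p ∈ Ioo (0:ℝ) 1) (z₀ : ℂ) (hz₀ : z₀ ∈ lkΩ) :
    HasDerivAt (lkG p) (∫ x in Ioo (0:ℝ) 1, lkD p z₀ x) z₀ := by
  obtain ⟨ε, hε, c, hc, hbd⟩ := lk_bound z₀ hz₀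
  have hball : ∀ z ∈ ball z₀ ε, ∀ x ∈ Icc (0:ℝ) 1, c ≤ ‖1 - (x:ℂ) * z‖ :=
    fun z hzb x hx => hbd z (ball_subset_closedBall hzb) x hx
  have hzne : ∀ z ∈ ball z₀ ε, ∀ x ∈ Icc (0:ℝ) 1, 1 - (x:ℂ) * z ≠ 0 := by
    intro z hzb x hx h
    have := hball z hzb x hx
    rw [h] at this; simp at this; linarith
  have h0 : z₀ ∈ ball z₀ ε := mem_ball_self hε
  have main := hasDerivAt_integral_of_dominated_loc_of_deriv_le (F := fun z x => lkF p z x)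
    (F' := fun z x => lkD p z x) (x₀ := z₀)
    (μ := volume.restrict (Ioo (0:ℝ) 1)) (bound := fun x => lkS p / c^2 * lkW p x)
    (s := ball z₀ ε) (ball_mem_nhds z₀ hε) ?_ ?_ ?_ ?_ ?_ ?_
  · exact main.2
  · filter_upwards [ball_mem_nhds z₀ hε] with z hzb
    exact lkF_meas z (hzne z hzb)
  · exact lkF_integrable hp z₀ c hc (fun x hx => hbd z₀ (mem_closedBall_self hε.le) x hx)
  · exact lkD_meas z₀ (hzne z₀ h0)
  · rw [ae_restrict_iff' measurableSet_Ioo]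
    filter_upwards with x hx
    intro z hzb
    have hxI : x ∈ Icc (0:ℝ) 1 := ⟨hx.1.le, hx.2.le⟩
    have hW0 := lkW_nonneg (p := p) hxI
    have hS := (lkS_pos hp).le
    rw [lkD, norm_div, norm_pow, Complex.norm_real, Real.norm_eq_abs,
      _root_.abs_of_nonneg (mul_nonneg hS hW0)]
    calc lkS p * lkW p x / ‖1 - (x:ℂ)*z‖^2 ≤ lkS p * lkW p x / c^2 := by
          gcongr
          exact hball z hzb x hxI
      _ = lkS p / c^2 * lkW p x := by ring
  · exact ((lkW_integrable hp).const_mul _)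
  · rw [ae_restrict_iff' measurableSet_Ioo]
    filter_upwards with x hx
    intro z hzb
    have hxI : x ∈ Icc (0:ℝ) 1 := ⟨hx.1.le, hx.2.le⟩
    have hne := hzne z hzb x hxI
    have hu : HasDerivAt (fun w : ℂ => w / (1 - x*w)) (1/(1 - x*z)^2) z := by
      have h1 : HasDerivAt (fun w : ℂ => w) 1 z := hasDerivAt_id z
      have h2 : HasDerivAt (fun w : ℂ => 1 - (x:ℂ)*w) (-(x:ℂ)) z := by
        simpa using ((hasDerivAt_id z).const_mul (x:ℂ)).const_sub 1
      have := h1.div h2 hne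
      refine this.congr_deriv ?_
      symm
      field_simp
      ring
    have := hu.mul_const ((lkS p * lkW p x : ℝ) : ℂ)
    refine this.congr_deriv ?_
    symm
    rw [lkD]
    field_simp

theorem lkBW_integrable {p : ℝ} (hp : p ∈ Ioo (0:ℝ) 1) (z : ℂ)
    (hz : ∀ x ∈ Icc (0:ℝ) 1, 1 - (x:ℂ) * z ≠ 0)
    (c : ℝ) (hc : 0 < c) (hcb : ∀ x ∈ Icc (0:ℝ) 1, c ≤ ‖1 - (x:ℂ) * z‖) :
    IntegrableOn (fun x : ℝ =>
      ((1 - z)/(1 - x*z)^2 + p * z/(1 - x*z) - 1) * ((lkW p x : ℝ) : ℂ)) (Ioo (0:ℝ) 1) := by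
  obtain ⟨hp0, hp1⟩ := hp
  set M : ℝ := ‖1-z‖/c^2 + p*‖z‖/c + 1 with hM
  refine Integrable.mono ((lkW_integrable ⟨hp0, hp1⟩).const_mul M) ?_ ?_
  · refine (ContinuousOn.aestronglyMeasurable ?_ measurableSet_Ioo)
    refine ContinuousOn.mul ?_ (Complex.continuous_ofReal.comp_continuousOn lkW_meas)
    refine ContinuousOn.sub (ContinuousOn.add ?_ ?_) continuousOn_const
    · exact ContinuousOn.div continuousOn_const
        (((continuous_const.sub (Complex.continuous_ofReal.mul continuous_const)).pow 2).continuousOn)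
        (fun x hx => pow_ne_zero 2 (hz x ⟨hx.1.le, hx.2.le⟩))
    · exact ContinuousOn.div continuousOn_const
        ((continuous_const.sub (Complex.continuous_ofReal.mul continuous_const)).continuousOn)
        (fun x hx => hz x ⟨hx.1.le, hx.2.le⟩)
  · rw [ae_restrict_iff' measurableSet_Ioo]
    filter_upwards with x hx
    have hxI : x ∈ Icc (0:ℝ) 1 := ⟨hx.1.le, hx.2.le⟩
    have hcx := hcb x hxI
    have hW0 := lkW_nonneg (p := p) hxI
    rw [norm_mul, Complex.norm_real, Real.norm_eq_abs, _root_.abs_of_nonneg hW0,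
      Real.norm_eq_abs, _root_.abs_of_nonneg (mul_nonneg (by positivity) hW0)]
    refine mul_le_mul_of_nonneg_right ?_ hW0
    calc ‖(1 - z)/(1 - x*z)^2 + p * z/(1 - x*z) - 1‖
        ≤ ‖(1 - z)/(1 - x*z)^2 + p * z/(1 - x*z)‖ + ‖(1:ℂ)‖ := norm_sub_le _ _
      _ ≤ ‖(1 - z)/(1 - x*z)^2‖ + ‖(p:ℂ) * z/(1 - x*z)‖ + ‖(1:ℂ)‖ := by
          gcongr; exact norm_add_le _ _
      _ ≤ ‖1-z‖/c^2 + p*‖z‖/c + 1 := by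
          have h2 : ‖(1 - z)/(1 - x*z)^2‖ ≤ ‖1-z‖/c^2 := by
            rw [norm_div, norm_pow]; gcongr
          have h3 : ‖(p:ℂ) * z/(1 - x*z)‖ ≤ p*‖z‖/c := by
            rw [norm_div, norm_mul, Complex.norm_real, Real.norm_eq_abs,
              _root_.abs_of_pos hp0]
            gcongr
          rw [norm_one]; linarith

theorem lk_sin_ne {p : ℝ} (hp : p ∈ Ioo (0:ℝ) 1) : Real.sin (p * Real.pi) ≠ 0 := by
  have h := lkS_pos hp
  rw [lkS] at h
  intro h0; rw [h0] at h; simp at h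

theorem lk_ode {p : ℝ} (hp : p ∈ Ioo (0:ℝ) 1) (z : ℂ) (hz : z ∈ lkΩ) :
    (1 - z) * (∫ x in Ioo (0:ℝ) 1, lkD p z x) = p * (1 - lkG p z) := by
  obtain ⟨ε, hε, c, hc, hbd⟩ := lk_bound z hz
  have hcb : ∀ x ∈ Icc (0:ℝ) 1, c ≤ ‖1 - (x:ℂ) * z‖ :=
    fun x hx => hbd z (mem_closedBall_self hε.le) x hx
  have hzz : ∀ x ∈ Icc (0:ℝ) 1, 1 - (x:ℂ) * z ≠ 0 := fun x hx h => by
    have := hcb x hx; rw [h, norm_zero] at this; linarith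
  have hD := lkD_integrable hp z c hc hcb
  have hF := lkF_integrable hp z c hc hcb
  have hBW := lkBW_integrable hp z hzz c hc hcb
  have hWc : IntegrableOn (fun x : ℝ => ((lkW p x : ℝ):ℂ)) (Ioo (0:ℝ) 1) :=
    (lkW_integrable hp).ofReal
  have key : ∫ x in Ioo (0:ℝ) 1, ((1-z) * lkD p z x + (p:ℂ) * lkF p z x)
      = ((lkS p : ℝ) : ℂ) * ((p : ℂ) * Real.pi / Real.sin (p * Real.pi)) := by
    have e : EqOn (fun x : ℝ => (1-z) * lkD p z x + (p:ℂ) * lkF p z x)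
        (fun x : ℝ => ((lkS p : ℝ):ℂ) *
            (((1 - z)/(1 - x*z)^2 + p * z/(1 - x*z) - 1) * ((lkW p x : ℝ) : ℂ))
          + ((lkS p : ℝ):ℂ) * ((lkW p x : ℝ):ℂ)) (Ioo (0:ℝ) 1) := by
      intro x hx
      simp only [lkD, lkF]
      have hne := hzz x ⟨hx.1.le, hx.2.le⟩
      push_cast
      field_simp
      ring
    rw [setIntegral_congr_fun measurableSet_Ioo e,
      integral_add (hBW.const_mul _) (hWc.const_mul _),
      integral_const_mul, integral_const_mul,
      lk_ftc hp z hzz c hc hcb, lk_beta hp, mul_zero, zero_add]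
  rw [integral_add (hD.const_mul _) (hF.const_mul _),
    integral_const_mul, integral_const_mul] at key
  have hs : ((lkS p : ℝ) : ℂ) * ((p : ℂ) * Real.pi / Real.sin (p * Real.pi)) = (p:ℂ) := by
    rw [lkS]
    have h1 : (Real.sin (p * Real.pi) : ℂ) ≠ 0 := by
      exact_mod_cast lk_sin_ne hp
    have h2 : ((Real.pi : ℝ) : ℂ) ≠ 0 := by exact_mod_cast Real.pi_ne_zero
    push_cast at h1 ⊢
    field_simp
  rw [hs] at key
  rw [lkG]
  linear_combination key

theorem lk_slit {w : ℂ} (hw : w ∈ lkΩ) : 1 - w ∈ Complex.slitPlane := by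
  rw [Complex.mem_slitPlane_iff]
  rcases hw with hb | him
  · left
    rw [mem_ball, dist_zero_right] at hb
    have := Complex.abs_re_le_norm w
    simp only [Complex.sub_re, Complex.one_re]
    have := abs_le.mp this
    linarith [this.2]
  · right
    simp only [Complex.sub_im, Complex.one_im]
    simpa using him

theorem lk_hconst {p : ℝ} (hp : p ∈ Ioo (0:ℝ) 1) (w : ℂ) (hw : w ∈ lkΩ) :
    HasDerivAt (fun w => (1 - lkG p w) * (1-w) ^ (-(p:ℂ))) 0 w := by
  have hG := lk_hasDerivAt hp w hw
  have hode := lk_ode hp w hw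
  have hslit := lk_slit hw
  have hw1 : (1:ℂ) - w ≠ 0 := Complex.slitPlane_ne_zero hslit
  have hq : HasDerivAt (fun w : ℂ => (1-w) ^ (-(p:ℂ)))
      ((-(p:ℂ)) * (1-w) ^ (-(p:ℂ) - 1) * (-1)) w :=
    HasDerivAt.cpow_const ((hasDerivAt_id w).const_sub 1) hslit
  have hh := (hG.const_sub 1).mul hq
  have hsplit : (1-w) ^ (-(p:ℂ)) = (1-w) ^ (-(p:ℂ) - 1) * (1-w) := by
    have h := Complex.cpow_add (-(p:ℂ) - 1) 1 hw1
    rw [Complex.cpow_one] at h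
    rw [← h]
    congr 1
    ring
  refine hh.congr_deriv ?_
  symm
  rw [hsplit]
  linear_combination ((1-w) ^ (-(p:ℂ) - 1)) * hode

theorem lk_main {p : ℝ} (hp : p ∈ Ioo (0:ℝ) 1) (z : ℂ) (hz : z.im ≠ 0) :
    lkG p z = 1 - (1 - z) ^ (p : ℂ) := by
  set h : ℂ → ℂ := fun w => (1 - lkG p w) * (1-w) ^ (-(p:ℂ)) with hh
  have hball : ∀ w ∈ ball (0:ℂ) 1, h w = h 0 := by
    intro w hw
    have := (convex_ball (0:ℂ) 1).norm_image_sub_le_of_norm_hasDerivWithin_le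
      (f := h) (f' := fun _ => (0:ℂ)) (C := 0)
      (fun y hy => (lk_hconst hp y (Or.inl hy)).hasDerivWithinAt)
      (fun y _ => by simp) (mem_ball_self one_pos) hw
    rw [zero_mul] at this
    have := norm_le_zero_iff.mp this
    exact sub_eq_zero.mp this
  have hhz : h z = h 0 := by
    by_cases him : 0 < z.im
    · set S : Set ℂ := {w | 0 < w.im} with hS
      have hconv : Convex ℝ S := convex_halfSpace_im_gt 0
      have hw₀S : Complex.I/2 ∈ S := by simp [hS, Complex.div_im]
      have hw₀b : Complex.I/2 ∈ ball (0:ℂ) 1 := by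
        rw [mem_ball, dist_zero_right]
        simp [norm_div]
        norm_num
      have hzS : z ∈ S := him
      have key := hconv.norm_image_sub_le_of_norm_hasDerivWithin_le
        (f := h) (f' := fun _ => (0:ℂ)) (C := 0)
        (fun y hy => (lk_hconst hp y (Or.inr (ne_of_gt hy))).hasDerivWithinAt)
        (fun y _ => by simp) hw₀S hzS
      rw [zero_mul] at key
      have := sub_eq_zero.mp (norm_le_zero_iff.mp key)
      rw [this]
      exact hball _ hw₀b
    · have him' : z.im < 0 := lt_of_le_of_ne (not_lt.mp him) hz
      set S : Set ℂ := {w | w.im < 0} with hS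
      have hconv : Convex ℝ S := convex_halfSpace_im_lt 0
      have hw₀S : -(Complex.I/2) ∈ S := by simp [hS, Complex.div_im]
      have hw₀b : -(Complex.I/2) ∈ ball (0:ℂ) 1 := by
        rw [mem_ball, dist_zero_right]
        simp [norm_div]
        norm_num
      have hzS : z ∈ S := him'
      have key := hconv.norm_image_sub_le_of_norm_hasDerivWithin_le
        (f := h) (f' := fun _ => (0:ℂ)) (C := 0)
        (fun y hy => (lk_hconst hp y (Or.inr (ne_of_lt hy))).hasDerivWithinAt)
        (fun y _ => by simp) hw₀S hzS
      rw [zero_mul] at key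
      have := sub_eq_zero.mp (norm_le_zero_iff.mp key)
      rw [this]
      exact hball _ hw₀b
  have hG0 : lkG p 0 = 0 := by
    simp [lkG, lkF]
  have h0 : h 0 = 1 := by
    simp [hh, hG0]
  rw [h0] at hhz
  have h1z : (1:ℂ) - z ≠ 0 := by
    intro h'
    have : (1 - z).im = 0 := by rw [h']; simp
    simp only [Complex.sub_im, Complex.one_im] at this
    apply hz
    linarith
  have hcne : (1 - z) ^ (p:ℂ) ≠ 0 := by
    rw [Ne, Complex.cpow_eq_zero_iff]
    tauto
  rw [hh] at hhz
  simp only [Complex.cpow_neg] at hhz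
  field_simp at hhz
  linear_combination -hhz

end LKsection

/-- The free Lévy–Khintchine representation of `1 - (1-z)^p`. -/
theorem stmt10 (p : ℝ) (hp : p ∈ Set.Ioo (0 : ℝ) 1) (z : ℂ) (hz : z.im ≠ 0) :
    1 - (1 - z) ^ (p : ℂ)
      = ∫ x in Set.Ioo (0 : ℝ) 1,
          (1 / (1 - (x : ℂ) * z) - 1) *
            ((Real.sin (p * Real.pi) / (Real.pi * x) * ((1 - x) / x) ^ p : ℝ) : ℂ) := by
  rw [← lk_main hp z hz, lkG]
  refine (setIntegral_congr_fun measurableSet_Ioo ?_).symm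
  intro x hx
  obtain ⟨hx0, hx1⟩ := hx
  have hne : 1 - (x:ℂ) * z ≠ 0 := lk_ne z (Or.inr hz) ⟨hx0.le, hx1.le⟩
  have hxp : (0:ℝ) < x ^ p := Real.rpow_pos_of_pos hx0 p
  have hreal : Real.sin (p * Real.pi) / (Real.pi * x) * ((1 - x) / x) ^ p
      = lkS p * lkW p x / x := by
    rw [Real.div_rpow (by linarith) hx0.le, lkS, lkW, Real.rpow_neg hx0.le]
    field_simp [hx0.ne', Real.pi_ne_zero, hxp.ne']
  dsimp only
  rw [hreal, lkF]
  have hxc : (x:ℂ) ≠ 0 := by exact_mod_cast hx0.ne'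
  push_cast
  field_simp
  ring
end

section
/- For every p ∈ (0,1) and z ∈ ℂ⁻, the identity p z (1 - z)^{p-1} = p sin((1-p)π) ∫_{(0,1)} (1/(1 - xz) - 1) · 1/(π x^{1+p} (1 - x)^{1-p}) dx holds, with principal branch powers. -/
open MeasureTheory Set

-- real substitution lemma
lemma real_case (p : ℝ) (hp : p ∈ Set.Ioo (0:ℝ) 1) {s : ℝ} (hs : s < 0) :
    ∫ x in Ioo (0:ℝ) 1, (x ^ (-p) * (1-x) ^ (p-1)) / (1 - x*s)
      = (1-s) ^ (p-1) * ∫ y in Ioo (0:ℝ) 1, y ^ (-p) * (1-y) ^ (p-1) := by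
  have hA : (0:ℝ) < 1 - s := by linarith
  set φ : ℝ → ℝ := fun y => y / (1 - s + y*s) with hφ
  have hD : ∀ y ∈ Icc (0:ℝ) 1, 0 < 1 - s + y*s := by
    intro y hy
    nlinarith [hy.1, hy.2]
  have himg : φ '' Ioo 0 1 = Ioo 0 1 := by
    ext x
    constructor
    · rintro ⟨y, hy, rfl⟩
      have hDy := hD y (Ioo_subset_Icc_self hy)
      constructor
      · exact div_pos hy.1 hDy
      · rw [div_lt_one hDy]; nlinarith [hy.1, hy.2]
    · intro hx
      have hds : 0 < 1 - x*s := by nlinarith [hx.1, hx.2]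
      refine ⟨x*(1-s)/(1-x*s), ⟨div_pos (mul_pos hx.1 hA) hds, ?_⟩, ?_⟩
      · rw [div_lt_one hds]; nlinarith [hx.2]
      · simp only [hφ]
        rw [div_eq_iff (hD _ ⟨le_of_lt (div_pos (mul_pos hx.1 hA) hds),
            le_of_lt (by rw [div_lt_one hds]; nlinarith [hx.2])⟩).ne']
        field_simp
        try ring
        try tauto
  have hinj : InjOn φ (Ioo 0 1) := by
    intro a ha b hb h
    have hDa := hD a (Ioo_subset_Icc_self ha)
    have hDb := hD b (Ioo_subset_Icc_self hb)
    simp only [hφ] at h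
    rw [div_eq_div_iff hDa.ne' hDb.ne'] at h
    nlinarith [h]
  have hderiv : ∀ y ∈ Ioo (0:ℝ) 1, HasDerivWithinAt φ ((1-s)/(1 - s + y*s)^2) (Ioo 0 1) y := by
    intro y hy
    have hDy := hD y (Ioo_subset_Icc_self hy)
    have h1 : HasDerivAt (fun y : ℝ => 1 - s + y*s) s y := by
      simpa using ((hasDerivAt_id y).mul_const s).const_add (1-s)
    have := (hasDerivAt_id y).div h1 hDy.ne'
    refine HasDerivWithinAt.congr_deriv this.hasDerivWithinAt ?_
    show (1 * (1 - s + y*s) - y * s) / (1 - s + y*s)^2 = _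
    ring
  calc ∫ x in Ioo (0:ℝ) 1, (x ^ (-p) * (1-x) ^ (p-1)) / (1 - x*s)
      = ∫ x in φ '' Ioo 0 1, (x ^ (-p) * (1-x) ^ (p-1)) / (1 - x*s) := by rw [himg]
    _ = ∫ y in Ioo (0:ℝ) 1, |((1-s)/(1 - s + y*s)^2)| •
          ((φ y ^ (-p) * (1-φ y) ^ (p-1)) / (1 - φ y*s)) :=
        integral_image_eq_integral_abs_deriv_smul measurableSet_Ioo hderiv hinj _
    _ = ∫ y in Ioo (0:ℝ) 1, (1-s) ^ (p-1) * (y ^ (-p) * (1-y) ^ (p-1)) := by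
        apply setIntegral_congr_fun measurableSet_Ioo
        intro y hy
        dsimp only
        have hy0 := hy.1
        have hy1 : 0 < 1 - y := by linarith [hy.2]
        have hDy0 := hD y (Ioo_subset_Icc_self hy)
        simp only [hφ]
        obtain ⟨D, hDdef⟩ : ∃ D, 1 - s + y*s = D := ⟨_, rfl⟩
        rw [hDdef]
        have hDy : 0 < D := hDdef ▸ hDy0
        have h1y : 1 - y/D = (1-s)*(1-y)/D := by
          rw [← hDdef]; field_simp; ring
        have h1s : 1 - y/D*s = (1-s)/D := by
          rw [← hDdef]; field_simp; ring
        have e1 : (y/D) ^ (-p) = y ^ (-p) * D ^ p := by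
          rw [Real.div_rpow hy0.le hDy.le, div_eq_mul_inv, ← Real.rpow_neg hDy.le, neg_neg]
        have e2 : ((1-s)*(1-y)/D) ^ (p-1)
            = (1-s) ^ (p-1) * (1-y) ^ (p-1) * D ^ (1-p) := by
          rw [Real.div_rpow (by positivity) hDy.le, Real.mul_rpow hA.le hy1.le,
            div_eq_mul_inv, ← Real.rpow_neg hDy.le, neg_sub]
        have e3 : D ^ p * D ^ (1-p) = D := by
          rw [← Real.rpow_add hDy]; norm_num
        have e4 : (y ^ (-p) * D ^ p) * ((1-s) ^ (p-1) * (1-y) ^ (p-1) * D ^ (1-p))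
            = y ^ (-p) * (1-y) ^ (p-1) * (1-s) ^ (p-1) * D := by
          linear_combination (y ^ (-p) * (1-s) ^ (p-1) * (1-y) ^ (p-1)) * e3
        rw [smul_eq_mul, h1y, h1s, e1, e2, abs_of_pos (by positivity : (0:ℝ) < (1-s)/D^2),
          e4, div_div_eq_mul_div, div_mul_div_comm,
          div_eq_iff (by positivity : (0:ℝ) < D^2*(1-s)).ne']
        ring
    _ = (1-s) ^ (p-1) * ∫ y in Ioo (0:ℝ) 1, y ^ (-p) * (1-y) ^ (p-1) := by
        simp_rw [← smul_eq_mul, integral_smul]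
open MeasureTheory Set Real

lemma myCastEq (p : ℝ) (hp : p ∈ Set.Ioo (0:ℝ) 1) :
    ∀ x ∈ Ioo (0:ℝ) 1, (x:ℂ) ^ (((1:ℂ)-p) - 1) * (1 - (x:ℂ)) ^ ((p:ℂ) - 1)
      = ((x ^ (-p) * (1-x) ^ (p-1) : ℝ) : ℂ) := by
  intro x hx
  have h1 : ((1:ℂ)-p) - 1 = ((-p:ℝ):ℂ) := by push_cast; ring
  have h2 : (p:ℂ) - 1 = ((p-1:ℝ):ℂ) := by push_cast; ring
  have h3 : 1 - (x:ℂ) = ((1-x:ℝ):ℂ) := by push_cast; ring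
  rw [h1, h2, h3, ← Complex.ofReal_cpow hx.1.le, ← Complex.ofReal_cpow (by linarith [hx.2] : (0:ℝ) ≤ 1-x),
    ← Complex.ofReal_mul]

lemma w_intC (p : ℝ) (hp : p ∈ Set.Ioo (0:ℝ) 1) :
    IntegrableOn (fun x : ℝ => ((x ^ (-p) * (1-x) ^ (p-1) : ℝ) : ℂ)) (Ioo 0 1) volume := by
  have h := Complex.betaIntegral_convergent (u := (1:ℂ)-p) (v := (p:ℂ))
    (by simp [hp.2]) (by simp [hp.1])
  have h2 : IntegrableOn (fun x : ℝ => (x:ℂ) ^ (((1:ℂ)-p) - 1) * (1 - (x:ℂ)) ^ ((p:ℂ) - 1))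
      (Ioo 0 1) volume :=
    ((intervalIntegrable_iff_integrableOn_Ioc_of_le zero_le_one).mp h).mono_set Ioo_subset_Ioc_self
  exact h2.congr_fun (myCastEq p hp) measurableSet_Ioo

lemma w_int (p : ℝ) (hp : p ∈ Set.Ioo (0:ℝ) 1) :
    IntegrableOn (fun x : ℝ => x ^ (-p) * (1-x) ^ (p-1)) (Ioo 0 1) volume := by
  have := (w_intC p hp).re
  simpa [IntegrableOn] using this

lemma B_val (p : ℝ) (hp : p ∈ Set.Ioo (0:ℝ) 1) :
    ((∫ x in Ioo (0:ℝ) 1, x ^ (-p) * (1-x) ^ (p-1) : ℝ) : ℂ)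
      = ↑Real.pi / ↑(Real.sin ((1-p)*Real.pi)) := by
  have hBC : ((∫ x in Ioo (0:ℝ) 1, x ^ (-p) * (1-x) ^ (p-1) : ℝ) : ℂ)
      = Complex.betaIntegral ((1:ℂ)-p) (p:ℂ) := by
    have h0 : ((∫ x in Ioo (0:ℝ) 1, x ^ (-p) * (1-x) ^ (p-1) : ℝ) : ℂ)
        = ∫ x in Ioo (0:ℝ) 1, ((x ^ (-p) * (1-x) ^ (p-1) : ℝ) : ℂ) :=
      (integral_ofReal (𝕜 := ℂ)).symm
    rw [h0, Complex.betaIntegral, intervalIntegral.integral_of_le zero_le_one,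
      integral_Ioc_eq_integral_Ioo]
    exact setIntegral_congr_fun measurableSet_Ioo (fun x hx => (myCastEq p hp x hx).symm)
  rw [hBC]
  have h1 := Complex.Gamma_mul_Gamma_eq_betaIntegral
    (s := (1:ℂ)-p) (t := (p:ℂ)) (by simp [hp.2]) (by simp [hp.1])
  have h2 := Complex.Gamma_mul_Gamma_one_sub (p:ℂ)
  have h3 : (1:ℂ) - p + p = 1 := by ring
  rw [h3, Complex.Gamma_one, one_mul] at h1
  rw [← h1, mul_comm, h2]
  congr 1
  rw [show (1-p)*Real.pi = Real.pi - Real.pi * p by ring, Real.sin_pi_sub,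
    ← Complex.ofReal_mul, ← Complex.ofReal_sin]
open MeasureTheory Set Metric

noncomputable section
def myU : Set ℂ := {z | z.re < 0} ∪ {z | z.im < 0}

lemma myU_open : IsOpen myU :=
  (isOpen_lt Complex.continuous_re continuous_const).union
    (isOpen_lt Complex.continuous_im continuous_const)

lemma denom_ne {z : ℂ} (hz : z ∈ myU) {x : ℝ} (hx : x ∈ Icc (0:ℝ) 1) :
    (1 : ℂ) - x*z ≠ 0 := by
  intro h
  rcases hz with hz | hz
  · have h1 : z.re < 0 := hz
    have := congrArg Complex.re h
    simp [Complex.sub_re, Complex.mul_re] at this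
    nlinarith [mul_nonneg hx.1 (neg_nonneg.mpr h1.le)]
  · have h1 : z.im < 0 := hz
    rcases eq_or_lt_of_le hx.1 with h0 | h0
    · rw [← h0] at h; simp at h
    · have h2 := congrArg Complex.im h
      simp [Complex.sub_im, Complex.mul_im] at h2
      rcases h2 with h3 | h3
      · exact h0.ne' h3
      · exact h1.ne h3
end

section
variable (p : ℝ)

lemma contOn_w : ContinuousOn (fun x : ℝ => x ^ (-p) * (1-x) ^ (p-1)) (Ioo 0 1) := by
  apply ContinuousOn.mul
  · exact continuousOn_id.rpow_const (fun x hx => Or.inl (ne_of_gt hx.1))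
  · apply ContinuousOn.rpow_const (continuousOn_const.sub continuousOn_id)
    intro x hx
    left
    show (1:ℝ) - x ≠ 0
    intro hcon
    nlinarith [hx.2]

lemma contOn_c : ContinuousOn (fun x : ℝ => ((x ^ (-p) * (1-x) ^ (p-1) : ℝ) : ℂ)) (Ioo 0 1) :=
  Complex.continuous_ofReal.comp_continuousOn (contOn_w p)

end

set_option maxHeartbeats 1000000 in
lemma J_diff (p : ℝ) (hp : p ∈ Set.Ioo (0:ℝ) 1) :
    DifferentiableOn ℂ
      (fun z => ∫ x in Ioo (0:ℝ) 1, ((x ^ (-p) * (1-x) ^ (p-1) : ℝ) : ℂ) / (1 - x*z)) myU := by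
  intro z₀ hz₀
  obtain ⟨ε, hε, hball⟩ : ∃ ε > 0, closedBall z₀ ε ⊆ myU := by
    obtain ⟨ε, hε, h⟩ := Metric.isOpen_iff.mp myU_open z₀ hz₀
    exact ⟨ε/2, by positivity, (Metric.closedBall_subset_ball (by linarith)).trans h⟩
  have hz₀U : z₀ ∈ myU := hz₀
  -- uniform lower bound on the denominator
  have hcomp : IsCompact ((Icc (0:ℝ) 1) ×ˢ closedBall z₀ ε) :=
    isCompact_Icc.prod (isCompact_closedBall _ _)
  have hcont : Continuous (fun q : ℝ × ℂ => ‖(1:ℂ) - q.1*q.2‖) :=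
    (continuous_const.sub ((Complex.continuous_ofReal.comp continuous_fst).mul
      continuous_snd)).norm
  obtain ⟨q₀, hq₀, hmin⟩ := hcomp.exists_isMinOn
    ⟨(0, z₀), by simp [hε.le]⟩ hcont.continuousOn
  rw [isMinOn_iff] at hmin
  set δ := ‖(1:ℂ) - q₀.1*q₀.2‖ with hδdef
  have hδpos : 0 < δ :=
    norm_pos_iff.mpr (denom_ne (hball hq₀.2) hq₀.1)
  have hδ : ∀ x ∈ Icc (0:ℝ) 1, ∀ w ∈ closedBall z₀ ε, δ ≤ ‖(1:ℂ) - x*w‖ := by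
    intro x hx w hw
    exact hmin (x, w) ⟨hx, hw⟩
  set w : ℝ → ℝ := fun x => x ^ (-p) * (1-x) ^ (p-1) with hwdef
  set c : ℝ → ℂ := fun x => ((w x : ℝ) : ℂ) with hcdef
  have hwint : IntegrableOn w (Ioo 0 1) volume := w_int p hp
  have hmeasF : ∀ z ∈ myU, AEStronglyMeasurable (fun x : ℝ => c x / (1 - x*z))
      (volume.restrict (Ioo 0 1)) := by
    intro z hzU
    refine ContinuousOn.aestronglyMeasurable ?_ measurableSet_Ioo
    exact (contOn_c p).div
      ((continuous_const.sub (Complex.continuous_ofReal.mul continuous_const)).continuousOn)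
      (fun x hx => denom_ne hzU (Ioo_subset_Icc_self hx))
  have key := hasDerivAt_integral_of_dominated_loc_of_lip
    (F := fun (z : ℂ) (x : ℝ) => c x / (1 - x*z))
    (F' := fun x : ℝ => c x * x / (1 - x*z₀)^2)
    (x₀ := z₀) (bound := fun x => |w x| * (δ*δ)⁻¹)
    (μ := volume.restrict (Ioo 0 1)) (s := ball z₀ ε) (ball_mem_nhds z₀ hε)
    ?_ ?_ ?_ ?_ ?_ ?_
  · exact key.2.differentiableAt.differentiableWithinAt
  · -- measurability of F z
    refine Filter.eventually_of_mem (Metric.ball_mem_nhds z₀ hε) (fun z hzb => ?_)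
    exact hmeasF z (hball (ball_subset_closedBall hzb))
  · -- integrability of F z₀
    refine Integrable.mono' ((hwint.abs).mul_const δ⁻¹) (hmeasF z₀ hz₀U) ?_
    rw [ae_restrict_iff' measurableSet_Ioo]
    refine Filter.Eventually.of_forall (fun x hx => ?_)
    have h1 : δ ≤ ‖(1:ℂ) - x*z₀‖ :=
      hδ x (Ioo_subset_Icc_self hx) z₀ (mem_closedBall_self hε.le)
    rw [norm_div, hcdef]
    simp only [Complex.norm_real]
    calc |w x| / ‖(1:ℂ) - x*z₀‖ ≤ |w x| / δ := by gcongr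
      _ = |w x| * δ⁻¹ := div_eq_mul_inv _ _
  · -- measurability of F'
    refine ContinuousOn.aestronglyMeasurable ?_ measurableSet_Ioo
    exact ((contOn_c p).mul (Complex.continuous_ofReal.continuousOn)).div
      (((continuous_const.sub (Complex.continuous_ofReal.mul continuous_const)).pow 2).continuousOn)
      (fun x hx => pow_ne_zero 2 (denom_ne hz₀U (Ioo_subset_Icc_self hx)))
  · -- Lipschitz bound
    rw [ae_restrict_iff' measurableSet_Ioo]
    refine Filter.Eventually.of_forall (fun x hx => ?_)
    apply LipschitzOnWith.of_dist_le_mul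
    intro z hzb v hvb
    have hxI := Ioo_subset_Icc_self hx
    have hz1 : δ ≤ ‖(1:ℂ) - x*z‖ := hδ x hxI z (ball_subset_closedBall hzb)
    have hv1 : δ ≤ ‖(1:ℂ) - x*v‖ := hδ x hxI v (ball_subset_closedBall hvb)
    have hz0 : (1:ℂ) - x*z ≠ 0 := norm_pos_iff.mp (hδpos.trans_le hz1)
    have hv0 : (1:ℂ) - x*v ≠ 0 := norm_pos_iff.mp (hδpos.trans_le hv1)
    have keyq : c x / (1 - x*z) - c x / (1 - x*v)
        = c x * x * (z - v) / ((1 - x*z) * (1 - x*v)) := by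
      field_simp
      ring
    rw [dist_eq_norm, keyq, norm_div, norm_mul, norm_mul, norm_mul, hcdef]
    simp only [Complex.norm_real, Real.norm_eq_abs]
    rw [Real.coe_nnabs, abs_of_nonneg (by positivity : (0:ℝ) ≤ |w x| * (δ*δ)⁻¹)]
    have hxabs : |x| ≤ 1 := abs_le.mpr ⟨by linarith [hxI.1], hxI.2⟩
    calc |w x| * |x| * ‖z - v‖ / (‖(1:ℂ) - x*z‖ * ‖(1:ℂ) - x*v‖)
        ≤ |w x| * 1 * ‖z - v‖ / (δ * δ) := by gcongr
      _ = |w x| * (δ*δ)⁻¹ * dist z v := by rw [dist_eq_norm]; field_simp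
  · -- integrability of bound
    exact (hwint.abs).mul_const _
  · -- differentiability pointwise
    rw [ae_restrict_iff' measurableSet_Ioo]
    refine Filter.Eventually.of_forall (fun x hx => ?_)
    have hne : (1:ℂ) - x*z₀ ≠ 0 := denom_ne hz₀U (Ioo_subset_Icc_self hx)
    have hd : HasDerivAt (fun z : ℂ => 1 - ↑x*z) (-↑x) z₀ := by
      simpa using ((hasDerivAt_id z₀).const_mul (↑x:ℂ)).const_sub 1
    have h2 := (hasDerivAt_const z₀ (c x)).div hd hne
    refine HasDerivAt.congr_deriv h2 ?_
    rw [div_eq_div_iff (pow_ne_zero 2 hne) (pow_ne_zero 2 hne)]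
    ring
open MeasureTheory Set Metric Real Filter Topology

lemma g_diff (C : ℂ) (p' : ℂ) : DifferentiableOn ℂ (fun z => C * (1-z) ^ p') myU := by
  intro z hzU
  apply DifferentiableAt.differentiableWithinAt
  apply (differentiableAt_const C).mul
  apply DifferentiableAt.cpow ((differentiableAt_const (1:ℂ)).sub differentiableAt_id)
    (differentiableAt_const p')
  rcases hzU with h|h
  · refine Or.inl ?_
    have hre : z.re < 0 := h
    show 0 < (1 - z).re
    simp only [Complex.sub_re, Complex.one_re, id_eq]
    linarith
  · refine Or.inr ?_
    have him : z.im < 0 := h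
    show (1 - z).im ≠ 0
    simp only [Complex.sub_im, Complex.one_im, id_eq]
    intro hcon
    linarith

lemma myU_preconn : IsPreconnected myU := by
  apply IsPreconnected.union (-1 - Complex.I)
  · show (-1 - Complex.I).re < 0
    simp
  · show (-1 - Complex.I).im < 0
    simp
  · exact (convex_halfSpace_re_lt 0).isPreconnected
  · exact (convex_halfSpace_im_lt 0).isPreconnected

lemma cplx_real_case (p : ℝ) (hp : p ∈ Set.Ioo (0:ℝ) 1) {s : ℝ} (hs : s < 0) :
    (∫ x in Ioo (0:ℝ) 1, ((x ^ (-p) * (1-x) ^ (p-1) : ℝ) : ℂ) / (1 - x*(s:ℂ)))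
      = (↑Real.pi / ↑(Real.sin ((1-p)*Real.pi))) * (1 - (s:ℂ)) ^ ((p:ℂ)-1) := by
  have h1 : ∀ x ∈ Ioo (0:ℝ) 1,
      ((x ^ (-p) * (1-x) ^ (p-1) : ℝ) : ℂ) / (1 - x*(s:ℂ))
        = (((x ^ (-p) * (1-x) ^ (p-1)) / (1 - x*s) : ℝ) : ℂ) := by
    intro x hx
    push_cast
    rfl
  rw [setIntegral_congr_fun measurableSet_Ioo h1]
  calc (∫ x in Ioo (0:ℝ) 1, (((x ^ (-p) * (1-x) ^ (p-1)) / (1 - x*s) : ℝ) : ℂ))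
      = ((∫ x in Ioo (0:ℝ) 1, (x ^ (-p) * (1-x) ^ (p-1)) / (1 - x*s) : ℝ) : ℂ) :=
        integral_ofReal (𝕜 := ℂ)
    _ = ((((1-s) ^ (p-1)) * ∫ y in Ioo (0:ℝ) 1, y ^ (-p) * (1-y) ^ (p-1) : ℝ) : ℂ) := by
        rw [real_case p hp hs]
    _ = (↑Real.pi / ↑(Real.sin ((1-p)*Real.pi))) * (1 - (s:ℂ)) ^ ((p:ℂ)-1) := by
        rw [Complex.ofReal_mul, B_val p hp, Complex.ofReal_cpow (by linarith : (0:ℝ) ≤ 1-s)]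
        push_cast
        ring

lemma J_eq (p : ℝ) (hp : p ∈ Set.Ioo (0:ℝ) 1) :
    EqOn (fun z : ℂ => ∫ x in Ioo (0:ℝ) 1, ((x ^ (-p) * (1-x) ^ (p-1) : ℝ) : ℂ) / (1 - x*z))
      (fun z : ℂ => (↑Real.pi / ↑(Real.sin ((1-p)*Real.pi))) * (1 - z) ^ ((p:ℂ)-1)) myU := by
  have hJa := ((J_diff p hp).analyticOnNhd myU_open)
  have hga := ((g_diff (↑Real.pi / ↑(Real.sin ((1-p)*Real.pi))) ((p:ℂ)-1)).analyticOnNhd myU_open)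
  have hmem : (-1:ℂ) ∈ myU := Or.inl (by norm_num [myU])
  apply hJa.eqOn_of_preconnected_of_frequently_eq hga myU_preconn hmem
  -- frequently
  set u : ℕ → ℂ := fun n => ((-1 + ((n:ℝ)+2)⁻¹ : ℝ) : ℂ) with hu
  have htend : Tendsto u atTop (𝓝[≠] (-1:ℂ)) := by
    rw [tendsto_nhdsWithin_iff]
    constructor
    · have h0 : Tendsto (fun n : ℕ => ((n:ℝ)+2)⁻¹) atTop (𝓝 0) :=
        tendsto_inv_atTop_zero.comp (tendsto_atTop_add_const_right _ 2 tendsto_natCast_atTop_atTop)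
      have h1 : Tendsto (fun n : ℕ => -1 + ((n:ℝ)+2)⁻¹) atTop (𝓝 (-1)) := by
        simpa using tendsto_const_nhds.add h0
      have := (Complex.continuous_ofReal.tendsto (-1:ℝ)).comp h1
      rw [show ((-1:ℝ):ℂ) = -1 by norm_num] at this; exact this
    · refine Eventually.of_forall (fun n => ?_)
      have hpos : (0:ℝ) < (n:ℝ)+2 := by positivity
      simp only [hu, Set.mem_compl_iff, Set.mem_singleton_iff]
      intro hcon
      rw [show (-1:ℂ) = ((-1:ℝ):ℂ) by norm_num] at hcon
      have h3 := Complex.ofReal_injective hcon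
      have h4 : ((n:ℝ)+2)⁻¹ = 0 := by linarith
      exact absurd h4 (by positivity)
  apply htend.frequently
  refine Frequently.of_forall (fun n => ?_)
  have hsneg : (-1 + ((n:ℝ)+2)⁻¹ : ℝ) < 0 := by
    have h2 : ((n:ℝ)+2)⁻¹ ≤ 2⁻¹ := by
      apply inv_anti₀ (by norm_num)
      simp [Nat.cast_nonneg]
    linarith
  have hres := cplx_real_case p hp (s := -1 + ((n:ℝ)+2)⁻¹) hsneg
  simp only [hu]
  exact hres
open MeasureTheory Set

theorem stmt11 (p : ℝ) (hp : p ∈ Set.Ioo (0 : ℝ) 1) (z : ℂ) (hz : z.im < 0) :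
    (p : ℂ) * z * (1 - z) ^ ((p : ℂ) - 1)
      = (p : ℂ) * ((Real.sin ((1 - p) * Real.pi) : ℝ) : ℂ) *
          ∫ x in Set.Ioo (0 : ℝ) 1,
            (1 / (1 - (x : ℂ) * z) - 1) *
              ((1 / (Real.pi * x ^ (1 + p) * (1 - x) ^ (1 - p)) : ℝ) : ℂ) := by
  have hzU : z ∈ myU := Or.inr hz
  have hsin : 0 < Real.sin ((1-p)*Real.pi) := by
    apply Real.sin_pos_of_pos_of_lt_pi
    · nlinarith [Real.pi_pos, hp.2]
    · nlinarith [Real.pi_pos, hp.1]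
  have hπ : (Real.pi : ℂ) ≠ 0 := Complex.ofReal_ne_zero.mpr Real.pi_ne_zero
  have hsin' : ((Real.sin ((1-p)*Real.pi) : ℝ) : ℂ) ≠ 0 := Complex.ofReal_ne_zero.mpr hsin.ne'
  have hcongr : ∀ x ∈ Ioo (0:ℝ) 1,
      (1 / (1 - (x : ℂ) * z) - 1) * ((1 / (Real.pi * x ^ (1 + p) * (1 - x) ^ (1 - p)) : ℝ) : ℂ)
        = (z/(Real.pi:ℂ)) * (((x ^ (-p) * (1-x) ^ (p-1) : ℝ) : ℂ) / (1 - x*z)) := by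
    intro x hx
    have hx0 := hx.1
    have hx1 : (0:ℝ) < 1 - x := by linarith [hx.2]
    have hne : (1:ℂ) - x*z ≠ 0 := denom_ne hzU ⟨hx0.le, hx.2.le⟩
    have key1 : x ^ (-p) * x ^ (1+p) = x := by
      rw [← Real.rpow_add hx0, show -p+(1+p) = 1 by ring, Real.rpow_one]
    have key2 : (1-x) ^ (p-1) * (1-x) ^ (1-p) = 1 := by
      rw [← Real.rpow_add hx1, show (p-1)+(1-p) = 0 by ring, Real.rpow_zero]
    have hxp : (0:ℝ) < x ^ (1+p) := Real.rpow_pos_of_pos hx0 _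
    have hxq : (0:ℝ) < (1-x) ^ (1-p) := Real.rpow_pos_of_pos hx1 _
    have hdiv : x ^ (-p) * (1-x) ^ (p-1) = x / (x ^ (1+p) * (1-x) ^ (1-p)) := by
      rw [eq_div_iff (by positivity)]
      calc x ^ (-p) * (1-x) ^ (p-1) * (x ^ (1+p) * (1-x) ^ (1-p))
          = (x ^ (-p) * x ^ (1+p)) * ((1-x) ^ (p-1) * (1-x) ^ (1-p)) := by ring
        _ = x := by rw [key1, key2, mul_one]
    have stepB : x * (1 / (Real.pi * x ^ (1+p) * (1-x) ^ (1-p)))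
        = (x ^ (-p) * (1-x) ^ (p-1)) / Real.pi := by
      rw [hdiv]
      field_simp
    have hxr : (x:ℂ) * ((1 / (Real.pi * x ^ (1+p) * (1-x) ^ (1-p)) : ℝ) : ℂ)
        = ((x ^ (-p) * (1-x) ^ (p-1) : ℝ) : ℂ) / (Real.pi:ℂ) := by
      rw [← Complex.ofReal_div, ← stepB, Complex.ofReal_mul]
    have stepA : 1 / (1 - (x:ℂ)*z) - 1 = (x:ℂ)*z / (1 - (x:ℂ)*z) := by
      field_simp
      ring
    rw [stepA, div_mul_eq_mul_div, mul_comm ((x:ℂ)) z, mul_assoc, hxr]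
    field_simp
  rw [setIntegral_congr_fun measurableSet_Ioo hcongr]
  have hINT : ∫ x in Ioo (0:ℝ) 1, (z/(Real.pi:ℂ)) * (((x ^ (-p) * (1-x) ^ (p-1) : ℝ) : ℂ) / (1 - x*z))
      = (z/(Real.pi:ℂ)) * ∫ x in Ioo (0:ℝ) 1, ((x ^ (-p) * (1-x) ^ (p-1) : ℝ) : ℂ) / (1 - x*z) := by
    simp_rw [← smul_eq_mul, integral_smul]
  rw [hINT]
  have hJ : (∫ x in Ioo (0:ℝ) 1, ((x ^ (-p) * (1-x) ^ (p-1) : ℝ) : ℂ) / (1 - x*z))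
      = ((Real.pi:ℂ) / ((Real.sin ((1-p)*Real.pi) : ℝ) : ℂ)) * (1 - z) ^ ((p:ℂ)-1) :=
    J_eq p hp hzU
  rw [hJ]
  calc (p:ℂ) * z * (1 - z) ^ ((p:ℂ) - 1)
      = (p:ℂ) * z * (1 - z) ^ ((p:ℂ) - 1) *
        (((Real.sin ((1-p)*Real.pi) : ℝ) : ℂ) / ((Real.sin ((1-p)*Real.pi) : ℝ) : ℂ)) *
        ((Real.pi:ℂ) / (Real.pi:ℂ)) := by
        rw [div_self hsin', div_self hπ]; ring
    _ = (p:ℂ) * ((Real.sin ((1 - p) * Real.pi) : ℝ) : ℂ) *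
        (z / (Real.pi:ℂ) * ((Real.pi:ℂ) / ((Real.sin ((1-p)*Real.pi) : ℝ) : ℂ) * (1 - z) ^ ((p:ℂ)-1))) := by
        ring
end

section
/- Let f : ℂ⁻ → ℂ be analytic on the open lower half-plane and extend continuously to 0 with f(0) = 0, and suppose f is analytic in a neighborhood of each ray {wz : 0 < w ≤ 1} for z ∈ ℂ⁻, with ∫_0^1 |f(wz)|/w dw < ∞ locally uniformly in z. Define F(z) = ∫_0^1 f(wz) (dw/w). Then F is differentiable on ℂ⁻ and z F′(z) = f(z) for all z ∈ ℂ⁻. -/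
open MeasureTheory Metric Set Filter Topology

/-- Analytic core: if `F(z) = ∫_0^1 f(wz) dw/w` with `f` analytic on the lower
half-plane, `f(0) = 0`, and a local uniform domination, then `z F'(z) = f(z)`. -/
theorem stmt12 (f : ℂ → ℂ)
    (hf : DifferentiableOn ℂ f {z : ℂ | z.im < 0})
    (hf0 : f 0 = 0)
    (hcont : ContinuousWithinAt f {z : ℂ | z.im < 0} 0)
    (hdom : ∀ K : Set ℂ, IsCompact K → K ⊆ {z : ℂ | z.im < 0} →
      ∃ g : ℝ → ℝ, IntegrableOn g (Set.Ioo (0 : ℝ) 1) ∧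
        ∀ z ∈ K, ∀ w ∈ Set.Ioo (0 : ℝ) 1, ‖f ((w : ℂ) * z)‖ / w ≤ g w)
    (F : ℂ → ℂ)
    (hF : ∀ z, F z = ∫ w in Set.Ioo (0 : ℝ) 1, f ((w : ℂ) * z) / (w : ℂ)) :
    ∀ z : ℂ, z.im < 0 → ∃ F' : ℂ, HasDerivAt F F' z ∧ z * F' = f z := by
  intro z hz
  set S : Set ℂ := {z : ℂ | z.im < 0} with hSdef
  have hSopen : IsOpen S := isOpen_lt Complex.continuous_im continuous_const
  set δ : ℝ := -z.im / 2 with hδdef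
  have hδ : 0 < δ := by rw [hδdef]; linarith
  -- closed ball inside S
  have hball : Metric.closedBall z δ ⊆ S := by
    intro x hx
    have h1 : |(x - z).im| ≤ ‖x - z‖ := Complex.abs_im_le_norm _
    have h2 : ‖x - z‖ ≤ δ := by
      simpa [Complex.dist_eq] using (mem_closedBall.mp hx)
    have : |x.im - z.im| ≤ δ := by simpa [Complex.sub_im] using h1.trans h2
    have h3 := abs_le.mp this
    show x.im < 0
    linarith [h3.2]
  obtain ⟨g, hg_int, hg⟩ := hdom (Metric.closedBall z δ) (isCompact_closedBall _ _) hball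
  have hfc : ContinuousOn f S := hf.continuousOn
  have hderivc : ContinuousOn (deriv f) S :=
    ((hf.analyticOnNhd hSopen).deriv).continuousOn
  -- scaling preserves S
  have hscale : ∀ w : ℝ, 0 < w → ∀ x : ℂ, x.im < 0 → ((w : ℂ) * x).im < 0 := by
    intro w hw x hx
    simp only [Complex.mul_im, Complex.ofReal_re, Complex.ofReal_im, zero_mul, add_zero]
    exact mul_neg_of_pos_of_neg hw hx
  -- Cauchy-estimate bound on deriv
  have hbound : ∀ w ∈ Set.Ioo (0:ℝ) 1, ∀ x ∈ Metric.ball z (δ/2),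
      ‖deriv f ((w : ℂ) * x)‖ ≤ 2/δ * g w := by
    intro w hw x hx
    have hw0 : (0:ℝ) < w := hw.1
    have hwC : (w : ℂ) ≠ 0 := by exact_mod_cast hw0.ne'
    set R : ℝ := w * (δ/2) with hRdef
    have hR : 0 < R := by positivity
    -- unscaling lemma
    have hmem : ∀ ζ : ℂ, ζ ∈ Metric.closedBall ((w:ℂ)*x) R →
        ζ / w ∈ Metric.closedBall z δ ∧ ζ = (w:ℂ) * (ζ / w) := by
      intro ζ hζ
      have h1 : ‖ζ - (w:ℂ)*x‖ ≤ R := by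
        simpa [Complex.dist_eq] using mem_closedBall.mp hζ
      have h2 : ‖ζ / w - x‖ ≤ δ/2 := by
        have : ζ / w - x = (ζ - (w:ℂ)*x) / w := by field_simp
        rw [this, norm_div]
        rw [div_le_iff₀ (norm_pos_iff.mpr hwC : (0:ℝ) < ‖(w:ℂ)‖)]
        calc ‖ζ - (w:ℂ)*x‖ ≤ R := h1
          _ = δ/2 * ‖(w:ℂ)‖ := by
              rw [hRdef, Complex.norm_real, Real.norm_eq_abs, abs_of_pos hw0]; ring
      have h3 : ‖x - z‖ < δ/2 := by
        simpa [Complex.dist_eq] using mem_ball.mp hx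
      refine ⟨?_, by field_simp⟩
      rw [mem_closedBall, Complex.dist_eq]
      calc ‖ζ/w - z‖ ≤ ‖ζ/w - x‖ + ‖x - z‖ := by
            simpa using norm_add_le (ζ/w - x) (x - z)
        _ ≤ δ/2 + δ/2 := add_le_add h2 h3.le
        _ = δ := by ring
    have hsub : Metric.closedBall ((w:ℂ)*x) R ⊆ S := by
      intro ζ hζ
      obtain ⟨hζ1, hζ2⟩ := hmem ζ hζ
      have : (ζ/w).im < 0 := hball hζ1
      rw [hζ2]
      exact hscale w hw0 _ this
    have hdcl : DiffContOnCl ℂ f (Metric.ball ((w:ℂ)*x) R) :=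
      ⟨hf.mono (ball_subset_closedBall.trans hsub),
        hf.continuousOn.mono ((closure_ball_subset_closedBall).trans hsub)⟩
    have hC : ∀ ζ ∈ Metric.sphere ((w:ℂ)*x) R, ‖f ζ‖ ≤ w * g w := by
      intro ζ hζ
      obtain ⟨hζ1, hζ2⟩ := hmem ζ (sphere_subset_closedBall hζ)
      have := hg (ζ/w) hζ1 w hw
      rw [div_le_iff₀ hw0] at this
      calc ‖f ζ‖ = ‖f ((w:ℂ) * (ζ/w))‖ := by rw [← hζ2]
        _ ≤ g w * w := this
        _ = w * g w := mul_comm _ _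
    have := Complex.norm_deriv_le_of_forall_mem_sphere_norm_le hR hdcl hC
    calc ‖deriv f ((w:ℂ)*x)‖ ≤ (w * g w) / R := this
      _ = 2/δ * g w := by rw [hRdef]; field_simp
  -- measurability of the integrand
  have hmapsTo : ∀ x : ℂ, x.im < 0 → ∀ w ∈ Set.Ioo (0:ℝ) 1, ((w:ℂ) * x) ∈ S :=
    fun x hx w hw => hscale w hw.1 x hx
  have hcontw : ∀ x : ℂ, x.im < 0 →
      ContinuousOn (fun w : ℝ => f ((w:ℂ) * x)) (Set.Ioo (0:ℝ) 1) := by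
    intro x hx
    exact hfc.comp ((Complex.continuous_ofReal.mul continuous_const).continuousOn)
      (hmapsTo x hx)
  have hmeas : ∀ x : ℂ, x.im < 0 →
      AEStronglyMeasurable (fun w : ℝ => f ((w:ℂ) * x) / (w:ℂ))
        (volume.restrict (Set.Ioo (0:ℝ) 1)) := by
    intro x hx
    refine ContinuousOn.aestronglyMeasurable ?_ measurableSet_Ioo
    exact (hcontw x hx).div (Complex.continuous_ofReal.continuousOn)
      (fun w hw => by exact_mod_cast hw.1.ne')
  have hmeas' : AEStronglyMeasurable (fun w : ℝ => deriv f ((w:ℂ) * z))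
      (volume.restrict (Set.Ioo (0:ℝ) 1)) := by
    refine ContinuousOn.aestronglyMeasurable ?_ measurableSet_Ioo
    exact hderivc.comp ((Complex.continuous_ofReal.mul continuous_const).continuousOn)
      (hmapsTo z hz)
  have hballS : Metric.ball z (δ/2) ⊆ S :=
    (ball_subset_closedBall.trans (closedBall_subset_closedBall (by linarith))).trans hball
  -- the norm identity
  have hnorm : ∀ (x : ℂ) (w : ℝ), 0 < w → ‖f ((w:ℂ)*x) / (w:ℂ)‖ = ‖f ((w:ℂ)*x)‖ / w := by
    intro x w hw
    rw [norm_div, Complex.norm_real, Real.norm_eq_abs, abs_of_pos hw]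
  -- differentiation under the integral sign
  have hder := hasDerivAt_integral_of_dominated_loc_of_deriv_le (μ := volume.restrict (Set.Ioo (0:ℝ) 1))
    (F := fun (x : ℂ) (w : ℝ) => f ((w:ℂ) * x) / (w:ℂ))
    (F' := fun (x : ℂ) (w : ℝ) => deriv f ((w:ℂ) * x))
    (x₀ := z) (bound := fun w => 2/δ * g w)
    (Metric.ball_mem_nhds z (by positivity : (0:ℝ) < δ/2))
    (Filter.eventually_of_mem (Metric.ball_mem_nhds z (by positivity : (0:ℝ) < δ/2))
      (fun x hx => hmeas x (hballS hx)))
    ?_ (hmeas' ) ?_ (hg_int.const_mul _) ?_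
  · obtain ⟨hI_int, hI_der⟩ := hder
    set I : ℂ := ∫ w in Set.Ioo (0:ℝ) 1, deriv f ((w:ℂ) * z) with hIdef
    have hFr : F = fun x => ∫ w in Set.Ioo (0:ℝ) 1, f ((w:ℂ) * x) / (w:ℂ) := funext hF
    refine ⟨I, by rw [hFr]; exact hI_der, ?_⟩
    -- now show z * I = f z
    have hzI : z * I = ∫ w in Set.Ioo (0:ℝ) 1, z * deriv f ((w:ℂ) * z) := by
      rw [hIdef, ← integral_const_mul]
    -- integrability of the full integrand
    have hInt : IntegrableOn (fun w : ℝ => z * deriv f ((w:ℂ) * z)) (Set.Ioo (0:ℝ) 1) := by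
      refine Integrable.mono' (((hg_int.const_mul (2/δ)).const_mul ‖z‖)) (hmeas'.const_mul z) ?_
      refine (ae_restrict_iff' measurableSet_Ioo).2 (Filter.Eventually.of_forall ?_)
      intro w hw
      rw [norm_mul]
      exact mul_le_mul_of_nonneg_left (hbound w hw z (mem_ball_self (by positivity))) (norm_nonneg z)
    -- the exhausting sequence
    set s : ℕ → Set ℝ := fun n => Set.Ioo (1/(n+1:ℝ)) 1 with hsdef
    have hsm : ∀ n, MeasurableSet (s n) := fun n => measurableSet_Ioo
    have hmono : Monotone s := by
      intro n m hnm
      apply Set.Ioo_subset_Ioo_left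
      apply one_div_le_one_div_of_le (by positivity)
      have : (n:ℝ) ≤ m := by exact_mod_cast hnm
      linarith
    have hunion : (⋃ n, s n) = Set.Ioo (0:ℝ) 1 := by
      ext x
      simp only [Set.mem_iUnion, hsdef, Set.mem_Ioo]
      constructor
      · rintro ⟨n, h1, h2⟩
        exact ⟨lt_trans (by positivity) h1, h2⟩
      · rintro ⟨h1, h2⟩
        obtain ⟨n, hn⟩ := exists_nat_one_div_lt h1
        exact ⟨n, hn, h2⟩
    have htend1 : Tendsto (fun n => ∫ w in s n, z * deriv f ((w:ℂ) * z)) atTop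
        (𝓝 (∫ w in Set.Ioo (0:ℝ) 1, z * deriv f ((w:ℂ) * z))) := by
      have := tendsto_setIntegral_of_monotone hsm hmono (by rw [hunion]; exact hInt)
      rwa [hunion] at this
    -- FTC on each [εₙ, 1]
    have hseq : ∀ n : ℕ, ∫ w in s n, z * deriv f ((w:ℂ) * z)
        = f z - f (((1/(n+1:ℝ) : ℝ) : ℂ) * z) := by
      intro n
      set ε : ℝ := 1/(n+1:ℝ) with hεdef
      have hε0 : 0 < ε := by positivity
      have hε1 : ε ≤ 1 := by
        rw [hεdef, div_le_one (by positivity)]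
        linarith [Nat.cast_nonneg (α := ℝ) n]
      have hIcc : ∀ w ∈ Set.uIcc ε 1, 0 < w := by
        rw [Set.uIcc_of_le hε1]
        intro w hw; exact lt_of_lt_of_le hε0 hw.1
      have hderw : ∀ w ∈ Set.uIcc ε 1,
          HasDerivAt (fun w : ℝ => f ((w:ℂ) * z)) (z * deriv f ((w:ℂ) * z)) w := by
        intro w hw
        have hwz : ((w:ℂ) * z) ∈ S := hscale w (hIcc w hw) z hz
        have h1 : HasDerivAt f (deriv f ((w:ℂ)*z)) ((w:ℂ)*z) :=
          (hf.differentiableAt (hSopen.mem_nhds hwz)).hasDerivAt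
        have h2 : HasDerivAt (fun w : ℝ => (w:ℂ) * z) z w := by
          simpa [Complex.real_smul] using (hasDerivAt_id w).smul_const z
        have h3 := h1.scomp w h2
        exact h3
      have hii : IntervalIntegrable (fun w : ℝ => z * deriv f ((w:ℂ) * z)) volume ε 1 := by
        apply ContinuousOn.intervalIntegrable
        refine ContinuousOn.mul continuousOn_const ?_
        refine hderivc.comp ((Complex.continuous_ofReal.mul continuous_const).continuousOn) ?_
        intro w hw
        exact hscale w (hIcc w hw) z hz
      have hFTC := intervalIntegral.integral_eq_sub_of_hasDerivAt hderw hii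
      have : ∫ w in s n, z * deriv f ((w:ℂ) * z)
          = ∫ w in ε..1, z * deriv f ((w:ℂ) * z) := by
        rw [intervalIntegral.integral_of_le hε1, ← integral_Ioc_eq_integral_Ioo]
      rw [this, hFTC]
      norm_num [hεdef]
    -- limit of the RHS
    have htend2 : Tendsto (fun n : ℕ => f z - f (((1/(n+1:ℝ) : ℝ) : ℂ) * z)) atTop (𝓝 (f z)) := by
      have h1 : Tendsto (fun n : ℕ => ((1/(n+1:ℝ) : ℝ) : ℂ) * z) atTop (𝓝 0) := by
        have := tendsto_one_div_add_atTop_nhds_zero_nat (𝕜 := ℝ)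
        have h2 := ((Complex.continuous_ofReal.tendsto 0).comp this).mul_const z
        simpa using h2
      have h2 : Tendsto (fun n : ℕ => ((1/(n+1:ℝ) : ℝ) : ℂ) * z) atTop (𝓝[S] 0) := by
        rw [tendsto_nhdsWithin_iff]
        refine ⟨h1, Filter.Eventually.of_forall fun n => ?_⟩
        exact hscale (1/(n+1:ℝ)) (by positivity) z hz
      have h3 : Tendsto (fun n : ℕ => f (((1/(n+1:ℝ) : ℝ) : ℂ) * z)) atTop (𝓝 0) := by
        have := hcont.tendsto.comp h2
        rwa [hf0] at this
      have h4 := (tendsto_const_nhds (x := f z)).sub h3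
      simpa using h4
    -- conclude
    have heq : (∫ w in Set.Ioo (0:ℝ) 1, z * deriv f ((w:ℂ) * z)) = f z := by
      refine tendsto_nhds_unique htend1 ?_
      have : (fun n => ∫ w in s n, z * deriv f ((w:ℂ) * z))
          = fun n : ℕ => f z - f (((1/(n+1:ℝ) : ℝ) : ℂ) * z) := funext hseq
      rw [this]
      exact_mod_cast htend2
    rw [hzI, heq]
  · -- integrability of F z
    refine Integrable.mono' (hg_int) (hmeas z hz) ?_
    refine (ae_restrict_iff' measurableSet_Ioo).2 (Filter.Eventually.of_forall ?_)
    intro w hw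
    rw [hnorm z w hw.1]
    exact hg z (mem_closedBall_self hδ.le) w hw
  · -- bound
    refine (ae_restrict_iff' measurableSet_Ioo).2 (Filter.Eventually.of_forall ?_)
    intro w hw x hx
    exact hbound w hw x hx
  · -- differentiability in x
    refine (ae_restrict_iff' measurableSet_Ioo).2 (Filter.Eventually.of_forall ?_)
    intro w hw x hx
    have hwC : (w : ℂ) ≠ 0 := by exact_mod_cast hw.1.ne'
    have hwx : ((w:ℂ) * x) ∈ S := hscale w hw.1 x (hballS hx)
    have h1 : HasDerivAt f (deriv f ((w:ℂ)*x)) ((w:ℂ)*x) :=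
      (hf.differentiableAt (hSopen.mem_nhds hwx)).hasDerivAt
    have h2 : HasDerivAt (fun x : ℂ => (w:ℂ)*x) (w:ℂ) x := by
      simpa using (hasDerivAt_id x).const_mul (w:ℂ)
    have h3 := (h1.comp x h2).div_const (w:ℂ)
    convert h3 using 1
    · rfl
    · rfl
    · exact (mul_div_cancel_right₀ _ hwC).symm
end

section
/- Let ν be a nonnegative Borel measure on ℝ with ν({0}) = 0, ∫(x² ∧ 1) ν(dx) < ∞, and ∫_{{|x|>1}} log(1+|x|) ν(dx) < ∞. Let a ≥ 0, η ∈ ℝ and define C(z) = ηz + az² + ∫_ℝ (1/(1-xz) - 1 - xz 1_{[-1,1]}(x)) ν(dx) for z ∈ ℂ⁻. Then for every z ∈ ℂ⁻, the integral ∫_0^∞ |C(e^{-t} z)| dt is finite. -/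
open MeasureTheory Real Set


lemma lb_aux {z : ℂ} (hz : z.im < 0) (r : ℝ) : -z.im / ‖z‖ ≤ ‖1 - (r:ℂ)*z‖ := by
  have hz0 : z ≠ 0 := by intro h; simp [h] at hz
  have hn : 0 < ‖z‖ := norm_pos_iff.2 hz0
  rw [div_le_iff₀ hn]
  have h1 : ((1 - (r:ℂ)*z) * (starRingEnd ℂ z)).im = -z.im := by
    simp [Complex.mul_im, Complex.mul_re]
    ring
  calc -z.im = |((1 - (r:ℂ)*z) * (starRingEnd ℂ z)).im| := by rw [h1]; rw [abs_of_nonneg]; linarith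
    _ ≤ ‖(1 - (r:ℂ)*z) * (starRingEnd ℂ z)‖ := Complex.abs_im_le_norm _
    _ = ‖1 - (r:ℂ)*z‖ * ‖z‖ := by rw [norm_mul]; simp

lemma key_bound {z : ℂ} (hz : z.im < 0) (s x : ℝ) :
    ‖1 / (1 - (x:ℂ) * ((Real.exp (-s) : ℂ) * z)) - 1
        - (x:ℂ) * ((Real.exp (-s):ℂ) * z) * (if |x| ≤ 1 then 1 else 0)‖
      ≤ ((1+‖z‖)^3 * (1 + 1/(-z.im)))
        * (if |x| ≤ 1 then Real.exp (-s)^2 * x^2 else min (Real.exp (-s) * |x|) 1) := by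
  have hz0 : z ≠ 0 := by intro h; simp [h] at hz
  set n := ‖z‖ with hn_def
  set m := -z.im with hm_def
  have hm : 0 < m := by simp [hm_def]; linarith
  have hn : 0 < n := norm_pos_iff.2 hz0
  set K := (1+n)^3 * (1 + 1/m) with hK_def
  have hn1 : (1:ℝ) ≤ 1 + n := by linarith
  have hKn3 : n^3/m ≤ K := by
    rw [div_le_iff₀ hm, hK_def]
    have h3 : n^3 ≤ (1+n)^3 := by nlinarith
    have heq : (1+n)^3 * (1 + 1/m) * m = (1+n)^3 * (m + 1) := by field_simp
    rw [heq]
    nlinarith [mul_nonneg (pow_nonneg (by linarith : (0:ℝ) ≤ 1+n) 3) hm.le]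
  have hKn2 : n^2/m ≤ K := by
    rw [div_le_iff₀ hm, hK_def]
    have h3 : n^2 ≤ (1+n)^3 := by nlinarith
    have heq : (1+n)^3 * (1 + 1/m) * m = (1+n)^3 * (m + 1) := by field_simp
    rw [heq]
    nlinarith [mul_nonneg (pow_nonneg (by linarith : (0:ℝ) ≤ 1+n) 3) hm.le]
  have hK1 : n/m + 1 ≤ K := by
    rw [hK_def]
    have h3 : (1:ℝ) ≤ (1+n)^3 := by nlinarith
    have h4 : n/m + 1 ≤ (1+n) * (1 + 1/m) := by
      have : (1+n) * (1 + 1/m) = 1 + 1/m + n + n/m := by ring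
      rw [this]
      have : 0 < 1/m := by positivity
      linarith
    have h5 : (1+n) * (1 + 1/m) ≤ (1+n)^3 * (1 + 1/m) := by
      have h6 : 0 ≤ 1 + 1/m := by positivity
      apply mul_le_mul_of_nonneg_right _ h6
      nlinarith
    linarith
  have hK0 : 0 ≤ K := by positivity
  set E := Real.exp (-s) with hE_def
  have hE : 0 < E := Real.exp_pos _
  set r := x * E with hr_def
  have hcast : (x:ℂ) * ((E:ℂ) * z) = ((r:ℝ):ℂ) * z := by rw [hr_def]; push_cast; ring
  have hδ : m / n ≤ ‖1 - (r:ℂ)*z‖ := lb_aux hz r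
  have hpos : 0 < ‖1 - (r:ℂ)*z‖ := lt_of_lt_of_le (div_pos hm hn) hδ
  have h1u : (1:ℂ) - (r:ℂ)*z ≠ 0 := norm_pos_iff.1 hpos
  have hinv : ‖1 - (r:ℂ)*z‖⁻¹ ≤ n/m := by
    rw [inv_le_comm₀ hpos (by positivity), inv_div]
    exact hδ
  have hur : ‖(r:ℂ)*z‖ = |r| * n := by
    rw [norm_mul]; simp [hn_def]
  by_cases hx : |x| ≤ 1
  · simp only [if_pos hx, mul_one, hcast]
    have hid : 1/(1 - (r:ℂ)*z) - 1 - (r:ℂ)*z = ((r:ℂ)*z)^2 * (1 - (r:ℂ)*z)⁻¹ := by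
      field_simp
      ring
    rw [hid, norm_mul, norm_pow, norm_inv, hur]
    have h1 : (|r| * n)^2 * ‖1 - (r:ℂ)*z‖⁻¹ ≤ (|r| * n)^2 * (n/m) := by
      apply mul_le_mul_of_nonneg_left hinv; positivity
    have h2 : (|r| * n)^2 * (n/m) = (E^2 * x^2) * (n^3/m) := by
      rw [hr_def, abs_mul, abs_of_pos hE]
      field_simp
      exact sq_abs x
    have h3 : (E^2 * x^2) * (n^3/m) ≤ (E^2 * x^2) * K :=
      mul_le_mul_of_nonneg_left hKn3 (by positivity)
    calc (|r| * n)^2 * ‖1 - (r:ℂ)*z‖⁻¹ ≤ (E^2 * x^2) * (n^3/m) := by rw [← h2]; exact h1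
      _ ≤ (E^2 * x^2) * K := h3
      _ = K * (E^2 * x^2) := by ring
  · simp only [if_neg hx, mul_zero, sub_zero, hcast]
    have b1 : ‖1/(1 - (r:ℂ)*z) - 1‖ ≤ K := by
      calc ‖1/(1 - (r:ℂ)*z) - 1‖ ≤ ‖1/(1 - (r:ℂ)*z)‖ + ‖(1:ℂ)‖ := norm_sub_le _ _
        _ = ‖1 - (r:ℂ)*z‖⁻¹ + 1 := by rw [norm_one, one_div, norm_inv]
        _ ≤ n/m + 1 := by linarith
        _ ≤ K := hK1
    have b2 : ‖1/(1 - (r:ℂ)*z) - 1‖ ≤ K * (E * |x|) := by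
      have hid2 : 1/(1 - (r:ℂ)*z) - 1 = ((r:ℂ)*z) * (1 - (r:ℂ)*z)⁻¹ := by
        field_simp
        ring
      rw [hid2, norm_mul, norm_inv, hur]
      have h1 : |r| * n * ‖1 - (r:ℂ)*z‖⁻¹ ≤ |r| * n * (n/m) := by
        apply mul_le_mul_of_nonneg_left hinv; positivity
      have h2 : |r| * n * (n/m) = (E * |x|) * (n^2/m) := by
        rw [hr_def, abs_mul, abs_of_pos hE]; field_simp
      have h3 : (E * |x|) * (n^2/m) ≤ (E * |x|) * K :=
        mul_le_mul_of_nonneg_left hKn2 (by positivity)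
      calc |r| * n * ‖1 - (r:ℂ)*z‖⁻¹ ≤ (E * |x|) * (n^2/m) := by rw [← h2]; exact h1
        _ ≤ (E * |x|) * K := h3
        _ = K * (E * |x|) := by ring
    rcases le_total (E * |x|) 1 with h | h
    · rw [min_eq_left h]; exact b2
    · rw [min_eq_right h]; rw [mul_one]; exact b1

lemma expint (c : ℝ) (hc : 0 ≤ c) (L : ℝ) :
    ∫⁻ s in Ioi L, ENNReal.ofReal (c * Real.exp (-s)) = ENNReal.ofReal (c * Real.exp (-L)) := by
  rw [← ofReal_integral_eq_lintegral_ofReal]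
  · rw [MeasureTheory.integral_const_mul, integral_exp_neg_Ioi]
  · exact ((exp_neg_integrableOn_Ioi L one_pos).congr_fun (by intro x _; simp) measurableSet_Ioi).const_mul c
  · filter_upwards with s
    positivity

lemma sf (ν : Measure ℝ) (hν0 : ν {0} = 0)
    (hν1 : ∫⁻ x, ENNReal.ofReal (min (x ^ 2) 1) ∂ν < ⊤) : SigmaFinite ν := by
  constructor
  refine ⟨⟨fun q => {0} ∪ {x : ℝ | 1/(q+1) ≤ |x|}, fun _ => trivial, ?_, ?_⟩⟩
  · intro q
    set c : ℝ := min ((1/((q:ℝ)+1))^2) 1 with hc_def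
    have hq1 : (0:ℝ) < 1/((q:ℝ)+1) := by positivity
    have hc : 0 < c := by positivity
    have hsub : {x : ℝ | 1/((q:ℝ)+1) ≤ |x|} ⊆
        {x : ℝ | ENNReal.ofReal c ≤ ENNReal.ofReal (min (x^2) 1)} := by
      intro x hx
      simp only [Set.mem_setOf_eq] at *
      apply ENNReal.ofReal_le_ofReal
      have h1 : (1/((q:ℝ)+1))^2 ≤ x^2 := by
        calc (1/((q:ℝ)+1))^2 ≤ |x|^2 := by nlinarith
          _ = x^2 := sq_abs x
      exact min_le_min h1 le_rfl
    have hmeas : Measurable fun x : ℝ => ENNReal.ofReal (min (x^2) 1) := by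
      apply Measurable.ennreal_ofReal
      exact ((measurable_id.pow_const 2).min measurable_const)
    have hmarkov := mul_meas_ge_le_lintegral₀ (μ := ν) hmeas.aemeasurable (ENNReal.ofReal c)
    have hfin : ν {x : ℝ | 1/((q:ℝ)+1) ≤ |x|} < ⊤ := by
      by_contra h
      push_neg at h
      have htop : ν {x : ℝ | ENNReal.ofReal c ≤ ENNReal.ofReal (min (x^2) 1)} = ⊤ :=
        top_le_iff.1 (le_trans h (measure_mono hsub))
      rw [htop, ENNReal.mul_top (ENNReal.ofReal_pos.2 hc).ne'] at hmarkov
      exact lt_irrefl ⊤ (lt_of_le_of_lt hmarkov hν1)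
    calc ν ({0} ∪ {x : ℝ | 1/((q:ℝ)+1) ≤ |x|}) ≤ ν {0} + ν {x : ℝ | 1/((q:ℝ)+1) ≤ |x|} :=
          measure_union_le _ _
      _ < ⊤ := by rw [hν0]; simpa using hfin
  · apply Set.eq_univ_of_forall
    intro x
    rcases eq_or_ne x 0 with rfl | hx
    · exact Set.mem_iUnion.2 ⟨0, Or.inl rfl⟩
    · have hx0 : 0 < |x| := abs_pos.2 hx
      obtain ⟨q, hq⟩ := exists_nat_one_div_lt hx0
      exact Set.mem_iUnion.2 ⟨q, Or.inr (le_of_lt hq)⟩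



lemma inner_int {K : ℝ} (hK : 0 ≤ K) (x : ℝ) :
    ∫⁻ s in Ioi (0:ℝ), ENNReal.ofReal (K *
        (if |x| ≤ 1 then Real.exp (-s)^2 * x^2 else min (Real.exp (-s) * |x|) 1))
      ≤ if |x| ≤ 1 then ENNReal.ofReal (K * x^2) else ENNReal.ofReal (K * (Real.log |x| + 1)) := by
  by_cases hx : |x| ≤ 1
  · simp only [if_pos hx]
    calc ∫⁻ s in Ioi (0:ℝ), ENNReal.ofReal (K * (Real.exp (-s)^2 * x^2))
        ≤ ∫⁻ s in Ioi (0:ℝ), ENNReal.ofReal ((K * x^2) * Real.exp (-s)) := by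
          apply setLIntegral_mono
          · apply Measurable.ennreal_ofReal
            exact (measurable_id.neg.exp).const_mul _
          · intro s hs
            apply ENNReal.ofReal_le_ofReal
            have h1 : Real.exp (-s) ≤ 1 := exp_le_one_iff.2 (by simp at hs ⊢; linarith)
            have h2 : Real.exp (-s)^2 ≤ Real.exp (-s) := by nlinarith [exp_pos (-s)]
            nlinarith [sq_nonneg x, mul_nonneg hK (sq_nonneg x)]
      _ = ENNReal.ofReal ((K * x^2) * Real.exp (-0)) := expint _ (by positivity) 0
      _ = ENNReal.ofReal (K * x^2) := by simp
  · simp only [if_neg hx]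
    push_neg at hx
    have hx0 : (0:ℝ) < |x| := by linarith
    set L := Real.log |x| with hL_def
    have hL0 : 0 < L := Real.log_pos hx
    have hEL : Real.exp (-L) * |x| = 1 := by
      rw [Real.exp_neg, Real.exp_log hx0]
      field_simp
    have hsub : Ioi (0:ℝ) ⊆ Ioc 0 L ∪ Ioi L := by
      intro t ht
      rcases le_or_gt t L with h | h
      · exact Or.inl ⟨ht, h⟩
      · exact Or.inr h
    calc ∫⁻ s in Ioi (0:ℝ), ENNReal.ofReal (K * min (Real.exp (-s) * |x|) 1)
        ≤ ∫⁻ s in Ioc 0 L ∪ Ioi L, ENNReal.ofReal (K * min (Real.exp (-s) * |x|) 1) :=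
          lintegral_mono_set hsub
      _ ≤ (∫⁻ s in Ioc (0:ℝ) L, ENNReal.ofReal (K * min (Real.exp (-s) * |x|) 1))
          + ∫⁻ s in Ioi L, ENNReal.ofReal (K * min (Real.exp (-s) * |x|) 1) :=
          lintegral_union_le _ _ _
      _ ≤ (∫⁻ _ in Ioc (0:ℝ) L, ENNReal.ofReal K)
          + ∫⁻ s in Ioi L, ENNReal.ofReal ((K * |x|) * Real.exp (-s)) := by
          apply add_le_add
          · apply setLIntegral_mono measurable_const
            intro s _
            apply ENNReal.ofReal_le_ofReal
            nlinarith [min_le_right (Real.exp (-s) * |x|) (1:ℝ)]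
          · apply setLIntegral_mono
            · exact (Measurable.ennreal_ofReal ((measurable_id.neg.exp).const_mul _))
            · intro s _
              apply ENNReal.ofReal_le_ofReal
              have := min_le_left (Real.exp (-s) * |x|) (1:ℝ)
              nlinarith
      _ = ENNReal.ofReal K * volume (Ioc (0:ℝ) L) + ENNReal.ofReal ((K * |x|) * Real.exp (-L)) := by
          rw [setLIntegral_const, expint _ (by positivity) L]
      _ = ENNReal.ofReal (K * L) + ENNReal.ofReal K := by
          rw [Real.volume_Ioc, ← ENNReal.ofReal_mul hK]
          congr 2
          · simp
          · rw [mul_comm K |x|, mul_assoc,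
              show |x| * (K * Real.exp (-L)) = K * (Real.exp (-L) * |x|) by ring, hEL, mul_one]
      _ = ENNReal.ofReal (K * (L + 1)) := by
          rw [← ENNReal.ofReal_add (by positivity) hK]
          congr 1
          ring
      _ = ENNReal.ofReal (K * (Real.log |x| + 1)) := rfl

/-- If the free Lévy measure has a finite log-moment, then
`∫_0^∞ |C(e^{-t} z)| dt < ∞` for the free cumulant transform `C`. -/
theorem stmt17 (ν : Measure ℝ) (hν0 : ν {0} = 0)
    (hν1 : ∫⁻ x, ENNReal.ofReal (min (x ^ 2) 1) ∂ν < ⊤)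
    (hνlog : ∫⁻ x in {x : ℝ | 1 < |x|}, ENNReal.ofReal (Real.log (1 + |x|)) ∂ν < ⊤)
    (a η : ℝ) (ha : 0 ≤ a)
    (C : ℂ → ℂ)
    (hC : ∀ z, C z = (η : ℂ) * z + (a : ℂ) * z ^ 2
      + ∫ x, (1 / (1 - (x : ℂ) * z) - 1 - (x : ℂ) * z * (if |x| ≤ 1 then 1 else 0)) ∂ν) :
    ∀ z : ℂ, z.im < 0 →
      ∫⁻ s in Set.Ioi (0 : ℝ), (‖C ((Real.exp (-s) : ℂ) * z)‖₊ : ENNReal) < ⊤ := by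
  intro z hz
  haveI : SigmaFinite ν := sf ν hν0 hν1
  have hm : (0:ℝ) < -z.im := by linarith
  set n := ‖z‖ with hn_def
  have hn0 : 0 ≤ n := norm_nonneg z
  set K := (1+n)^3 * (1 + 1/(-z.im)) with hK_def
  have hK0 : 0 ≤ K := by positivity
  set G : ℝ → ℝ → ENNReal := fun s x => ENNReal.ofReal (K *
    (if |x| ≤ 1 then Real.exp (-s)^2 * x^2 else min (Real.exp (-s) * |x|) 1)) with hG_def
  -- pointwise bound
  have hpt : ∀ s : ℝ, (‖C ((Real.exp (-s) : ℂ) * z)‖₊ : ENNReal)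
      ≤ ENNReal.ofReal ((|η| * n) * Real.exp (-s))
        + ENNReal.ofReal ((a * n^2) * Real.exp (-s)^2)
        + ∫⁻ x, G s x ∂ν := by
    intro s
    rw [hC]
    set w : ℂ := (Real.exp (-s) : ℂ) * z with hw
    set I : ℂ := ∫ x, (1 / (1 - (x : ℂ) * w) - 1
      - (x : ℂ) * w * (if |x| ≤ 1 then 1 else 0)) ∂ν with hI
    have hwnorm : ‖w‖ = Real.exp (-s) * n := by
      rw [hw, norm_mul, Complex.norm_real, Real.norm_eq_abs, abs_of_pos (Real.exp_pos _)]
    have htri : (‖(η:ℂ)*w + (a:ℂ)*w^2 + I‖₊ : ENNReal)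
        ≤ (‖(η:ℂ)*w‖₊ : ENNReal) + (‖(a:ℂ)*w^2‖₊ : ENNReal) + (‖I‖₊ : ENNReal) := by
      have h1 : ‖(η:ℂ)*w + (a:ℂ)*w^2 + I‖₊ ≤ ‖(η:ℂ)*w‖₊ + ‖(a:ℂ)*w^2‖₊ + ‖I‖₊ :=
        le_trans (nnnorm_add_le _ _) (add_le_add (nnnorm_add_le _ _) le_rfl)
      exact_mod_cast h1
    refine le_trans htri (add_le_add (add_le_add ?_ ?_) ?_)
    · rw [← enorm_eq_nnnorm, ← ofReal_norm]
      apply ENNReal.ofReal_le_ofReal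
      rw [norm_mul, Complex.norm_real, Real.norm_eq_abs, hwnorm]
      apply le_of_eq
      ring
    · rw [← enorm_eq_nnnorm, ← ofReal_norm]
      apply ENNReal.ofReal_le_ofReal
      rw [norm_mul, Complex.norm_real, Real.norm_eq_abs, norm_pow, hwnorm, abs_of_nonneg ha]
      apply le_of_eq
      ring
    · calc (‖I‖₊ : ENNReal) ≤ ∫⁻ x, (‖1 / (1 - (x : ℂ) * w) - 1
            - (x : ℂ) * w * (if |x| ≤ 1 then 1 else 0)‖₊ : ENNReal) ∂ν :=
          enorm_integral_le_lintegral_enorm _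
        _ ≤ ∫⁻ x, G s x ∂ν := by
          apply lintegral_mono
          intro x
          simp only [← enorm_eq_nnnorm, ← ofReal_norm]
          exact ENNReal.ofReal_le_ofReal (key_bound hz s x)
  apply lt_of_le_of_lt (lintegral_mono fun s => hpt s)
  have hm1 : Measurable fun s : ℝ => ENNReal.ofReal ((|η| * n) * Real.exp (-s)) :=
    Measurable.ennreal_ofReal ((measurable_id.neg.exp).const_mul _)
  have hm2 : Measurable fun s : ℝ => ENNReal.ofReal ((a * n^2) * Real.exp (-s)^2) :=
    Measurable.ennreal_ofReal (((measurable_id.neg.exp).pow_const 2).const_mul _)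
  rw [lintegral_add_left (show Measurable fun s : ℝ => ENNReal.ofReal ((|η| * n) * Real.exp (-s)) + ENNReal.ofReal ((a * n^2) * Real.exp (-s)^2) from hm1.add hm2), lintegral_add_left hm1]
  have fin1 : ∫⁻ s in Ioi (0:ℝ), ENNReal.ofReal ((|η| * n) * Real.exp (-s)) < ⊤ := by
    rw [expint _ (by positivity) 0]
    exact ENNReal.ofReal_lt_top
  have fin2 : ∫⁻ s in Ioi (0:ℝ), ENNReal.ofReal ((a * n^2) * Real.exp (-s)^2) < ⊤ := by
    have hle : ∫⁻ s in Ioi (0:ℝ), ENNReal.ofReal ((a * n^2) * Real.exp (-s)^2)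
        ≤ ∫⁻ s in Ioi (0:ℝ), ENNReal.ofReal ((a * n^2) * Real.exp (-s)) := by
      apply setLIntegral_mono (show Measurable fun s : ℝ =>
        ENNReal.ofReal ((a * n^2) * Real.exp (-s)) from
        ((Real.measurable_exp.comp measurable_neg).const_mul _).ennreal_ofReal)
      intro s hs
      apply ENNReal.ofReal_le_ofReal
      have h1 : Real.exp (-s) ≤ 1 := exp_le_one_iff.2 (by simp at hs ⊢; linarith)
      have h2 : Real.exp (-s)^2 ≤ Real.exp (-s) := by nlinarith [Real.exp_pos (-s)]
      have hc : 0 ≤ a * n^2 := by positivity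
      nlinarith
    refine lt_of_le_of_lt hle ?_
    rw [expint _ (by positivity) 0]
    exact ENNReal.ofReal_lt_top
  have hGm : Measurable (Function.uncurry G) := by
    have hset : MeasurableSet {p : ℝ × ℝ | |p.2| ≤ 1} :=
      measurableSet_le (continuous_abs.comp continuous_snd).measurable measurable_const
    have hbr1 : Measurable fun p : ℝ × ℝ => Real.exp (-p.1)^2 * p.2^2 :=
      (((continuous_fst.neg.rexp.pow 2).mul (continuous_snd.pow 2))).measurable
    have hbr2 : Measurable fun p : ℝ × ℝ => min (Real.exp (-p.1) * |p.2|) 1 :=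
      (((continuous_fst.neg.rexp).mul continuous_snd.abs).min continuous_const).measurable
    exact ((Measurable.ite hset hbr1 hbr2).const_mul K).ennreal_ofReal
  have fin3 : ∫⁻ s in Ioi (0:ℝ), ∫⁻ x, G s x ∂ν < ⊤ := by
    rw [lintegral_lintegral_swap hGm.aemeasurable]
    have hFle : ∫⁻ x, (∫⁻ s in Ioi (0:ℝ), G s x) ∂ν
        ≤ ∫⁻ x, (if |x| ≤ 1 then ENNReal.ofReal (K * x^2)
            else ENNReal.ofReal (K * (Real.log |x| + 1))) ∂ν :=
      lintegral_mono fun x => inner_int hK0 x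
    refine lt_of_le_of_lt hFle ?_
    set S : Set ℝ := {x : ℝ | |x| ≤ 1} with hS_def
    have hS : MeasurableSet S := measurableSet_le continuous_abs.measurable measurable_const
    have hcompl : Sᶜ = {x : ℝ | 1 < |x|} := by
      ext x; simp [hS_def, not_le]
    rw [← lintegral_add_compl (f := fun x => (if |x| ≤ 1 then ENNReal.ofReal (K * x^2)
            else ENNReal.ofReal (K * (Real.log |x| + 1)))) hS]
    apply ENNReal.add_lt_top.2
    constructor
    · have h1 : ∫⁻ x in S, (if |x| ≤ 1 then ENNReal.ofReal (K * x^2)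
            else ENNReal.ofReal (K * (Real.log |x| + 1))) ∂ν
          ≤ ∫⁻ x in S, ENNReal.ofReal K * ENNReal.ofReal (min (x^2) 1) ∂ν := by
        apply setLIntegral_mono (show Measurable fun x : ℝ =>
          ENNReal.ofReal K * ENNReal.ofReal (min (x^2) 1) from
          (((measurable_id.pow_const 2).min
            measurable_const).ennreal_ofReal).const_mul _)
        intro x hx
        have hx1 : |x| ≤ 1 := hx
        rw [if_pos hx1, ENNReal.ofReal_mul hK0]
        refine mul_le_mul_of_nonneg_left ?_ zero_le
        apply ENNReal.ofReal_le_ofReal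
        have hx2 : x^2 ≤ 1 := by nlinarith [sq_abs x, abs_nonneg x]
        exact le_min le_rfl hx2
      refine lt_of_le_of_lt h1 ?_
      calc ∫⁻ x in S, ENNReal.ofReal K * ENNReal.ofReal (min (x^2) 1) ∂ν
          ≤ ∫⁻ x, ENNReal.ofReal K * ENNReal.ofReal (min (x^2) 1) ∂ν :=
            setLIntegral_le_lintegral _ _
        _ = ENNReal.ofReal K * ∫⁻ x, ENNReal.ofReal (min (x^2) 1) ∂ν :=
            lintegral_const_mul' _ _ ENNReal.ofReal_ne_top
        _ < ⊤ := ENNReal.mul_lt_top ENNReal.ofReal_lt_top hν1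
    · have hνSc : ν Sᶜ < ⊤ := by
        have h2 : ν Sᶜ = ∫⁻ x in Sᶜ, 1 ∂ν := (setLIntegral_one _).symm
        rw [h2]
        have h3 : ∫⁻ x in Sᶜ, (1:ENNReal) ∂ν ≤ ∫⁻ x in Sᶜ, ENNReal.ofReal (min (x^2) 1) ∂ν := by
          apply setLIntegral_mono (show Measurable fun x : ℝ =>
            ENNReal.ofReal (min (x^2) 1) from
            ((measurable_id.pow_const 2).min
              measurable_const).ennreal_ofReal)
          intro x hx
          have hx1 : ¬ |x| ≤ 1 := hx
          push_neg at hx1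
          have hx2 : (1:ℝ) ≤ x^2 := by nlinarith [sq_abs x]
          rw [min_eq_right hx2, ENNReal.ofReal_one]
        exact lt_of_le_of_lt (h3.trans (setLIntegral_le_lintegral _ _)) hν1
      have h1 : ∫⁻ x in Sᶜ, (if |x| ≤ 1 then ENNReal.ofReal (K * x^2)
            else ENNReal.ofReal (K * (Real.log |x| + 1))) ∂ν
          ≤ ∫⁻ x in Sᶜ, ENNReal.ofReal K * (ENNReal.ofReal (Real.log (1 + |x|)) + 1) ∂ν := by
        apply setLIntegral_mono (show Measurable fun x : ℝ =>
          ENNReal.ofReal K * (ENNReal.ofReal (Real.log (1 + |x|)) + 1) from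
          (((Real.measurable_log.comp
            (continuous_abs.measurable.const_add 1)).ennreal_ofReal).add
            measurable_const).const_mul _)
        intro x hx
        have hx1 : ¬ |x| ≤ 1 := hx
        push_neg at hx1
        rw [if_neg (not_le.2 hx1), ENNReal.ofReal_mul hK0]
        refine mul_le_mul_of_nonneg_left ?_ zero_le
        calc ENNReal.ofReal (Real.log |x| + 1)
            ≤ ENNReal.ofReal (Real.log (1 + |x|) + 1) := by
              apply ENNReal.ofReal_le_ofReal
              have := Real.log_le_log (by linarith : (0:ℝ) < |x|) (by linarith : |x| ≤ 1 + |x|)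
              linarith
          _ = ENNReal.ofReal (Real.log (1 + |x|)) + ENNReal.ofReal 1 :=
              ENNReal.ofReal_add (Real.log_nonneg (by linarith)) zero_le_one
          _ = ENNReal.ofReal (Real.log (1 + |x|)) + 1 := by rw [ENNReal.ofReal_one]
      refine lt_of_le_of_lt h1 ?_
      calc ∫⁻ x in Sᶜ, ENNReal.ofReal K * (ENNReal.ofReal (Real.log (1 + |x|)) + 1) ∂ν
          = ENNReal.ofReal K * ∫⁻ x in Sᶜ, (ENNReal.ofReal (Real.log (1 + |x|)) + 1) ∂ν :=
            lintegral_const_mul' _ _ ENNReal.ofReal_ne_top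
        _ = ENNReal.ofReal K * ((∫⁻ x in Sᶜ, ENNReal.ofReal (Real.log (1 + |x|)) ∂ν) + ν Sᶜ) := by
            rw [lintegral_add_right _ measurable_const, setLIntegral_one]
        _ < ⊤ := by
            apply ENNReal.mul_lt_top ENNReal.ofReal_lt_top
            apply ENNReal.add_lt_top.2
            refine ⟨?_, hνSc⟩
            rw [hcompl]
            exact hνlog
  exact ENNReal.add_lt_top.2 ⟨ENNReal.add_lt_top.2 ⟨fin1, fin2⟩, fin3⟩
end
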